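/- arXiv:1307.3902 — 3 statements merged into one kernel-verified Lean document; each statement's English description precedes it below -/
import Mathlib

section
/- Let k, m be positive integers with m ≥ 5, and let b be a nonnegative even integer. Then E_{2^m k + b} - E_b ≡ 2^m k (7b^6 - 6b^5 - 11b^4 + 60b^3 - 13b^2 - 226b + 501 + 2^m k (b^4 + 2b^3 + 2b^2 + 3b + 15)) (mod 2^{m+10}). -/
open Finset

def Bb (n j : ℕ) : ℕ := ∑ l ∈ range (n+1), n.choose (2*l) * l.choose j

def cc (n j : ℕ) : ℕ := ∑ l ∈ range (n+1), n.choose (2*l+1) * l.choose j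

lemma Bb_zero_of_lt {n j : ℕ} (h : n < 2*j) : Bb n j = 0 := by
  apply Finset.sum_eq_zero
  intro l _
  rcases le_or_gt j l with hl | hl
  · have : n < 2*l := lt_of_lt_of_le h (by omega)
    simp [Nat.choose_eq_zero_of_lt this]
  · simp [Nat.choose_eq_zero_of_lt hl]

lemma cc_zero_of_lt {n j : ℕ} (h : n < 2*j+1) : cc n j = 0 := by
  apply Finset.sum_eq_zero
  intro l _
  rcases le_or_gt j l with hl | hl
  · have : n < 2*l+1 := lt_of_lt_of_le h (by omega)
    simp [Nat.choose_eq_zero_of_lt this]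
  · simp [Nat.choose_eq_zero_of_lt hl]

lemma cc_rec (n j : ℕ) : cc (n+1) j = Bb n j + cc n j := by
  have h1 : cc (n+1) j = ∑ l ∈ range (n+1), (n+1).choose (2*l+1) * l.choose j := by
    rw [cc, Finset.sum_range_succ]
    have : (n+1).choose (2*(n+1)+1) = 0 := Nat.choose_eq_zero_of_lt (by omega)
    simp [this]
  rw [h1, Bb, cc, ← Finset.sum_add_distrib]
  apply Finset.sum_congr rfl
  intro l _
  rw [Nat.choose_succ_succ n (2*l), Nat.add_mul]

lemma Bb_rec (n j : ℕ) :
    Bb (n+1) j = Bb n j + ∑ l ∈ range (n+1), n.choose (2*l+1) * (l+1).choose j := by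
  have key : Bb (n+1) j
      = (∑ l ∈ range (n+1), (n+1).choose (2*(l+1)) * (l+1).choose j) + Nat.choose 0 j := by
    rw [Bb, Finset.sum_range_succ']
    simp
  have key2 : (∑ l ∈ range (n+1), (n+1).choose (2*(l+1)) * (l+1).choose j)
      = (∑ l ∈ range (n+1), n.choose (2*l+1) * (l+1).choose j)
        + ∑ l ∈ range (n+1), n.choose (2*(l+1)) * (l+1).choose j := by
    rw [← Finset.sum_add_distrib]
    apply Finset.sum_congr rfl
    intro l _
    have h2 : 2*(l+1) = (2*l+1)+1 := by ring
    rw [h2, Nat.choose_succ_succ n (2*l+1), Nat.add_mul]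
  have key3 : Bb n j
      = (∑ l ∈ range (n+1), n.choose (2*(l+1)) * (l+1).choose j) + Nat.choose 0 j := by
    have h4 := Finset.sum_range_succ' (fun l => n.choose (2*l) * l.choose j) (n+1)
    have h5 := Finset.sum_range_succ (fun l => n.choose (2*l) * l.choose j) (n+1)
    have hz : n.choose (2*(n+1)) = 0 := Nat.choose_eq_zero_of_lt (by omega)
    simp only [hz, Nat.zero_mul, Nat.add_zero] at h5
    rw [Bb, ← h5, h4]
    simp
  omega

lemma ccS_zero (n : ℕ) : ∑ l ∈ range (n+1), n.choose (2*l+1) * (l+1).choose 0 = cc n 0 := by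
  rw [cc]; apply Finset.sum_congr rfl; intro l _; simp

lemma ccS_succ (n j : ℕ) : ∑ l ∈ range (n+1), n.choose (2*l+1) * (l+1).choose (j+1)
    = cc n j + cc n (j+1) := by
  rw [cc, cc, ← Finset.sum_add_distrib]
  apply Finset.sum_congr rfl
  intro l _
  rw [Nat.choose_succ_succ l j, Nat.mul_add]


lemma closed : ∀ n, 1 ≤ n →
    (Bb n 0 = 2^(n-1)) ∧
    (∀ J d, 2*(J+1)+d = n → 2 * Bb n (J+1) = 2^d * ((J+1+d).choose (J+1) + (J+d).choose J)) ∧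
    (∀ j d, 2*j+1+d = n → cc n j = 2^d * ((j+d).choose j)) := by
  intro n hn
  induction n, hn using Nat.le_induction with
  | base =>
    refine ⟨by decide, ?_, ?_⟩
    · intro J d h; omega
    · intro j d h
      have hj : j = 0 := by omega
      have hd : d = 0 := by omega
      subst hj; subst hd; decide
  | succ n hn ih =>
    obtain ⟨ihA, ihB, ihC⟩ := ih
    have hccrec : ∀ j, cc (n+1) j = Bb n j + cc n j := cc_rec n
    have hBb0 : Bb (n+1) 0 = Bb n 0 + cc n 0 := by rw [Bb_rec, ccS_zero]
    have hBbS : ∀ j, Bb (n+1) (j+1) = Bb n (j+1) + (cc n j + cc n (j+1)) := by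
      intro j; rw [Bb_rec, ccS_succ]
    have hccn0 : cc n 0 = 2^(n-1) := by
      have := ihC 0 (n-1) (by omega)
      simpa using this
    refine ⟨?_, ?_, ?_⟩
    · -- A(n+1)
      rw [hBb0, ihA, hccn0]
      obtain ⟨t, rfl⟩ : ∃ t, n = t+1 := ⟨n-1, by omega⟩
      simp only [Nat.add_sub_cancel, pow_succ]
      ring
    · -- B(n+1)
      intro J d h
      rw [hBbS J]
      rcases d with _ | d
      · -- d = 0 : n = 2J+1
        have h1 : Bb n (J+1) = 0 := Bb_zero_of_lt (by omega)
        have h2 : cc n (J+1) = 0 := cc_zero_of_lt (by omega)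
        have h3 : cc n J = 1 := by
          have := ihC J 0 (by omega); simpa using this
        rw [h1, h2, h3]; simp
      rcases d with _ | e
      · -- d = 1 : n = 2(J+1)
        have h1 : 2 * Bb n (J+1) = 2^0 * ((J+1+0).choose (J+1) + (J+0).choose J) :=
          ihB J 0 (by omega)
        have h2 : cc n (J+1) = 0 := cc_zero_of_lt (by omega)
        have h3 : cc n J = 2^1 * ((J+1).choose J) := ihC J 1 (by omega)
        simp only [Nat.add_zero, Nat.choose_self, pow_zero, Nat.one_mul] at h1
        have goal1 : (J+1+1).choose (J+1) = 1 + (J+1).choose J := by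
          rw [Nat.choose_succ_succ (J+1) J, Nat.choose_self]
          omega
        rw [h2, h3, goal1]
        norm_num
        omega
      · -- d = e+2 : n = 2(J+1)+(e+1)
        have h1 : 2 * Bb n (J+1) = 2^(e+1) * ((J+1+(e+1)).choose (J+1) + (J+(e+1)).choose J) :=
          ihB J (e+1) (by omega)
        have h2 : cc n (J+1) = 2^e * ((J+1+e).choose (J+1)) := ihC (J+1) e (by omega)
        have h3 : cc n J = 2^(e+2) * ((J+(e+2)).choose J) := ihC J (e+2) (by omega)
        -- abbreviations
        have hP1 : (J+1+(e+1)).choose (J+1) = (J+(e+1)).choose J + (J+(e+1)).choose (J+1) := by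
          have hi : J+1+(e+1) = (J+(e+1))+1 := by omega
          rw [hi, Nat.choose_succ_succ' (J+(e+1)) J]
        have hq : (J+1+e).choose (J+1) = (J+(e+1)).choose (J+1) := by
          have hi : J+1+e = J+(e+1) := by omega
          rw [hi]
        have hP2 : (J+1+(e+2)).choose (J+1)
            = ((J+(e+1)).choose J + (J+(e+1)).choose (J+1)) + (J+(e+2)).choose J := by
          have hi : J+1+(e+2) = (J+(e+2))+1 := by omega
          rw [hi, Nat.choose_succ_succ' (J+(e+2)) J]
          have hstep : (J+(e+2)).choose (J+1) = (J+(e+1)).choose J + (J+(e+1)).choose (J+1) := by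
            have hi2 : J+(e+2) = (J+(e+1))+1 := by omega
            rw [hi2, Nat.choose_succ_succ' (J+(e+1)) J]
          rw [hstep]
          omega
        rw [Nat.mul_add, h1, hP1, h2, hq, h3, hP2]
        generalize (J+(e+1)).choose J = a
        generalize (J+(e+1)).choose (J+1) = bq
        generalize (J+(e+2)).choose J = c
        ring
    · -- C(n+1)
      intro j d h
      rw [hccrec j]
      rcases d with _ | e
      · -- d = 0 : n = 2j
        have h2 : cc n j = 0 := cc_zero_of_lt (by omega)
        obtain ⟨J, rfl⟩ : ∃ J, j = J+1 := ⟨j-1, by omega⟩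
        have h1 : 2 * Bb n (J+1) = 2^0 * ((J+1+0).choose (J+1) + (J+0).choose J) :=
          ihB J 0 (by omega)
        simp only [Nat.add_zero, Nat.choose_self, pow_zero, Nat.one_mul] at h1
        rw [h2]
        simp only [Nat.add_zero, Nat.choose_self, pow_zero, Nat.one_mul]
        omega
      · -- d = e+1
        have h2 : cc n j = 2^e * ((j+e).choose j) := ihC j e (by omega)
        rcases Nat.eq_zero_or_pos j with rfl | hj
        · rw [ihA, h2]
          simp only [Nat.zero_add, Nat.choose_zero_right, Nat.mul_one]
          have hne : n - 1 = e := by omega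
          rw [hne, pow_succ]
          ring
        · obtain ⟨J, rfl⟩ : ∃ J, j = J+1 := ⟨j-1, by omega⟩
          have h1 : 2 * Bb n (J+1) = 2^(e+1) * ((J+1+(e+1)).choose (J+1) + (J+(e+1)).choose J) :=
            ihB J (e+1) (by omega)
          have hBbval : Bb n (J+1) = 2^e * ((J+1+(e+1)).choose (J+1) + (J+(e+1)).choose J) := by
            have h1' : 2 * Bb n (J+1)
                = 2 * (2^e * ((J+1+(e+1)).choose (J+1) + (J+(e+1)).choose J)) := by
              rw [h1, pow_succ]; ring
            exact Nat.eq_of_mul_eq_mul_left (by norm_num) h1'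
          have hP1 : (J+1+(e+1)).choose (J+1) = (J+(e+1)).choose J + (J+(e+1)).choose (J+1) := by
            have hi : J+1+(e+1) = (J+(e+1))+1 := by omega
            rw [hi, Nat.choose_succ_succ' (J+(e+1)) J]
          have hq : (J+1+e).choose (J+1) = (J+(e+1)).choose (J+1) := by
            have hi : J+1+e = J+(e+1) := by omega
            rw [hi]
          rw [hBbval, h2, hP1, hq]
          generalize (J+(e+1)).choose J = a
          generalize (J+(e+1)).choose (J+1) = bq
          ring

lemma newton (f : ℕ → ℤ) (N : ℕ) :
    f N = ∑ i ∈ range (N+1),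
      (∑ u ∈ range (i+1), (-1:ℤ)^(i-u) * (i.choose u) * f u) * (N.choose i) := by
  have ext : ∀ i ∈ range (N+1),
      (∑ u ∈ range (i+1), (-1:ℤ)^(i-u) * (i.choose u) * f u) * (N.choose i)
      = ∑ u ∈ range (N+1), (-1:ℤ)^(i-u) * (i.choose u) * f u * (N.choose i) := by
    intro i hi
    simp only [Finset.mem_range] at hi
    rw [Finset.sum_mul]
    apply Finset.sum_subset
    · exact Finset.range_subset_range.2 (by omega)
    · intro u hu hnu
      simp only [Finset.mem_range, not_lt] at hu hnu
      have : i.choose u = 0 := Nat.choose_eq_zero_of_lt (by omega)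
      simp [this]
  rw [Finset.sum_congr rfl ext, Finset.sum_comm]
  have inner : ∀ u ∈ range (N+1),
      (∑ i ∈ range (N+1), (-1:ℤ)^(i-u) * (i.choose u) * f u * (N.choose i))
      = f u * (N.choose u) * (if N-u = 0 then 1 else 0) := by
    intro u hu
    simp only [Finset.mem_range] at hu
    have split : range (N+1) = range u ∪ Finset.Ico u (N+1) := by
      rw [Finset.range_eq_Ico, Finset.range_eq_Ico, Finset.Ico_union_Ico_eq_Ico] <;> omega
    rw [split, Finset.sum_union (by
      rw [Finset.range_eq_Ico]
      exact Finset.Ico_disjoint_Ico_consecutive 0 u (N+1))]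
    have z1 : (∑ i ∈ range u, (-1:ℤ)^(i-u) * (i.choose u) * f u * (N.choose i)) = 0 := by
      apply Finset.sum_eq_zero
      intro i hi
      simp only [Finset.mem_range] at hi
      have : i.choose u = 0 := Nat.choose_eq_zero_of_lt (by omega)
      simp [this]
    rw [z1, zero_add, Finset.sum_Ico_eq_sum_range]
    have congr1 : ∀ d ∈ range (N+1-u),
        (-1:ℤ)^((u+d)-u) * ((u+d).choose u) * f u * (N.choose (u+d))
        = f u * (N.choose u) * ((-1:ℤ)^d * ((N-u).choose d)) := by
      intro d hd
      simp only [Finset.mem_range] at hd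
      have h1 : (u+d)-u = d := by omega
      have h2 : (N.choose (u+d)) * ((u+d).choose u) = N.choose u * ((N-u).choose ((u+d)-u)) :=
        Nat.choose_mul (by omega)
      rw [h1] at h2 ⊢
      have h2' : ((N.choose (u+d)) : ℤ) * ((u+d).choose u) = (N.choose u : ℤ) * ((N-u).choose d) := by
        exact_mod_cast congrArg (Nat.cast : ℕ → ℤ) h2
      calc (-1:ℤ)^d * ((u+d).choose u) * f u * (N.choose (u+d))
          = (-1:ℤ)^d * f u * ((N.choose (u+d) : ℤ) * ((u+d).choose u)) := by ring
        _ = (-1:ℤ)^d * f u * ((N.choose u : ℤ) * ((N-u).choose d)) := by rw [h2']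
        _ = f u * (N.choose u) * ((-1:ℤ)^d * ((N-u).choose d)) := by ring
    rw [Finset.sum_congr rfl congr1, ← Finset.mul_sum]
    congr 1
    have hr : N+1-u = (N-u)+1 := by omega
    rw [hr]
    exact Int.alternating_sum_range_choose
  rw [Finset.sum_congr rfl inner]
  rw [Finset.sum_eq_single N]
  · simp
  · intro u hu hne
    simp only [Finset.mem_range] at hu
    have : N - u ≠ 0 := by omega
    simp [this]
  · intro h; simp at h

/-- finite differences of `N ↦ E (2N)` -/
def Dd (E : ℕ → ℤ) (i : ℕ) : ℤ := ∑ u ∈ range (i+1), (-1:ℤ)^(i-u) * (i.choose u) * E (2*u)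

lemma newtonE (E : ℕ → ℤ) (N : ℕ) :
    E (2*N) = ∑ i ∈ range (N+1), Dd E i * (N.choose i) :=
  newton (fun u => E (2*u)) N

lemma Bb_trunc (N i : ℕ) :
    (Bb (2*N) i : ℤ) = ∑ r ∈ range (N+1), ((2*N).choose (2*r) : ℤ) * (r.choose i) := by
  rw [Bb]
  push_cast
  symm
  apply Finset.sum_subset
  · exact Finset.range_subset_range.2 (by omega)
  · intro l hl hnl
    simp only [Finset.mem_range, not_lt] at hl hnl
    have : (2*N).choose (2*l) = 0 := Nat.choose_eq_zero_of_lt (by omega)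
    simp [this]

lemma keyrec (E : ℕ → ℤ)
    (hEsum : ∀ n : ℕ, 1 ≤ n →
      ∑ r ∈ Finset.range (n + 1), ((2 * n).choose (2 * r) : ℤ) * E (2 * r) = 0)
    (N : ℕ) (hN : 1 ≤ N) :
    ∑ j ∈ range (N+1), (Bb (2*N) j : ℤ) * Dd E j = 0 := by
  have h0 := hEsum N hN
  have hsub : ∀ r ∈ range (N+1), ((2*N).choose (2*r) : ℤ) * E (2*r)
      = ∑ i ∈ range (N+1), ((2*N).choose (2*r) : ℤ) * (r.choose i) * Dd E i := by
    intro r hr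
    simp only [Finset.mem_range] at hr
    rw [newtonE E r]
    have hext : ∀ g : ℕ → ℤ, (∑ i ∈ range (r+1), Dd E i * (r.choose i) * g i)
        = ∑ i ∈ range (N+1), Dd E i * (r.choose i) * g i := by
      intro g
      apply Finset.sum_subset (Finset.range_subset_range.2 (by omega))
      intro i hi hni
      simp only [Finset.mem_range, not_lt] at hi hni
      have : r.choose i = 0 := Nat.choose_eq_zero_of_lt (by omega)
      simp [this]
    calc ((2*N).choose (2*r) : ℤ) * (∑ i ∈ range (r+1), Dd E i * (r.choose i))
        = ∑ i ∈ range (r+1), Dd E i * (r.choose i) * ((2*N).choose (2*r)) := by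
          rw [Finset.mul_sum]; apply Finset.sum_congr rfl; intros; ring
      _ = ∑ i ∈ range (N+1), Dd E i * (r.choose i) * ((2*N).choose (2*r)) := hext _
      _ = ∑ i ∈ range (N+1), ((2*N).choose (2*r) : ℤ) * (r.choose i) * Dd E i := by
          apply Finset.sum_congr rfl; intros; ring
  rw [Finset.sum_congr rfl hsub, Finset.sum_comm] at h0
  rw [← h0]
  apply Finset.sum_congr rfl
  intro i hi
  rw [Bb_trunc, Finset.sum_mul]

lemma Bb_dvd_int (N j : ℕ) (hj : j < N) : (2:ℤ)^(2*N-2*j-1) ∣ (Bb (2*N) j : ℤ) := by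
  rcases Nat.eq_zero_or_pos j with rfl | hj1
  · have hA := (closed (2*N) (by omega)).1
    rw [hA]
    push_cast
    exact pow_dvd_pow 2 (by omega)
  · obtain ⟨J, rfl⟩ : ∃ J, j = J+1 := ⟨j-1, by omega⟩
    obtain ⟨e, he⟩ : ∃ e, 2*N-2*(J+1) = e+1 := ⟨2*N-2*(J+1)-1, by omega⟩
    have hB := (closed (2*N) (by omega)).2.1 J (2*N-2*(J+1)) (by omega)
    rw [he] at hB
    have hB' : 2 * Bb (2*N) (J+1) = 2 * (2^e *
        ((J+1+(e+1)).choose (J+1) + (J+(e+1)).choose J)) := by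
      rw [hB, pow_succ]; ring
    have h2 : Bb (2*N) (J+1) = 2^e *
        ((J+1+(e+1)).choose (J+1) + (J+(e+1)).choose J) :=
      Nat.eq_of_mul_eq_mul_left (by norm_num) hB'
    rw [h2]
    push_cast
    exact dvd_mul_of_dvd_left (pow_dvd_pow 2 (by omega)) _

lemma Bb_diag (N : ℕ) (hN : 1 ≤ N) : Bb (2*N) N = 1 := by
  obtain ⟨J, rfl⟩ : ∃ J, N = J+1 := ⟨N-1, by omega⟩
  have hB := (closed (2*(J+1)) (by omega)).2.1 J 0 (by omega)
  simp only [Nat.add_zero, Nat.choose_self, pow_zero, Nat.one_mul] at hB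
  omega

lemma vD (E : ℕ → ℤ)
    (hEsum : ∀ n : ℕ, 1 ≤ n →
      ∑ r ∈ Finset.range (n + 1), ((2 * n).choose (2 * r) : ℤ) * E (2 * r) = 0) :
    ∀ N, 1 ≤ N → (2:ℤ)^N ∣ Dd E N := by
  intro N
  induction N using Nat.strong_induction_on with
  | _ N ih =>
    intro hN
    have hk := keyrec E hEsum N hN
    rw [Finset.sum_range_succ, Bb_diag N hN] at hk
    have hDN : Dd E N = -∑ j ∈ range N, (Bb (2*N) j : ℤ) * Dd E j := by
      push_cast at hk; linarith
    rw [hDN, dvd_neg]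
    apply Finset.dvd_sum
    intro j hj
    simp only [Finset.mem_range] at hj
    rcases Nat.eq_zero_or_pos j with rfl | hj1
    · exact dvd_mul_of_dvd_left
        (dvd_trans (pow_dvd_pow 2 (by omega)) (Bb_dvd_int N 0 hj)) _
    · have h1 : (2:ℤ)^(2*N-2*j-1) ∣ (Bb (2*N) j : ℤ) := Bb_dvd_int N j hj
      have h2 : (2:ℤ)^j ∣ Dd E j := ih j hj hj1
      have h3 := mul_dvd_mul h1 h2
      rw [← pow_add] at h3
      exact dvd_trans (pow_dvd_pow 2 (by omega)) h3

lemma Evals (E : ℕ → ℤ) (hE0 : E 0 = 1)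
    (hEsum : ∀ n : ℕ, 1 ≤ n →
      ∑ r ∈ Finset.range (n + 1), ((2 * n).choose (2 * r) : ℤ) * E (2 * r) = 0) :
    E 2 = -1 ∧ E 4 = 5 ∧ E 6 = -61 ∧ E 8 = 1385 ∧ E 10 = -50521 ∧ E 12 = 2702765 ∧ E 14 = -199360981 ∧ E 16 = 19391512145 ∧ E 18 = -2404879675441 ∧ E 20 = 370371188237525 ∧ E 22 = -69348874393137901 ∧ E 24 = 15514534163557086905 ∧ E 26 = -4087072509293123892361 := by
  have h1 := hEsum 1 (by norm_num)
  simp only [Finset.sum_range_succ, Finset.sum_range_zero] at h1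
  simp only [show (2*1).choose (2*0) = 1 from by decide, show (2*1).choose (2*1) = 1 from by decide, show (2:ℕ)*0 = 0 from rfl, show (2:ℕ)*1 = 2 from rfl] at h1
  rw [hE0] at h1
  have hv1 : E 2 = -1 := by push_cast at h1; linarith
  have h2 := hEsum 2 (by norm_num)
  simp only [Finset.sum_range_succ, Finset.sum_range_zero] at h2
  simp only [show (2*2).choose (2*0) = 1 from by decide, show (2*2).choose (2*1) = 6 from by decide, show (2*2).choose (2*2) = 1 from by decide, show (2:ℕ)*0 = 0 from rfl, show (2:ℕ)*1 = 2 from rfl, show (2:ℕ)*2 = 4 from rfl] at h2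
  rw [hE0, hv1] at h2
  have hv2 : E 4 = 5 := by push_cast at h2; linarith
  have h3 := hEsum 3 (by norm_num)
  simp only [Finset.sum_range_succ, Finset.sum_range_zero] at h3
  simp only [show (2*3).choose (2*0) = 1 from by decide, show (2*3).choose (2*1) = 15 from by decide, show (2*3).choose (2*2) = 15 from by decide, show (2*3).choose (2*3) = 1 from by decide, show (2:ℕ)*0 = 0 from rfl, show (2:ℕ)*1 = 2 from rfl, show (2:ℕ)*2 = 4 from rfl, show (2:ℕ)*3 = 6 from rfl] at h3
  rw [hE0, hv1, hv2] at h3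
  have hv3 : E 6 = -61 := by push_cast at h3; linarith
  have h4 := hEsum 4 (by norm_num)
  simp only [Finset.sum_range_succ, Finset.sum_range_zero] at h4
  simp only [show (2*4).choose (2*0) = 1 from by decide, show (2*4).choose (2*1) = 28 from by decide, show (2*4).choose (2*2) = 70 from by decide, show (2*4).choose (2*3) = 28 from by decide, show (2*4).choose (2*4) = 1 from by decide, show (2:ℕ)*0 = 0 from rfl, show (2:ℕ)*1 = 2 from rfl, show (2:ℕ)*2 = 4 from rfl, show (2:ℕ)*3 = 6 from rfl, show (2:ℕ)*4 = 8 from rfl] at h4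
  rw [hE0, hv1, hv2, hv3] at h4
  have hv4 : E 8 = 1385 := by push_cast at h4; linarith
  have h5 := hEsum 5 (by norm_num)
  simp only [Finset.sum_range_succ, Finset.sum_range_zero] at h5
  simp only [show (2*5).choose (2*0) = 1 from by decide, show (2*5).choose (2*1) = 45 from by decide, show (2*5).choose (2*2) = 210 from by decide, show (2*5).choose (2*3) = 210 from by decide, show (2*5).choose (2*4) = 45 from by decide, show (2*5).choose (2*5) = 1 from by decide, show (2:ℕ)*0 = 0 from rfl, show (2:ℕ)*1 = 2 from rfl, show (2:ℕ)*2 = 4 from rfl, show (2:ℕ)*3 = 6 from rfl, show (2:ℕ)*4 = 8 from rfl, show (2:ℕ)*5 = 10 from rfl] at h5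
  rw [hE0, hv1, hv2, hv3, hv4] at h5
  have hv5 : E 10 = -50521 := by push_cast at h5; linarith
  have h6 := hEsum 6 (by norm_num)
  simp only [Finset.sum_range_succ, Finset.sum_range_zero] at h6
  simp only [show (2*6).choose (2*0) = 1 from by decide, show (2*6).choose (2*1) = 66 from by decide, show (2*6).choose (2*2) = 495 from by decide, show (2*6).choose (2*3) = 924 from by decide, show (2*6).choose (2*4) = 495 from by decide, show (2*6).choose (2*5) = 66 from by decide, show (2*6).choose (2*6) = 1 from by decide, show (2:ℕ)*0 = 0 from rfl, show (2:ℕ)*1 = 2 from rfl, show (2:ℕ)*2 = 4 from rfl, show (2:ℕ)*3 = 6 from rfl, show (2:ℕ)*4 = 8 from rfl, show (2:ℕ)*5 = 10 from rfl, show (2:ℕ)*6 = 12 from rfl] at h6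
  rw [hE0, hv1, hv2, hv3, hv4, hv5] at h6
  have hv6 : E 12 = 2702765 := by push_cast at h6; linarith
  have h7 := hEsum 7 (by norm_num)
  simp only [Finset.sum_range_succ, Finset.sum_range_zero] at h7
  simp only [show (2*7).choose (2*0) = 1 from by decide, show (2*7).choose (2*1) = 91 from by decide, show (2*7).choose (2*2) = 1001 from by decide, show (2*7).choose (2*3) = 3003 from by decide, show (2*7).choose (2*4) = 3003 from by decide, show (2*7).choose (2*5) = 1001 from by decide, show (2*7).choose (2*6) = 91 from by decide, show (2*7).choose (2*7) = 1 from by decide, show (2:ℕ)*0 = 0 from rfl, show (2:ℕ)*1 = 2 from rfl, show (2:ℕ)*2 = 4 from rfl, show (2:ℕ)*3 = 6 from rfl, show (2:ℕ)*4 = 8 from rfl, show (2:ℕ)*5 = 10 from rfl, show (2:ℕ)*6 = 12 from rfl, show (2:ℕ)*7 = 14 from rfl] at h7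
  rw [hE0, hv1, hv2, hv3, hv4, hv5, hv6] at h7
  have hv7 : E 14 = -199360981 := by push_cast at h7; linarith
  have h8 := hEsum 8 (by norm_num)
  simp only [Finset.sum_range_succ, Finset.sum_range_zero] at h8
  simp only [show (2*8).choose (2*0) = 1 from by decide, show (2*8).choose (2*1) = 120 from by decide, show (2*8).choose (2*2) = 1820 from by decide, show (2*8).choose (2*3) = 8008 from by decide, show (2*8).choose (2*4) = 12870 from by decide, show (2*8).choose (2*5) = 8008 from by decide, show (2*8).choose (2*6) = 1820 from by decide, show (2*8).choose (2*7) = 120 from by decide, show (2*8).choose (2*8) = 1 from by decide, show (2:ℕ)*0 = 0 from rfl, show (2:ℕ)*1 = 2 from rfl, show (2:ℕ)*2 = 4 from rfl, show (2:ℕ)*3 = 6 from rfl, show (2:ℕ)*4 = 8 from rfl, show (2:ℕ)*5 = 10 from rfl, show (2:ℕ)*6 = 12 from rfl, show (2:ℕ)*7 = 14 from rfl, show (2:ℕ)*8 = 16 from rfl] at h8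
  rw [hE0, hv1, hv2, hv3, hv4, hv5, hv6, hv7] at h8
  have hv8 : E 16 = 19391512145 := by push_cast at h8; linarith
  have h9 := hEsum 9 (by norm_num)
  simp only [Finset.sum_range_succ, Finset.sum_range_zero] at h9
  simp only [show (2*9).choose (2*0) = 1 from by decide, show (2*9).choose (2*1) = 153 from by decide, show (2*9).choose (2*2) = 3060 from by decide, show (2*9).choose (2*3) = 18564 from by decide, show (2*9).choose (2*4) = 43758 from by decide, show (2*9).choose (2*5) = 43758 from by decide, show (2*9).choose (2*6) = 18564 from by decide, show (2*9).choose (2*7) = 3060 from by decide, show (2*9).choose (2*8) = 153 from by decide, show (2*9).choose (2*9) = 1 from by decide, show (2:ℕ)*0 = 0 from rfl, show (2:ℕ)*1 = 2 from rfl, show (2:ℕ)*2 = 4 from rfl, show (2:ℕ)*3 = 6 from rfl, show (2:ℕ)*4 = 8 from rfl, show (2:ℕ)*5 = 10 from rfl, show (2:ℕ)*6 = 12 from rfl, show (2:ℕ)*7 = 14 from rfl, show (2:ℕ)*8 = 16 from rfl, show (2:ℕ)*9 = 18 from rfl] at h9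
  rw [hE0, hv1, hv2, hv3, hv4, hv5, hv6, hv7, hv8] at h9
  have hv9 : E 18 = -2404879675441 := by push_cast at h9; linarith
  have h10 := hEsum 10 (by norm_num)
  simp only [Finset.sum_range_succ, Finset.sum_range_zero] at h10
  simp only [show (2*10).choose (2*0) = 1 from by decide, show (2*10).choose (2*1) = 190 from by decide, show (2*10).choose (2*2) = 4845 from by decide, show (2*10).choose (2*3) = 38760 from by decide, show (2*10).choose (2*4) = 125970 from by decide, show (2*10).choose (2*5) = 184756 from by decide, show (2*10).choose (2*6) = 125970 from by decide, show (2*10).choose (2*7) = 38760 from by decide, show (2*10).choose (2*8) = 4845 from by decide, show (2*10).choose (2*9) = 190 from by decide, show (2*10).choose (2*10) = 1 from by decide, show (2:ℕ)*0 = 0 from rfl, show (2:ℕ)*1 = 2 from rfl, show (2:ℕ)*2 = 4 from rfl, show (2:ℕ)*3 = 6 from rfl, show (2:ℕ)*4 = 8 from rfl, show (2:ℕ)*5 = 10 from rfl, show (2:ℕ)*6 = 12 from rfl, show (2:ℕ)*7 = 14 from rfl, show (2:ℕ)*8 = 16 from rfl, show (2:ℕ)*9 = 18 from rfl, show (2:ℕ)*10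 = 20 from rfl] at h10
  rw [hE0, hv1, hv2, hv3, hv4, hv5, hv6, hv7, hv8, hv9] at h10
  have hv10 : E 20 = 370371188237525 := by push_cast at h10; linarith
  have h11 := hEsum 11 (by norm_num)
  simp only [Finset.sum_range_succ, Finset.sum_range_zero] at h11
  simp only [show (2*11).choose (2*0) = 1 from by decide, show (2*11).choose (2*1) = 231 from by decide, show (2*11).choose (2*2) = 7315 from by decide, show (2*11).choose (2*3) = 74613 from by decide, show (2*11).choose (2*4) = 319770 from by decide, show (2*11).choose (2*5) = 646646 from by decide, show (2*11).choose (2*6) = 646646 from by decide, show (2*11).choose (2*7) = 319770 from by decide, show (2*11).choose (2*8) = 74613 from by decide, show (2*11).choose (2*9) = 7315 from by decide, show (2*11).choose (2*10) = 231 from by decide, show (2*11).choose (2*11) = 1 from by decide, show (2:ℕ)*0 = 0 from rfl, show (2:ℕ)*1 = 2 from rfl, show (2:ℕ)*2 = 4 from rfl, show (2:ℕ)*3 = 6 from rfl, show (2:ℕ)*4 = 8 from rfl, show (2:ℕ)*5 = 10 from rfl, show (2:ℕ)*6 = 12 from rfl, show (2:ℕ)*7 = 14 from rfl, show (2:ℕ)*8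 = 16 from rfl, show (2:ℕ)*9 = 18 from rfl, show (2:ℕ)*10 = 20 from rfl, show (2:ℕ)*11 = 22 from rfl] at h11
  rw [hE0, hv1, hv2, hv3, hv4, hv5, hv6, hv7, hv8, hv9, hv10] at h11
  have hv11 : E 22 = -69348874393137901 := by push_cast at h11; linarith
  have h12 := hEsum 12 (by norm_num)
  simp only [Finset.sum_range_succ, Finset.sum_range_zero] at h12
  simp only [show (2*12).choose (2*0) = 1 from by decide, show (2*12).choose (2*1) = 276 from by decide, show (2*12).choose (2*2) = 10626 from by decide, show (2*12).choose (2*3) = 134596 from by decide, show (2*12).choose (2*4) = 735471 from by decide, show (2*12).choose (2*5) = 1961256 from by decide, show (2*12).choose (2*6) = 2704156 from by decide, show (2*12).choose (2*7) = 1961256 from by decide, show (2*12).choose (2*8) = 735471 from by decide, show (2*12).choose (2*9) = 134596 from by decide, show (2*12).choose (2*10) = 10626 from by decide, show (2*12).choose (2*11) = 276 from by decide, show (2*12).choose (2*12) = 1 from by decide, show (2:ℕ)*0 = 0 from rfl, show (2:ℕ)*1 = 2 from rfl, show (2:ℕ)*2 = 4 from rfl, show (2:ℕ)*3 = 6 from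 rfl, show (2:ℕ)*4 = 8 from rfl, show (2:ℕ)*5 = 10 from rfl, show (2:ℕ)*6 = 12 from rfl, show (2:ℕ)*7 = 14 from rfl, show (2:ℕ)*8 = 16 from rfl, show (2:ℕ)*9 = 18 from rfl, show (2:ℕ)*10 = 20 from rfl, show (2:ℕ)*11 = 22 from rfl, show (2:ℕ)*12 = 24 from rfl] at h12
  rw [hE0, hv1, hv2, hv3, hv4, hv5, hv6, hv7, hv8, hv9, hv10, hv11] at h12
  have hv12 : E 24 = 15514534163557086905 := by push_cast at h12; linarith
  have h13 := hEsum 13 (by norm_num)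
  simp only [Finset.sum_range_succ, Finset.sum_range_zero] at h13
  simp only [show (2*13).choose (2*0) = 1 from by decide, show (2*13).choose (2*1) = 325 from by decide, show (2*13).choose (2*2) = 14950 from by decide, show (2*13).choose (2*3) = 230230 from by decide, show (2*13).choose (2*4) = 1562275 from by decide, show (2*13).choose (2*5) = 5311735 from by decide, show (2*13).choose (2*6) = 9657700 from by decide, show (2*13).choose (2*7) = 9657700 from by decide, show (2*13).choose (2*8) = 5311735 from by decide, show (2*13).choose (2*9) = 1562275 from by decide, show (2*13).choose (2*10) = 230230 from by decide, show (2*13).choose (2*11) = 14950 from by decide, show (2*13).choose (2*12) = 325 from by decide, show (2*13).choose (2*13) = 1 from by decide, show (2:ℕ)*0 = 0 from rfl, show (2:ℕ)*1 = 2 from rfl, show (2:ℕ)*2 = 4 from rfl, show (2:ℕ)*3 = 6 from rfl, show (2:ℕ)*4 = 8 from rfl, show (2:ℕ)*5 = 10 from rfl, show (2:ℕ)*6 = 12 from rfl, show (2:ℕ)*7 = 14 from rfl, show (2:ℕ)*8 = 16 from rfl, show (2:ℕ)*9 = 18 from rfl, show (2:ℕ)*10 = 20 from rfl, show (2:ℕ)*11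 = 22 from rfl, show (2:ℕ)*12 = 24 from rfl, show (2:ℕ)*13 = 26 from rfl] at h13
  rw [hE0, hv1, hv2, hv3, hv4, hv5, hv6, hv7, hv8, hv9, hv10, hv11, hv12] at h13
  have hv13 : E 26 = -4087072509293123892361 := by push_cast at h13; linarith
  exact ⟨hv1, hv2, hv3, hv4, hv5, hv6, hv7, hv8, hv9, hv10, hv11, hv12, hv13⟩

lemma Dvals (E : ℕ → ℤ) (hE0 : E 0 = 1)
    (hEsum : ∀ n : ℕ, 1 ≤ n →
      ∑ r ∈ Finset.range (n + 1), ((2 * n).choose (2 * r) : ℤ) * E (2 * r) = 0) :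
    Dd E 1 = -2 ∧ Dd E 2 = 8 ∧ Dd E 3 = -80 ∧ Dd E 4 = 1664 ∧ Dd E 5 = -58112 ∧ Dd E 6 = 3027968 ∧ Dd E 7 = -219392000 ∧ Dd E 8 = 21065007104 ∧ Dd E 9 = -2586813857792 ∧ Dd E 10 = 395317106966528 ∧ Dd E 11 = -73558492507013120 ∧ Dd E 12 = 16371703987457490944 ∧ Dd E 13 = -4294278336574518198272 := by
  obtain ⟨hv1, hv2, hv3, hv4, hv5, hv6, hv7, hv8, hv9, hv10, hv11, hv12, hv13⟩ := Evals E hE0 hEsum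
  have hd1 : Dd E 1 = -2 := by
    rw [Dd]
    simp only [Finset.sum_range_succ, Finset.sum_range_zero]
    simp only [show (1:ℕ).choose 0 = 1 from by decide, show (1:ℕ).choose 1 = 1 from by decide, show (1:ℕ)-0 = 1 from rfl, show (1:ℕ)-1 = 0 from rfl, show (2:ℕ)*0 = 0 from rfl, show (2:ℕ)*1 = 2 from rfl]
    rw [hE0, hv1]
    norm_num
  have hd2 : Dd E 2 = 8 := by
    rw [Dd]
    simp only [Finset.sum_range_succ, Finset.sum_range_zero]
    simp only [show (2:ℕ).choose 0 = 1 from by decide, show (2:ℕ).choose 1 = 2 from by decide, show (2:ℕ).choose 2 = 1 from by decide, show (2:ℕ)-0 = 2 from rfl, show (2:ℕ)-1 = 1 from rfl, show (2:ℕ)-2 = 0 from rfl, show (2:ℕ)*0 = 0 from rfl, show (2:ℕ)*1 = 2 from rfl, show (2:ℕ)*2 = 4 from rfl]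
    rw [hE0, hv1, hv2]
    norm_num
  have hd3 : Dd E 3 = -80 := by
    rw [Dd]
    simp only [Finset.sum_range_succ, Finset.sum_range_zero]
    simp only [show (3:ℕ).choose 0 = 1 from by decide, show (3:ℕ).choose 1 = 3 from by decide, show (3:ℕ).choose 2 = 3 from by decide, show (3:ℕ).choose 3 = 1 from by decide, show (3:ℕ)-0 = 3 from rfl, show (3:ℕ)-1 = 2 from rfl, show (3:ℕ)-2 = 1 from rfl, show (3:ℕ)-3 = 0 from rfl, show (2:ℕ)*0 = 0 from rfl, show (2:ℕ)*1 = 2 from rfl, show (2:ℕ)*2 = 4 from rfl, show (2:ℕ)*3 = 6 from rfl]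
    rw [hE0, hv1, hv2, hv3]
    norm_num
  have hd4 : Dd E 4 = 1664 := by
    rw [Dd]
    simp only [Finset.sum_range_succ, Finset.sum_range_zero]
    simp only [show (4:ℕ).choose 0 = 1 from by decide, show (4:ℕ).choose 1 = 4 from by decide, show (4:ℕ).choose 2 = 6 from by decide, show (4:ℕ).choose 3 = 4 from by decide, show (4:ℕ).choose 4 = 1 from by decide, show (4:ℕ)-0 = 4 from rfl, show (4:ℕ)-1 = 3 from rfl, show (4:ℕ)-2 = 2 from rfl, show (4:ℕ)-3 = 1 from rfl, show (4:ℕ)-4 = 0 from rfl, show (2:ℕ)*0 = 0 from rfl, show (2:ℕ)*1 = 2 from rfl, show (2:ℕ)*2 = 4 from rfl, show (2:ℕ)*3 = 6 from rfl, show (2:ℕ)*4 = 8 from rfl]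
    rw [hE0, hv1, hv2, hv3, hv4]
    norm_num
  have hd5 : Dd E 5 = -58112 := by
    rw [Dd]
    simp only [Finset.sum_range_succ, Finset.sum_range_zero]
    simp only [show (5:ℕ).choose 0 = 1 from by decide, show (5:ℕ).choose 1 = 5 from by decide, show (5:ℕ).choose 2 = 10 from by decide, show (5:ℕ).choose 3 = 10 from by decide, show (5:ℕ).choose 4 = 5 from by decide, show (5:ℕ).choose 5 = 1 from by decide, show (5:ℕ)-0 = 5 from rfl, show (5:ℕ)-1 = 4 from rfl, show (5:ℕ)-2 = 3 from rfl, show (5:ℕ)-3 = 2 from rfl, show (5:ℕ)-4 = 1 from rfl, show (5:ℕ)-5 = 0 from rfl, show (2:ℕ)*0 = 0 from rfl, show (2:ℕ)*1 = 2 from rfl, show (2:ℕ)*2 = 4 from rfl, show (2:ℕ)*3 = 6 from rfl, show (2:ℕ)*4 = 8 from rfl, show (2:ℕ)*5 = 10 from rfl]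
    rw [hE0, hv1, hv2, hv3, hv4, hv5]
    norm_num
  have hd6 : Dd E 6 = 3027968 := by
    rw [Dd]
    simp only [Finset.sum_range_succ, Finset.sum_range_zero]
    simp only [show (6:ℕ).choose 0 = 1 from by decide, show (6:ℕ).choose 1 = 6 from by decide, show (6:ℕ).choose 2 = 15 from by decide, show (6:ℕ).choose 3 = 20 from by decide, show (6:ℕ).choose 4 = 15 from by decide, show (6:ℕ).choose 5 = 6 from by decide, show (6:ℕ).choose 6 = 1 from by decide, show (6:ℕ)-0 = 6 from rfl, show (6:ℕ)-1 = 5 from rfl, show (6:ℕ)-2 = 4 from rfl, show (6:ℕ)-3 = 3 from rfl, show (6:ℕ)-4 = 2 from rfl, show (6:ℕ)-5 = 1 from rfl, show (6:ℕ)-6 = 0 from rfl, show (2:ℕ)*0 = 0 from rfl, show (2:ℕ)*1 = 2 from rfl, show (2:ℕ)*2 = 4 from rfl, show (2:ℕ)*3 = 6 from rfl, show (2:ℕ)*4 = 8 from rfl, show (2:ℕ)*5 = 10 from rfl, show (2:ℕ)*6 = 12 from rfl]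
    rw [hE0, hv1, hv2, hv3, hv4, hv5, hv6]
    norm_num
  have hd7 : Dd E 7 = -219392000 := by
    rw [Dd]
    simp only [Finset.sum_range_succ, Finset.sum_range_zero]
    simp only [show (7:ℕ).choose 0 = 1 from by decide, show (7:ℕ).choose 1 = 7 from by decide, show (7:ℕ).choose 2 = 21 from by decide, show (7:ℕ).choose 3 = 35 from by decide, show (7:ℕ).choose 4 = 35 from by decide, show (7:ℕ).choose 5 = 21 from by decide, show (7:ℕ).choose 6 = 7 from by decide, show (7:ℕ).choose 7 = 1 from by decide, show (7:ℕ)-0 = 7 from rfl, show (7:ℕ)-1 = 6 from rfl, show (7:ℕ)-2 = 5 from rfl, show (7:ℕ)-3 = 4 from rfl, show (7:ℕ)-4 = 3 from rfl, show (7:ℕ)-5 = 2 from rfl, show (7:ℕ)-6 = 1 from rfl, show (7:ℕ)-7 = 0 from rfl, show (2:ℕ)*0 = 0 from rfl, show (2:ℕ)*1 = 2 from rfl, show (2:ℕ)*2 = 4 from rfl, show (2:ℕ)*3 = 6 from rfl, show (2:ℕ)*4 = 8 from rfl, show (2:ℕ)*5 = 10 from rfl, show (2:ℕ)*6 = 12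 from rfl, show (2:ℕ)*7 = 14 from rfl]
    rw [hE0, hv1, hv2, hv3, hv4, hv5, hv6, hv7]
    norm_num
  have hd8 : Dd E 8 = 21065007104 := by
    rw [Dd]
    simp only [Finset.sum_range_succ, Finset.sum_range_zero]
    simp only [show (8:ℕ).choose 0 = 1 from by decide, show (8:ℕ).choose 1 = 8 from by decide, show (8:ℕ).choose 2 = 28 from by decide, show (8:ℕ).choose 3 = 56 from by decide, show (8:ℕ).choose 4 = 70 from by decide, show (8:ℕ).choose 5 = 56 from by decide, show (8:ℕ).choose 6 = 28 from by decide, show (8:ℕ).choose 7 = 8 from by decide, show (8:ℕ).choose 8 = 1 from by decide, show (8:ℕ)-0 = 8 from rfl, show (8:ℕ)-1 = 7 from rfl, show (8:ℕ)-2 = 6 from rfl, show (8:ℕ)-3 = 5 from rfl, show (8:ℕ)-4 = 4 from rfl, show (8:ℕ)-5 = 3 from rfl, show (8:ℕ)-6 = 2 from rfl, show (8:ℕ)-7 = 1 from rfl, show (8:ℕ)-8 = 0 from rfl, show (2:ℕ)*0 = 0 from rfl, show (2:ℕ)*1 = 2 from rfl, show (2:ℕ)*2 = 4 from rfl, show (2:ℕ)*3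 = 6 from rfl, show (2:ℕ)*4 = 8 from rfl, show (2:ℕ)*5 = 10 from rfl, show (2:ℕ)*6 = 12 from rfl, show (2:ℕ)*7 = 14 from rfl, show (2:ℕ)*8 = 16 from rfl]
    rw [hE0, hv1, hv2, hv3, hv4, hv5, hv6, hv7, hv8]
    norm_num
  have hd9 : Dd E 9 = -2586813857792 := by
    rw [Dd]
    simp only [Finset.sum_range_succ, Finset.sum_range_zero]
    simp only [show (9:ℕ).choose 0 = 1 from by decide, show (9:ℕ).choose 1 = 9 from by decide, show (9:ℕ).choose 2 = 36 from by decide, show (9:ℕ).choose 3 = 84 from by decide, show (9:ℕ).choose 4 = 126 from by decide, show (9:ℕ).choose 5 = 126 from by decide, show (9:ℕ).choose 6 = 84 from by decide, show (9:ℕ).choose 7 = 36 from by decide, show (9:ℕ).choose 8 = 9 from by decide, show (9:ℕ).choose 9 = 1 from by decide, show (9:ℕ)-0 = 9 from rfl, show (9:ℕ)-1 = 8 from rfl, show (9:ℕ)-2 = 7 from rfl, show (9:ℕ)-3 = 6 from rfl, show (9:ℕ)-4 = 5 from rfl, show (9:ℕ)-5 = 4 from rfl, show (9:ℕ)-6 =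 3 from rfl, show (9:ℕ)-7 = 2 from rfl, show (9:ℕ)-8 = 1 from rfl, show (9:ℕ)-9 = 0 from rfl, show (2:ℕ)*0 = 0 from rfl, show (2:ℕ)*1 = 2 from rfl, show (2:ℕ)*2 = 4 from rfl, show (2:ℕ)*3 = 6 from rfl, show (2:ℕ)*4 = 8 from rfl, show (2:ℕ)*5 = 10 from rfl, show (2:ℕ)*6 = 12 from rfl, show (2:ℕ)*7 = 14 from rfl, show (2:ℕ)*8 = 16 from rfl, show (2:ℕ)*9 = 18 from rfl]
    rw [hE0, hv1, hv2, hv3, hv4, hv5, hv6, hv7, hv8, hv9]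
    norm_num
  have hd10 : Dd E 10 = 395317106966528 := by
    rw [Dd]
    simp only [Finset.sum_range_succ, Finset.sum_range_zero]
    simp only [show (10:ℕ).choose 0 = 1 from by decide, show (10:ℕ).choose 1 = 10 from by decide, show (10:ℕ).choose 2 = 45 from by decide, show (10:ℕ).choose 3 = 120 from by decide, show (10:ℕ).choose 4 = 210 from by decide, show (10:ℕ).choose 5 = 252 from by decide, show (10:ℕ).choose 6 = 210 from by decide, show (10:ℕ).choose 7 = 120 from by decide, show (10:ℕ).choose 8 = 45 from by decide, show (10:ℕ).choose 9 = 10 from by decide, show (10:ℕ).choose 10 = 1 from by decide, show (10:ℕ)-0 = 10 from rfl, show (10:ℕ)-1 = 9 from rfl, show (10:ℕ)-2 = 8 from rfl, show (10:ℕ)-3 = 7 from rfl, show (10:ℕ)-4 = 6 from rfl, show (10:ℕ)-5 = 5 from rfl, show (10:ℕ)-6 = 4 from rfl, show (10:ℕ)-7 = 3 from rfl, show (10:ℕ)-8 = 2 from rfl, show (10:ℕ)-9 = 1 from rfl, show (10:ℕ)-10 = 0 from rfl, show (2:ℕ)*0 = 0 from rfl, show (2:ℕ)*1 = 2 from rfl,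 show (2:ℕ)*2 = 4 from rfl, show (2:ℕ)*3 = 6 from rfl, show (2:ℕ)*4 = 8 from rfl, show (2:ℕ)*5 = 10 from rfl, show (2:ℕ)*6 = 12 from rfl, show (2:ℕ)*7 = 14 from rfl, show (2:ℕ)*8 = 16 from rfl, show (2:ℕ)*9 = 18 from rfl, show (2:ℕ)*10 = 20 from rfl]
    rw [hE0, hv1, hv2, hv3, hv4, hv5, hv6, hv7, hv8, hv9, hv10]
    norm_num
  have hd11 : Dd E 11 = -73558492507013120 := by
    rw [Dd]
    simp only [Finset.sum_range_succ, Finset.sum_range_zero]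
    simp only [show (11:ℕ).choose 0 = 1 from by decide, show (11:ℕ).choose 1 = 11 from by decide, show (11:ℕ).choose 2 = 55 from by decide, show (11:ℕ).choose 3 = 165 from by decide, show (11:ℕ).choose 4 = 330 from by decide, show (11:ℕ).choose 5 = 462 from by decide, show (11:ℕ).choose 6 = 462 from by decide, show (11:ℕ).choose 7 = 330 from by decide, show (11:ℕ).choose 8 = 165 from by decide, show (11:ℕ).choose 9 = 55 from by decide, show (11:ℕ).choose 10 = 11 from by decide, show (11:ℕ).choose 11 = 1 from by decide, show (11:ℕ)-0 = 11 from rfl, show (11:ℕ)-1 = 10 from rfl, show (11:ℕ)-2 = 9 from rfl, show (11:ℕ)-3 = 8 from rfl, show (11:ℕ)-4 = 7 from rfl, show (11:ℕ)-5 = 6 from rfl, show (11:ℕ)-6 = 5 from rfl, show (11:ℕ)-7 = 4 from rfl, show (11:ℕ)-8 = 3 from rfl, show (11:ℕ)-9 = 2 from rfl, show (11:ℕ)-10 = 1 from rfl, show (11:ℕ)-11 = 0 from rfl, show (2:ℕ)*0 = 0 from rfl, show (2:ℕ)*1 = 2 from rfl, show (2:ℕ)*2 = 4 from rfl, show (2:ℕ)*3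 = 6 from rfl, show (2:ℕ)*4 = 8 from rfl, show (2:ℕ)*5 = 10 from rfl, show (2:ℕ)*6 = 12 from rfl, show (2:ℕ)*7 = 14 from rfl, show (2:ℕ)*8 = 16 from rfl, show (2:ℕ)*9 = 18 from rfl, show (2:ℕ)*10 = 20 from rfl, show (2:ℕ)*11 = 22 from rfl]
    rw [hE0, hv1, hv2, hv3, hv4, hv5, hv6, hv7, hv8, hv9, hv10, hv11]
    norm_num
  have hd12 : Dd E 12 = 16371703987457490944 := by
    rw [Dd]
    simp only [Finset.sum_range_succ, Finset.sum_range_zero]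
    simp only [show (12:ℕ).choose 0 = 1 from by decide, show (12:ℕ).choose 1 = 12 from by decide, show (12:ℕ).choose 2 = 66 from by decide, show (12:ℕ).choose 3 = 220 from by decide, show (12:ℕ).choose 4 = 495 from by decide, show (12:ℕ).choose 5 = 792 from by decide, show (12:ℕ).choose 6 = 924 from by decide, show (12:ℕ).choose 7 = 792 from by decide, show (12:ℕ).choose 8 = 495 from by decide, show (12:ℕ).choose 9 = 220 from by decide, show (12:ℕ).choose 10 = 66 from by decide, show (12:ℕ).choose 11 = 12 from by decide, show (12:ℕ).choose 12 = 1 from by decide, show (12:ℕ)-0 = 12 from rfl, show (12:ℕ)-1 = 11 from rfl, show (12:ℕ)-2 = 10 from rfl, show (12:ℕ)-3 = 9 from rfl, show (12:ℕ)-4 = 8 from rfl, show (12:ℕ)-5 = 7 from rfl, show (12:ℕ)-6 = 6 from rfl, show (12:ℕ)-7 = 5 from rfl, show (12:ℕ)-8 = 4 from rfl, show (12:ℕ)-9 = 3 from rfl, show (12:ℕ)-10 = 2 from rfl, show (12:ℕ)-11 = 1 from rfl, show (12:ℕ)-12 = 0 from rfl, show (2:ℕ)*0 = 0 from rfl, show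 (2:ℕ)*1 = 2 from rfl, show (2:ℕ)*2 = 4 from rfl, show (2:ℕ)*3 = 6 from rfl, show (2:ℕ)*4 = 8 from rfl, show (2:ℕ)*5 = 10 from rfl, show (2:ℕ)*6 = 12 from rfl, show (2:ℕ)*7 = 14 from rfl, show (2:ℕ)*8 = 16 from rfl, show (2:ℕ)*9 = 18 from rfl, show (2:ℕ)*10 = 20 from rfl, show (2:ℕ)*11 = 22 from rfl, show (2:ℕ)*12 = 24 from rfl]
    rw [hE0, hv1, hv2, hv3, hv4, hv5, hv6, hv7, hv8, hv9, hv10, hv11, hv12]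
    norm_num
  have hd13 : Dd E 13 = -4294278336574518198272 := by
    rw [Dd]
    simp only [Finset.sum_range_succ, Finset.sum_range_zero]
    simp only [show (13:ℕ).choose 0 = 1 from by decide, show (13:ℕ).choose 1 = 13 from by decide, show (13:ℕ).choose 2 = 78 from by decide, show (13:ℕ).choose 3 = 286 from by decide, show (13:ℕ).choose 4 = 715 from by decide, show (13:ℕ).choose 5 = 1287 from by decide, show (13:ℕ).choose 6 = 1716 from by decide, show (13:ℕ).choose 7 = 1716 from by decide, show (13:ℕ).choose 8 = 1287 from by decide, show (13:ℕ).choose 9 = 715 from by decide, show (13:ℕ).choose 10 = 286 from by decide, show (13:ℕ).choose 11 = 78 from by decide, show (13:ℕ).choose 12 = 13 from by decide, show (13:ℕ).choose 13 = 1 from by decide, show (13:ℕ)-0 = 13 from rfl, show (13:ℕ)-1 = 12 from rfl, show (13:ℕ)-2 = 11 from rfl, show (13:ℕ)-3 = 10 from rfl, show (13:ℕ)-4 = 9 from rfl, show (13:ℕ)-5 = 8 from rfl, show (13:ℕ)-6 = 7 from rfl, show (13:ℕ)-7 = 6 from rfl, show (13:ℕ)-8 = 5 from rfl, show (13:ℕ)-9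 = 4 from rfl, show (13:ℕ)-10 = 3 from rfl, show (13:ℕ)-11 = 2 from rfl, show (13:ℕ)-12 = 1 from rfl, show (13:ℕ)-13 = 0 from rfl, show (2:ℕ)*0 = 0 from rfl, show (2:ℕ)*1 = 2 from rfl, show (2:ℕ)*2 = 4 from rfl, show (2:ℕ)*3 = 6 from rfl, show (2:ℕ)*4 = 8 from rfl, show (2:ℕ)*5 = 10 from rfl, show (2:ℕ)*6 = 12 from rfl, show (2:ℕ)*7 = 14 from rfl, show (2:ℕ)*8 = 16 from rfl, show (2:ℕ)*9 = 18 from rfl, show (2:ℕ)*10 = 20 from rfl, show (2:ℕ)*11 = 22 from rfl, show (2:ℕ)*12 = 24 from rfl, show (2:ℕ)*13 = 26 from rfl]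
    rw [hE0, hv1, hv2, hv3, hv4, hv5, hv6, hv7, hv8, hv9, hv10, hv11, hv12, hv13]
    norm_num
  exact ⟨hd1, hd2, hd3, hd4, hd5, hd6, hd7, hd8, hd9, hd10, hd11, hd12, hd13⟩

lemma hcast (x u : ℕ) : ((x.choose (u+1)) : ℤ) * (u+1) = (x.choose u : ℤ) * ((x:ℤ) - u) := by
  rcases le_or_gt (u+1) x with hle | hlt
  · have h := Nat.choose_succ_right_eq x u
    have hcast' : ((x.choose (u+1)) : ℤ) * (u+1) = (x.choose u : ℤ) * ((x - u : ℕ) : ℤ) := by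
      exact_mod_cast congrArg (Nat.cast : ℕ → ℤ) h
    rw [hcast']
    congr 1
    push_cast [Nat.cast_sub (by omega : u ≤ x)]
    ring
  · rcases Nat.lt_or_ge x u with hx | hx
    · simp [Nat.choose_eq_zero_of_lt (by omega : x < u+1), Nat.choose_eq_zero_of_lt hx]
    · have hxu : x = u := by omega
      subst hxu
      simp [Nat.choose_eq_zero_of_lt (by omega : x < x+1)]
lemma Ylem0 (M k : ℕ) (hM : 4 ≤ M) :
    (2:ℤ)^(M+11) ∣ ((-2 : ℤ) * ((2^M*k).choose 1 : ℤ) + (8 : ℤ) * ((2^M*k).choose 2 : ℤ) + (-80 : ℤ) * ((2^M*k).choose 3 : ℤ) + (1664 : ℤ) * ((2^M*k).choose 4 : ℤ) + (-58112 : ℤ) * ((2^M*k).choose 5 : ℤ) + (3027968 : ℤ) * ((2^M*k).choose 6 : ℤ) + (-219392000 : ℤ) * ((2^M*k).choose 7 : ℤ))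
      - 2*((2^M*k : ℕ) : ℤ)*501 - 4*((2^M*k : ℕ) : ℤ)^2*15 := by
  set H : ℤ := ((2^M*k : ℕ) : ℤ) with hH
  have hc1 : ((2^M*k).choose 1 : ℤ) = H := by rw [Nat.choose_one_right]
  have r1 : ((2^M*k).choose 2 : ℤ) * 2 = ((2^M*k).choose 1 : ℤ) * (H - 1) := hcast (2^M*k) 1
  have r2 : ((2^M*k).choose 3 : ℤ) * 3 = ((2^M*k).choose 2 : ℤ) * (H - 2) := hcast (2^M*k) 2
  have r3 : ((2^M*k).choose 4 : ℤ) * 4 = ((2^M*k).choose 3 : ℤ) * (H - 3) := hcast (2^M*k) 3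
  have r4 : ((2^M*k).choose 5 : ℤ) * 5 = ((2^M*k).choose 4 : ℤ) * (H - 4) := hcast (2^M*k) 4
  have r5 : ((2^M*k).choose 6 : ℤ) * 6 = ((2^M*k).choose 5 : ℤ) * (H - 5) := hcast (2^M*k) 5
  have r6 : ((2^M*k).choose 7 : ℤ) * 7 = ((2^M*k).choose 6 : ℤ) * (H - 6) := hcast (2^M*k) 6
  have f2 : ((2^M*k).choose 2 : ℤ) * 2 = (1 : ℤ)*H^2 + (-1 : ℤ)*H := by linear_combination r1 + (H-1)*hc1
  have f3 : ((2^M*k).choose 3 : ℤ) * 6 = (1 : ℤ)*H^3 + (-3 : ℤ)*H^2 + (2 : ℤ)*H := by linear_combination (H-2)*f2 + 2*r2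
  have f4 : ((2^M*k).choose 4 : ℤ) * 24 = (1 : ℤ)*H^4 + (-6 : ℤ)*H^3 + (11 : ℤ)*H^2 + (-6 : ℤ)*H := by linear_combination (H-3)*f3 + 6*r3
  have f5 : ((2^M*k).choose 5 : ℤ) * 120 = (1 : ℤ)*H^5 + (-10 : ℤ)*H^4 + (35 : ℤ)*H^3 + (-50 : ℤ)*H^2 + (24 : ℤ)*H := by linear_combination (H-4)*f4 + 24*r4
  have f6 : ((2^M*k).choose 6 : ℤ) * 720 = (1 : ℤ)*H^6 + (-15 : ℤ)*H^5 + (85 : ℤ)*H^4 + (-225 : ℤ)*H^3 + (274 : ℤ)*H^2 + (-120 : ℤ)*H := by linear_combination (H-5)*f5 + 120*r5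
  have f7 : ((2^M*k).choose 7 : ℤ) * 5040 = (1 : ℤ)*H^7 + (-21 : ℤ)*H^6 + (175 : ℤ)*H^5 + (-735 : ℤ)*H^4 + (1624 : ℤ)*H^3 + (-1764 : ℤ)*H^2 + (720 : ℤ)*H := by linear_combination (H-6)*f6 + 720*r6
  have hexp : 5040 * (((-2 : ℤ) * ((2^M*k).choose 1 : ℤ) + (8 : ℤ) * ((2^M*k).choose 2 : ℤ) + (-80 : ℤ) * ((2^M*k).choose 3 : ℤ) + (1664 : ℤ) * ((2^M*k).choose 4 : ℤ) + (-58112 : ℤ) * ((2^M*k).choose 5 : ℤ) + (3027968 : ℤ) * ((2^M*k).choose 6 : ℤ) + (-219392000 : ℤ) * ((2^M*k).choose 7 : ℤ)) - 2*H*501 - 4*H^2*15) = (-160571621376 : ℤ)*H + (392940929024 : ℤ)*H^2 + (-361149246080 : ℤ)*H^3 + (163079517440 : ℤ)*H^4 + (-38713977344 : ℤ)*H^5 + (4628427776 : ℤ)*H^6 + (-219392000 : ℤ)*H^7 := by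
    linear_combination (20160 : ℤ)*f2 + (-67200 : ℤ)*f3 + (349440 : ℤ)*f4 + (-2440704 : ℤ)*f5 + (21195776 : ℤ)*f6 + (-219392000 : ℤ)*f7 + (-10080 : ℤ)*hc1
  have hH2 : H = 2^M * (k : ℤ) := by rw [hH]; push_cast; ring
  have hbig : (2:ℤ)^(M+15) ∣ 5040 * (((-2 : ℤ) * ((2^M*k).choose 1 : ℤ) + (8 : ℤ) * ((2^M*k).choose 2 : ℤ) + (-80 : ℤ) * ((2^M*k).choose 3 : ℤ) + (1664 : ℤ) * ((2^M*k).choose 4 : ℤ) + (-58112 : ℤ) * ((2^M*k).choose 5 : ℤ) + (3027968 : ℤ) * ((2^M*k).choose 6 : ℤ) + (-219392000 : ℤ) * ((2^M*k).choose 7 : ℤ)) - 2*H*501 - 4*H^2*15) := by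
    rw [hexp]
    have t1 : (2:ℤ)^(M+15) ∣ (-160571621376 : ℤ)*H := by
      have hpow : (2:ℤ)^15 * ((2:ℤ)^M)^1 = 2^(15+M*1) := by rw [← pow_mul, ← pow_add]
      have hdvd0 : (2:ℤ)^(M+15) ∣ (2:ℤ)^15 * ((2:ℤ)^M)^1 := by
        rw [hpow]; exact pow_dvd_pow 2 (by omega)
      have h1 : (-160571621376 : ℤ)*H = ((2:ℤ)^15 * ((2:ℤ)^M)^1) * ((-4900257 : ℤ) * (k:ℤ)) := by
        rw [hH2]; ring
      rw [h1]
      exact Dvd.dvd.mul_right hdvd0 _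
    have t2 : (2:ℤ)^(M+15) ∣ (392940929024 : ℤ)*H^2 := by
      have hpow : (2:ℤ)^14 * ((2:ℤ)^M)^2 = 2^(14+M*2) := by rw [← pow_mul, ← pow_add]
      have hdvd0 : (2:ℤ)^(M+15) ∣ (2:ℤ)^14 * ((2:ℤ)^M)^2 := by
        rw [hpow]; exact pow_dvd_pow 2 (by omega)
      have h1 : (392940929024 : ℤ)*H^2 = ((2:ℤ)^14 * ((2:ℤ)^M)^2) * ((23983211 : ℤ) * (k:ℤ)^2) := by
        rw [hH2]; ring
      rw [h1]
      exact Dvd.dvd.mul_right hdvd0 _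
    have t3 : (2:ℤ)^(M+15) ∣ (-361149246080 : ℤ)*H^3 := by
      have hpow : (2:ℤ)^7 * ((2:ℤ)^M)^3 = 2^(7+M*3) := by rw [← pow_mul, ← pow_add]
      have hdvd0 : (2:ℤ)^(M+15) ∣ (2:ℤ)^7 * ((2:ℤ)^M)^3 := by
        rw [hpow]; exact pow_dvd_pow 2 (by omega)
      have h1 : (-361149246080 : ℤ)*H^3 = ((2:ℤ)^7 * ((2:ℤ)^M)^3) * ((-2821478485 : ℤ) * (k:ℤ)^3) := by
        rw [hH2]; ring
      rw [h1]
      exact Dvd.dvd.mul_right hdvd0 _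
    have t4 : (2:ℤ)^(M+15) ∣ (163079517440 : ℤ)*H^4 := by
      have hpow : (2:ℤ)^8 * ((2:ℤ)^M)^4 = 2^(8+M*4) := by rw [← pow_mul, ← pow_add]
      have hdvd0 : (2:ℤ)^(M+15) ∣ (2:ℤ)^8 * ((2:ℤ)^M)^4 := by
        rw [hpow]; exact pow_dvd_pow 2 (by omega)
      have h1 : (163079517440 : ℤ)*H^4 = ((2:ℤ)^8 * ((2:ℤ)^M)^4) * ((637029365 : ℤ) * (k:ℤ)^4) := by
        rw [hH2]; ring
      rw [h1]
      exact Dvd.dvd.mul_right hdvd0 _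
    have t5 : (2:ℤ)^(M+15) ∣ (-38713977344 : ℤ)*H^5 := by
      have hpow : (2:ℤ)^9 * ((2:ℤ)^M)^5 = 2^(9+M*5) := by rw [← pow_mul, ← pow_add]
      have hdvd0 : (2:ℤ)^(M+15) ∣ (2:ℤ)^9 * ((2:ℤ)^M)^5 := by
        rw [hpow]; exact pow_dvd_pow 2 (by omega)
      have h1 : (-38713977344 : ℤ)*H^5 = ((2:ℤ)^9 * ((2:ℤ)^M)^5) * ((-75613237 : ℤ) * (k:ℤ)^5) := by
        rw [hH2]; ring
      rw [h1]
      exact Dvd.dvd.mul_right hdvd0 _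
    have t6 : (2:ℤ)^(M+15) ∣ (4628427776 : ℤ)*H^6 := by
      have hpow : (2:ℤ)^10 * ((2:ℤ)^M)^6 = 2^(10+M*6) := by rw [← pow_mul, ← pow_add]
      have hdvd0 : (2:ℤ)^(M+15) ∣ (2:ℤ)^10 * ((2:ℤ)^M)^6 := by
        rw [hpow]; exact pow_dvd_pow 2 (by omega)
      have h1 : (4628427776 : ℤ)*H^6 = ((2:ℤ)^10 * ((2:ℤ)^M)^6) * ((4519949 : ℤ) * (k:ℤ)^6) := by
        rw [hH2]; ring
      rw [h1]
      exact Dvd.dvd.mul_right hdvd0 _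
    have t7 : (2:ℤ)^(M+15) ∣ (-219392000 : ℤ)*H^7 := by
      have hpow : (2:ℤ)^11 * ((2:ℤ)^M)^7 = 2^(11+M*7) := by rw [← pow_mul, ← pow_add]
      have hdvd0 : (2:ℤ)^(M+15) ∣ (2:ℤ)^11 * ((2:ℤ)^M)^7 := by
        rw [hpow]; exact pow_dvd_pow 2 (by omega)
      have h1 : (-219392000 : ℤ)*H^7 = ((2:ℤ)^11 * ((2:ℤ)^M)^7) * ((-107125 : ℤ) * (k:ℤ)^7) := by
        rw [hH2]; ring
      rw [h1]
      exact Dvd.dvd.mul_right hdvd0 _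
    exact (dvd_add (dvd_add (dvd_add (dvd_add (dvd_add (dvd_add t1 t2) t3) t4) t5) t6) t7)
  have h315 : (2:ℤ)^(M+11) ∣ 315 * (((-2 : ℤ) * ((2^M*k).choose 1 : ℤ) + (8 : ℤ) * ((2^M*k).choose 2 : ℤ) + (-80 : ℤ) * ((2^M*k).choose 3 : ℤ) + (1664 : ℤ) * ((2^M*k).choose 4 : ℤ) + (-58112 : ℤ) * ((2^M*k).choose 5 : ℤ) + (3027968 : ℤ) * ((2^M*k).choose 6 : ℤ) + (-219392000 : ℤ) * ((2^M*k).choose 7 : ℤ)) - 2*H*501 - 4*H^2*15) := by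
    have h2 : 2^4 * ((2:ℤ)^(M+11)) ∣ 2^4 * (315 * (((-2 : ℤ) * ((2^M*k).choose 1 : ℤ) + (8 : ℤ) * ((2^M*k).choose 2 : ℤ) + (-80 : ℤ) * ((2^M*k).choose 3 : ℤ) + (1664 : ℤ) * ((2^M*k).choose 4 : ℤ) + (-58112 : ℤ) * ((2^M*k).choose 5 : ℤ) + (3027968 : ℤ) * ((2^M*k).choose 6 : ℤ) + (-219392000 : ℤ) * ((2^M*k).choose 7 : ℤ)) - 2*H*501 - 4*H^2*15)) := by
      have hc : (2:ℤ)^4 * 2^(M+11) = 2^(M+15) := by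
        rw [← pow_add]
        congr 1
        omega
      rw [hc]
      calc (2:ℤ)^(M+15) ∣ 5040 * (((-2 : ℤ) * ((2^M*k).choose 1 : ℤ) + (8 : ℤ) * ((2^M*k).choose 2 : ℤ) + (-80 : ℤ) * ((2^M*k).choose 3 : ℤ) + (1664 : ℤ) * ((2^M*k).choose 4 : ℤ) + (-58112 : ℤ) * ((2^M*k).choose 5 : ℤ) + (3027968 : ℤ) * ((2^M*k).choose 6 : ℤ) + (-219392000 : ℤ) * ((2^M*k).choose 7 : ℤ)) - 2*H*501 - 4*H^2*15) := hbig
        _ = 2^4 * (315 * (((-2 : ℤ) * ((2^M*k).choose 1 : ℤ) + (8 : ℤ) * ((2^M*k).choose 2 : ℤ) + (-80 : ℤ) * ((2^M*k).choose 3 : ℤ) + (1664 : ℤ) * ((2^M*k).choose 4 : ℤ) + (-58112 : ℤ) * ((2^M*k).choose 5 : ℤ) + (3027968 : ℤ) * ((2^M*k).choose 6 : ℤ) + (-219392000 : ℤ) * ((2^M*k).choose 7 : ℤ)) - 2*H*501 - 4*H^2*15)) := by ring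
    exact (mul_dvd_mul_iff_left (by norm_num : (2:ℤ)^4 ≠ 0)).mp h2
  have hcop : IsCoprime ((2:ℤ)^(M+11)) 315 := by
    apply IsCoprime.pow_left
    rw [Int.isCoprime_iff_gcd_eq_one]
    norm_num
  exact hcop.dvd_of_dvd_mul_left h315

lemma Ylem1 (M k : ℕ) (hM : 4 ≤ M) :
    (2:ℤ)^(M+11) ∣ ((8 : ℤ) * ((2^M*k).choose 1 : ℤ) + (-80 : ℤ) * ((2^M*k).choose 2 : ℤ) + (1664 : ℤ) * ((2^M*k).choose 3 : ℤ) + (-58112 : ℤ) * ((2^M*k).choose 4 : ℤ) + (3027968 : ℤ) * ((2^M*k).choose 5 : ℤ) + (-219392000 : ℤ) * ((2^M*k).choose 6 : ℤ))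
      - 2*((2^M*k : ℕ) : ℤ)*56 - 4*((2^M*k : ℕ) : ℤ)^2*46 := by
  set H : ℤ := ((2^M*k : ℕ) : ℤ) with hH
  have hc1 : ((2^M*k).choose 1 : ℤ) = H := by rw [Nat.choose_one_right]
  have r1 : ((2^M*k).choose 2 : ℤ) * 2 = ((2^M*k).choose 1 : ℤ) * (H - 1) := hcast (2^M*k) 1
  have r2 : ((2^M*k).choose 3 : ℤ) * 3 = ((2^M*k).choose 2 : ℤ) * (H - 2) := hcast (2^M*k) 2
  have r3 : ((2^M*k).choose 4 : ℤ) * 4 = ((2^M*k).choose 3 : ℤ) * (H - 3) := hcast (2^M*k) 3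
  have r4 : ((2^M*k).choose 5 : ℤ) * 5 = ((2^M*k).choose 4 : ℤ) * (H - 4) := hcast (2^M*k) 4
  have r5 : ((2^M*k).choose 6 : ℤ) * 6 = ((2^M*k).choose 5 : ℤ) * (H - 5) := hcast (2^M*k) 5
  have f2 : ((2^M*k).choose 2 : ℤ) * 2 = (1 : ℤ)*H^2 + (-1 : ℤ)*H := by linear_combination r1 + (H-1)*hc1
  have f3 : ((2^M*k).choose 3 : ℤ) * 6 = (1 : ℤ)*H^3 + (-3 : ℤ)*H^2 + (2 : ℤ)*H := by linear_combination (H-2)*f2 + 2*r2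
  have f4 : ((2^M*k).choose 4 : ℤ) * 24 = (1 : ℤ)*H^4 + (-6 : ℤ)*H^3 + (11 : ℤ)*H^2 + (-6 : ℤ)*H := by linear_combination (H-3)*f3 + 6*r3
  have f5 : ((2^M*k).choose 5 : ℤ) * 120 = (1 : ℤ)*H^5 + (-10 : ℤ)*H^4 + (35 : ℤ)*H^3 + (-50 : ℤ)*H^2 + (24 : ℤ)*H := by linear_combination (H-4)*f4 + 24*r4
  have f6 : ((2^M*k).choose 6 : ℤ) * 720 = (1 : ℤ)*H^6 + (-15 : ℤ)*H^5 + (85 : ℤ)*H^4 + (-225 : ℤ)*H^3 + (274 : ℤ)*H^2 + (-120 : ℤ)*H := by linear_combination (H-5)*f5 + 120*r5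
  have hexp : 5040 * (((8 : ℤ) * ((2^M*k).choose 1 : ℤ) + (-80 : ℤ) * ((2^M*k).choose 2 : ℤ) + (1664 : ℤ) * ((2^M*k).choose 3 : ℤ) + (-58112 : ℤ) * ((2^M*k).choose 4 : ℤ) + (3027968 : ℤ) * ((2^M*k).choose 5 : ℤ) + (-219392000 : ℤ) * ((2^M*k).choose 6 : ℤ)) - 2*H*56 - 4*H^2*46) = (187417165824 : ℤ)*H + (-427292149760 : ℤ)*H^2 + (350068131840 : ℤ)*H^3 + (-131822190080 : ℤ)*H^4 + (23163334656 : ℤ)*H^5 + (-1535744000 : ℤ)*H^6 := by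
    linear_combination (-201600 : ℤ)*f2 + (1397760 : ℤ)*f3 + (-12203520 : ℤ)*f4 + (127174656 : ℤ)*f5 + (-1535744000 : ℤ)*f6 + (40320 : ℤ)*hc1
  have hH2 : H = 2^M * (k : ℤ) := by rw [hH]; push_cast; ring
  have hbig : (2:ℤ)^(M+15) ∣ 5040 * (((8 : ℤ) * ((2^M*k).choose 1 : ℤ) + (-80 : ℤ) * ((2^M*k).choose 2 : ℤ) + (1664 : ℤ) * ((2^M*k).choose 3 : ℤ) + (-58112 : ℤ) * ((2^M*k).choose 4 : ℤ) + (3027968 : ℤ) * ((2^M*k).choose 5 : ℤ) + (-219392000 : ℤ) * ((2^M*k).choose 6 : ℤ)) - 2*H*56 - 4*H^2*46) := by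
    rw [hexp]
    have t1 : (2:ℤ)^(M+15) ∣ (187417165824 : ℤ)*H := by
      have hpow : (2:ℤ)^16 * ((2:ℤ)^M)^1 = 2^(16+M*1) := by rw [← pow_mul, ← pow_add]
      have hdvd0 : (2:ℤ)^(M+15) ∣ (2:ℤ)^16 * ((2:ℤ)^M)^1 := by
        rw [hpow]; exact pow_dvd_pow 2 (by omega)
      have h1 : (187417165824 : ℤ)*H = ((2:ℤ)^16 * ((2:ℤ)^M)^1) * ((2859759 : ℤ) * (k:ℤ)) := by
        rw [hH2]; ring
      rw [h1]
      exact Dvd.dvd.mul_right hdvd0 _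
    have t2 : (2:ℤ)^(M+15) ∣ (-427292149760 : ℤ)*H^2 := by
      have hpow : (2:ℤ)^11 * ((2:ℤ)^M)^2 = 2^(11+M*2) := by rw [← pow_mul, ← pow_add]
      have hdvd0 : (2:ℤ)^(M+15) ∣ (2:ℤ)^11 * ((2:ℤ)^M)^2 := by
        rw [hpow]; exact pow_dvd_pow 2 (by omega)
      have h1 : (-427292149760 : ℤ)*H^2 = ((2:ℤ)^11 * ((2:ℤ)^M)^2) * ((-208638745 : ℤ) * (k:ℤ)^2) := by
        rw [hH2]; ring
      rw [h1]
      exact Dvd.dvd.mul_right hdvd0 _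
    have t3 : (2:ℤ)^(M+15) ∣ (350068131840 : ℤ)*H^3 := by
      have hpow : (2:ℤ)^11 * ((2:ℤ)^M)^3 = 2^(11+M*3) := by rw [← pow_mul, ← pow_add]
      have hdvd0 : (2:ℤ)^(M+15) ∣ (2:ℤ)^11 * ((2:ℤ)^M)^3 := by
        rw [hpow]; exact pow_dvd_pow 2 (by omega)
      have h1 : (350068131840 : ℤ)*H^3 = ((2:ℤ)^11 * ((2:ℤ)^M)^3) * ((170931705 : ℤ) * (k:ℤ)^3) := by
        rw [hH2]; ring
      rw [h1]
      exact Dvd.dvd.mul_right hdvd0 _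
    have t4 : (2:ℤ)^(M+15) ∣ (-131822190080 : ℤ)*H^4 := by
      have hpow : (2:ℤ)^9 * ((2:ℤ)^M)^4 = 2^(9+M*4) := by rw [← pow_mul, ← pow_add]
      have hdvd0 : (2:ℤ)^(M+15) ∣ (2:ℤ)^9 * ((2:ℤ)^M)^4 := by
        rw [hpow]; exact pow_dvd_pow 2 (by omega)
      have h1 : (-131822190080 : ℤ)*H^4 = ((2:ℤ)^9 * ((2:ℤ)^M)^4) * ((-257465215 : ℤ) * (k:ℤ)^4) := by
        rw [hH2]; ring
      rw [h1]
      exact Dvd.dvd.mul_right hdvd0 _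
    have t5 : (2:ℤ)^(M+15) ∣ (23163334656 : ℤ)*H^5 := by
      have hpow : (2:ℤ)^12 * ((2:ℤ)^M)^5 = 2^(12+M*5) := by rw [← pow_mul, ← pow_add]
      have hdvd0 : (2:ℤ)^(M+15) ∣ (2:ℤ)^12 * ((2:ℤ)^M)^5 := by
        rw [hpow]; exact pow_dvd_pow 2 (by omega)
      have h1 : (23163334656 : ℤ)*H^5 = ((2:ℤ)^12 * ((2:ℤ)^M)^5) * ((5655111 : ℤ) * (k:ℤ)^5) := by
        rw [hH2]; ring
      rw [h1]
      exact Dvd.dvd.mul_right hdvd0 _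
    have t6 : (2:ℤ)^(M+15) ∣ (-1535744000 : ℤ)*H^6 := by
      have hpow : (2:ℤ)^11 * ((2:ℤ)^M)^6 = 2^(11+M*6) := by rw [← pow_mul, ← pow_add]
      have hdvd0 : (2:ℤ)^(M+15) ∣ (2:ℤ)^11 * ((2:ℤ)^M)^6 := by
        rw [hpow]; exact pow_dvd_pow 2 (by omega)
      have h1 : (-1535744000 : ℤ)*H^6 = ((2:ℤ)^11 * ((2:ℤ)^M)^6) * ((-749875 : ℤ) * (k:ℤ)^6) := by
        rw [hH2]; ring
      rw [h1]
      exact Dvd.dvd.mul_right hdvd0 _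
    exact (dvd_add (dvd_add (dvd_add (dvd_add (dvd_add t1 t2) t3) t4) t5) t6)
  have h315 : (2:ℤ)^(M+11) ∣ 315 * (((8 : ℤ) * ((2^M*k).choose 1 : ℤ) + (-80 : ℤ) * ((2^M*k).choose 2 : ℤ) + (1664 : ℤ) * ((2^M*k).choose 3 : ℤ) + (-58112 : ℤ) * ((2^M*k).choose 4 : ℤ) + (3027968 : ℤ) * ((2^M*k).choose 5 : ℤ) + (-219392000 : ℤ) * ((2^M*k).choose 6 : ℤ)) - 2*H*56 - 4*H^2*46) := by
    have h2 : 2^4 * ((2:ℤ)^(M+11)) ∣ 2^4 * (315 * (((8 : ℤ) * ((2^M*k).choose 1 : ℤ) + (-80 : ℤ) * ((2^M*k).choose 2 : ℤ) + (1664 : ℤ) * ((2^M*k).choose 3 : ℤ) + (-58112 : ℤ) * ((2^M*k).choose 4 : ℤ) + (3027968 : ℤ) * ((2^M*k).choose 5 : ℤ) + (-219392000 : ℤ) * ((2^M*k).choose 6 : ℤ)) - 2*H*56 - 4*H^2*46)) := by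
      have hc : (2:ℤ)^4 * 2^(M+11) = 2^(M+15) := by
        rw [← pow_add]
        congr 1
        omega
      rw [hc]
      calc (2:ℤ)^(M+15) ∣ 5040 * (((8 : ℤ) * ((2^M*k).choose 1 : ℤ) + (-80 : ℤ) * ((2^M*k).choose 2 : ℤ) + (1664 : ℤ) * ((2^M*k).choose 3 : ℤ) + (-58112 : ℤ) * ((2^M*k).choose 4 : ℤ) + (3027968 : ℤ) * ((2^M*k).choose 5 : ℤ) + (-219392000 : ℤ) * ((2^M*k).choose 6 : ℤ)) - 2*H*56 - 4*H^2*46) := hbig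
        _ = 2^4 * (315 * (((8 : ℤ) * ((2^M*k).choose 1 : ℤ) + (-80 : ℤ) * ((2^M*k).choose 2 : ℤ) + (1664 : ℤ) * ((2^M*k).choose 3 : ℤ) + (-58112 : ℤ) * ((2^M*k).choose 4 : ℤ) + (3027968 : ℤ) * ((2^M*k).choose 5 : ℤ) + (-219392000 : ℤ) * ((2^M*k).choose 6 : ℤ)) - 2*H*56 - 4*H^2*46)) := by ring
    exact (mul_dvd_mul_iff_left (by norm_num : (2:ℤ)^4 ≠ 0)).mp h2
  have hcop : IsCoprime ((2:ℤ)^(M+11)) 315 := by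
    apply IsCoprime.pow_left
    rw [Int.isCoprime_iff_gcd_eq_one]
    norm_num
  exact hcop.dvd_of_dvd_mul_left h315

lemma Ylem2 (M k : ℕ) (hM : 4 ≤ M) :
    (2:ℤ)^(M+11) ∣ ((-80 : ℤ) * ((2^M*k).choose 1 : ℤ) + (1664 : ℤ) * ((2^M*k).choose 2 : ℤ) + (-58112 : ℤ) * ((2^M*k).choose 3 : ℤ) + (3027968 : ℤ) * ((2^M*k).choose 4 : ℤ) + (-219392000 : ℤ) * ((2^M*k).choose 5 : ℤ))
      - 2*((2^M*k : ℕ) : ℤ)*22328 - 4*((2^M*k : ℕ) : ℤ)^2*336 := by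
  set H : ℤ := ((2^M*k : ℕ) : ℤ) with hH
  have hc1 : ((2^M*k).choose 1 : ℤ) = H := by rw [Nat.choose_one_right]
  have r1 : ((2^M*k).choose 2 : ℤ) * 2 = ((2^M*k).choose 1 : ℤ) * (H - 1) := hcast (2^M*k) 1
  have r2 : ((2^M*k).choose 3 : ℤ) * 3 = ((2^M*k).choose 2 : ℤ) * (H - 2) := hcast (2^M*k) 2
  have r3 : ((2^M*k).choose 4 : ℤ) * 4 = ((2^M*k).choose 3 : ℤ) * (H - 3) := hcast (2^M*k) 3
  have r4 : ((2^M*k).choose 5 : ℤ) * 5 = ((2^M*k).choose 4 : ℤ) * (H - 4) := hcast (2^M*k) 4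
  have f2 : ((2^M*k).choose 2 : ℤ) * 2 = (1 : ℤ)*H^2 + (-1 : ℤ)*H := by linear_combination r1 + (H-1)*hc1
  have f3 : ((2^M*k).choose 3 : ℤ) * 6 = (1 : ℤ)*H^3 + (-3 : ℤ)*H^2 + (2 : ℤ)*H := by linear_combination (H-2)*f2 + 2*r2
  have f4 : ((2^M*k).choose 4 : ℤ) * 24 = (1 : ℤ)*H^4 + (-6 : ℤ)*H^3 + (11 : ℤ)*H^2 + (-6 : ℤ)*H := by linear_combination (H-3)*f3 + 6*r3
  have f5 : ((2^M*k).choose 5 : ℤ) * 120 = (1 : ℤ)*H^5 + (-10 : ℤ)*H^4 + (35 : ℤ)*H^3 + (-50 : ℤ)*H^2 + (24 : ℤ)*H := by linear_combination (H-4)*f4 + 24*r4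
  have hexp : 5040 * (((-80 : ℤ) * ((2^M*k).choose 1 : ℤ) + (1664 : ℤ) * ((2^M*k).choose 2 : ℤ) + (-58112 : ℤ) * ((2^M*k).choose 3 : ℤ) + (3027968 : ℤ) * ((2^M*k).choose 4 : ℤ) + (-219392000 : ℤ) * ((2^M*k).choose 5 : ℤ)) - 2*H*22328 - 4*H^2*336) = (-225289666560 : ℤ)*H + (467861667840 : ℤ)*H^2 + (-326370293760 : ℤ)*H^3 + (92780513280 : ℤ)*H^4 + (-9214464000 : ℤ)*H^5 := by
    linear_combination (4193280 : ℤ)*f2 + (-48814080 : ℤ)*f3 + (635873280 : ℤ)*f4 + (-9214464000 : ℤ)*f5 + (-403200 : ℤ)*hc1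
  have hH2 : H = 2^M * (k : ℤ) := by rw [hH]; push_cast; ring
  have hbig : (2:ℤ)^(M+15) ∣ 5040 * (((-80 : ℤ) * ((2^M*k).choose 1 : ℤ) + (1664 : ℤ) * ((2^M*k).choose 2 : ℤ) + (-58112 : ℤ) * ((2^M*k).choose 3 : ℤ) + (3027968 : ℤ) * ((2^M*k).choose 4 : ℤ) + (-219392000 : ℤ) * ((2^M*k).choose 5 : ℤ)) - 2*H*22328 - 4*H^2*336) := by
    rw [hexp]
    have t1 : (2:ℤ)^(M+15) ∣ (-225289666560 : ℤ)*H := by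
      have hpow : (2:ℤ)^15 * ((2:ℤ)^M)^1 = 2^(15+M*1) := by rw [← pow_mul, ← pow_add]
      have hdvd0 : (2:ℤ)^(M+15) ∣ (2:ℤ)^15 * ((2:ℤ)^M)^1 := by
        rw [hpow]; exact pow_dvd_pow 2 (by omega)
      have h1 : (-225289666560 : ℤ)*H = ((2:ℤ)^15 * ((2:ℤ)^M)^1) * ((-6875295 : ℤ) * (k:ℤ)) := by
        rw [hH2]; ring
      rw [h1]
      exact Dvd.dvd.mul_right hdvd0 _
    have t2 : (2:ℤ)^(M+15) ∣ (467861667840 : ℤ)*H^2 := by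
      have hpow : (2:ℤ)^15 * ((2:ℤ)^M)^2 = 2^(15+M*2) := by rw [← pow_mul, ← pow_add]
      have hdvd0 : (2:ℤ)^(M+15) ∣ (2:ℤ)^15 * ((2:ℤ)^M)^2 := by
        rw [hpow]; exact pow_dvd_pow 2 (by omega)
      have h1 : (467861667840 : ℤ)*H^2 = ((2:ℤ)^15 * ((2:ℤ)^M)^2) * ((14278005 : ℤ) * (k:ℤ)^2) := by
        rw [hH2]; ring
      rw [h1]
      exact Dvd.dvd.mul_right hdvd0 _
    have t3 : (2:ℤ)^(M+15) ∣ (-326370293760 : ℤ)*H^3 := by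
      have hpow : (2:ℤ)^11 * ((2:ℤ)^M)^3 = 2^(11+M*3) := by rw [← pow_mul, ← pow_add]
      have hdvd0 : (2:ℤ)^(M+15) ∣ (2:ℤ)^11 * ((2:ℤ)^M)^3 := by
        rw [hpow]; exact pow_dvd_pow 2 (by omega)
      have h1 : (-326370293760 : ℤ)*H^3 = ((2:ℤ)^11 * ((2:ℤ)^M)^3) * ((-159360495 : ℤ) * (k:ℤ)^3) := by
        rw [hH2]; ring
      rw [h1]
      exact Dvd.dvd.mul_right hdvd0 _
    have t4 : (2:ℤ)^(M+15) ∣ (92780513280 : ℤ)*H^4 := by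
      have hpow : (2:ℤ)^11 * ((2:ℤ)^M)^4 = 2^(11+M*4) := by rw [← pow_mul, ← pow_add]
      have hdvd0 : (2:ℤ)^(M+15) ∣ (2:ℤ)^11 * ((2:ℤ)^M)^4 := by
        rw [hpow]; exact pow_dvd_pow 2 (by omega)
      have h1 : (92780513280 : ℤ)*H^4 = ((2:ℤ)^11 * ((2:ℤ)^M)^4) * ((45302985 : ℤ) * (k:ℤ)^4) := by
        rw [hH2]; ring
      rw [h1]
      exact Dvd.dvd.mul_right hdvd0 _
    have t5 : (2:ℤ)^(M+15) ∣ (-9214464000 : ℤ)*H^5 := by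
      have hpow : (2:ℤ)^12 * ((2:ℤ)^M)^5 = 2^(12+M*5) := by rw [← pow_mul, ← pow_add]
      have hdvd0 : (2:ℤ)^(M+15) ∣ (2:ℤ)^12 * ((2:ℤ)^M)^5 := by
        rw [hpow]; exact pow_dvd_pow 2 (by omega)
      have h1 : (-9214464000 : ℤ)*H^5 = ((2:ℤ)^12 * ((2:ℤ)^M)^5) * ((-2249625 : ℤ) * (k:ℤ)^5) := by
        rw [hH2]; ring
      rw [h1]
      exact Dvd.dvd.mul_right hdvd0 _
    exact (dvd_add (dvd_add (dvd_add (dvd_add t1 t2) t3) t4) t5)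
  have h315 : (2:ℤ)^(M+11) ∣ 315 * (((-80 : ℤ) * ((2^M*k).choose 1 : ℤ) + (1664 : ℤ) * ((2^M*k).choose 2 : ℤ) + (-58112 : ℤ) * ((2^M*k).choose 3 : ℤ) + (3027968 : ℤ) * ((2^M*k).choose 4 : ℤ) + (-219392000 : ℤ) * ((2^M*k).choose 5 : ℤ)) - 2*H*22328 - 4*H^2*336) := by
    have h2 : 2^4 * ((2:ℤ)^(M+11)) ∣ 2^4 * (315 * (((-80 : ℤ) * ((2^M*k).choose 1 : ℤ) + (1664 : ℤ) * ((2^M*k).choose 2 : ℤ) + (-58112 : ℤ) * ((2^M*k).choose 3 : ℤ) + (3027968 : ℤ) * ((2^M*k).choose 4 : ℤ) + (-219392000 : ℤ) * ((2^M*k).choose 5 : ℤ)) - 2*H*22328 - 4*H^2*336)) := by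
      have hc : (2:ℤ)^4 * 2^(M+11) = 2^(M+15) := by
        rw [← pow_add]
        congr 1
        omega
      rw [hc]
      calc (2:ℤ)^(M+15) ∣ 5040 * (((-80 : ℤ) * ((2^M*k).choose 1 : ℤ) + (1664 : ℤ) * ((2^M*k).choose 2 : ℤ) + (-58112 : ℤ) * ((2^M*k).choose 3 : ℤ) + (3027968 : ℤ) * ((2^M*k).choose 4 : ℤ) + (-219392000 : ℤ) * ((2^M*k).choose 5 : ℤ)) - 2*H*22328 - 4*H^2*336) := hbig
        _ = 2^4 * (315 * (((-80 : ℤ) * ((2^M*k).choose 1 : ℤ) + (1664 : ℤ) * ((2^M*k).choose 2 : ℤ) + (-58112 : ℤ) * ((2^M*k).choose 3 : ℤ) + (3027968 : ℤ) * ((2^M*k).choose 4 : ℤ) + (-219392000 : ℤ) * ((2^M*k).choose 5 : ℤ)) - 2*H*22328 - 4*H^2*336)) := by ring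
    exact (mul_dvd_mul_iff_left (by norm_num : (2:ℤ)^4 ≠ 0)).mp h2
  have hcop : IsCoprime ((2:ℤ)^(M+11)) 315 := by
    apply IsCoprime.pow_left
    rw [Int.isCoprime_iff_gcd_eq_one]
    norm_num
  exact hcop.dvd_of_dvd_mul_left h315

lemma Ylem3 (M k : ℕ) (hM : 4 ≤ M) :
    (2:ℤ)^(M+11) ∣ ((1664 : ℤ) * ((2^M*k).choose 1 : ℤ) + (-58112 : ℤ) * ((2^M*k).choose 2 : ℤ) + (3027968 : ℤ) * ((2^M*k).choose 3 : ℤ) + (-219392000 : ℤ) * ((2^M*k).choose 4 : ℤ))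
      - 2*((2^M*k : ℕ) : ℤ)*209664 - 4*((2^M*k : ℕ) : ℤ)^2*672 := by
  set H : ℤ := ((2^M*k : ℕ) : ℤ) with hH
  have hc1 : ((2^M*k).choose 1 : ℤ) = H := by rw [Nat.choose_one_right]
  have r1 : ((2^M*k).choose 2 : ℤ) * 2 = ((2^M*k).choose 1 : ℤ) * (H - 1) := hcast (2^M*k) 1
  have r2 : ((2^M*k).choose 3 : ℤ) * 3 = ((2^M*k).choose 2 : ℤ) * (H - 2) := hcast (2^M*k) 2
  have r3 : ((2^M*k).choose 4 : ℤ) * 4 = ((2^M*k).choose 3 : ℤ) * (H - 3) := hcast (2^M*k) 3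
  have f2 : ((2^M*k).choose 2 : ℤ) * 2 = (1 : ℤ)*H^2 + (-1 : ℤ)*H := by linear_combination r1 + (H-1)*hc1
  have f3 : ((2^M*k).choose 3 : ℤ) * 6 = (1 : ℤ)*H^3 + (-3 : ℤ)*H^2 + (2 : ℤ)*H := by linear_combination (H-2)*f2 + 2*r2
  have f4 : ((2^M*k).choose 4 : ℤ) * 24 = (1 : ℤ)*H^4 + (-6 : ℤ)*H^3 + (11 : ℤ)*H^2 + (-6 : ℤ)*H := by linear_combination (H-3)*f3 + 6*r3
  have hexp : 5040 * (((1664 : ℤ) * ((2^M*k).choose 1 : ℤ) + (-58112 : ℤ) * ((2^M*k).choose 2 : ℤ) + (3027968 : ℤ) * ((2^M*k).choose 3 : ℤ) + (-219392000 : ℤ) * ((2^M*k).choose 4 : ℤ)) - 2*H*209664 - 4*H^2*672) = (279562321920 : ℤ)*H + (-514585989120 : ℤ)*H^2 + (278977413120 : ℤ)*H^3 + (-46072320000 : ℤ)*H^4 := by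
    linear_combination (-146442240 : ℤ)*f2 + (2543493120 : ℤ)*f3 + (-46072320000 : ℤ)*f4 + (8386560 : ℤ)*hc1
  have hH2 : H = 2^M * (k : ℤ) := by rw [hH]; push_cast; ring
  have hbig : (2:ℤ)^(M+15) ∣ 5040 * (((1664 : ℤ) * ((2^M*k).choose 1 : ℤ) + (-58112 : ℤ) * ((2^M*k).choose 2 : ℤ) + (3027968 : ℤ) * ((2^M*k).choose 3 : ℤ) + (-219392000 : ℤ) * ((2^M*k).choose 4 : ℤ)) - 2*H*209664 - 4*H^2*672) := by
    rw [hexp]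
    have t1 : (2:ℤ)^(M+15) ∣ (279562321920 : ℤ)*H := by
      have hpow : (2:ℤ)^15 * ((2:ℤ)^M)^1 = 2^(15+M*1) := by rw [← pow_mul, ← pow_add]
      have hdvd0 : (2:ℤ)^(M+15) ∣ (2:ℤ)^15 * ((2:ℤ)^M)^1 := by
        rw [hpow]; exact pow_dvd_pow 2 (by omega)
      have h1 : (279562321920 : ℤ)*H = ((2:ℤ)^15 * ((2:ℤ)^M)^1) * ((8531565 : ℤ) * (k:ℤ)) := by
        rw [hH2]; ring
      rw [h1]
      exact Dvd.dvd.mul_right hdvd0 _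
    have t2 : (2:ℤ)^(M+15) ∣ (-514585989120 : ℤ)*H^2 := by
      have hpow : (2:ℤ)^12 * ((2:ℤ)^M)^2 = 2^(12+M*2) := by rw [← pow_mul, ← pow_add]
      have hdvd0 : (2:ℤ)^(M+15) ∣ (2:ℤ)^12 * ((2:ℤ)^M)^2 := by
        rw [hpow]; exact pow_dvd_pow 2 (by omega)
      have h1 : (-514585989120 : ℤ)*H^2 = ((2:ℤ)^12 * ((2:ℤ)^M)^2) * ((-125631345 : ℤ) * (k:ℤ)^2) := by
        rw [hH2]; ring
      rw [h1]
      exact Dvd.dvd.mul_right hdvd0 _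
    have t3 : (2:ℤ)^(M+15) ∣ (278977413120 : ℤ)*H^3 := by
      have hpow : (2:ℤ)^15 * ((2:ℤ)^M)^3 = 2^(15+M*3) := by rw [← pow_mul, ← pow_add]
      have hdvd0 : (2:ℤ)^(M+15) ∣ (2:ℤ)^15 * ((2:ℤ)^M)^3 := by
        rw [hpow]; exact pow_dvd_pow 2 (by omega)
      have h1 : (278977413120 : ℤ)*H^3 = ((2:ℤ)^15 * ((2:ℤ)^M)^3) * ((8513715 : ℤ) * (k:ℤ)^3) := by
        rw [hH2]; ring
      rw [h1]
      exact Dvd.dvd.mul_right hdvd0 _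
    have t4 : (2:ℤ)^(M+15) ∣ (-46072320000 : ℤ)*H^4 := by
      have hpow : (2:ℤ)^12 * ((2:ℤ)^M)^4 = 2^(12+M*4) := by rw [← pow_mul, ← pow_add]
      have hdvd0 : (2:ℤ)^(M+15) ∣ (2:ℤ)^12 * ((2:ℤ)^M)^4 := by
        rw [hpow]; exact pow_dvd_pow 2 (by omega)
      have h1 : (-46072320000 : ℤ)*H^4 = ((2:ℤ)^12 * ((2:ℤ)^M)^4) * ((-11248125 : ℤ) * (k:ℤ)^4) := by
        rw [hH2]; ring
      rw [h1]
      exact Dvd.dvd.mul_right hdvd0 _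
    exact (dvd_add (dvd_add (dvd_add t1 t2) t3) t4)
  have h315 : (2:ℤ)^(M+11) ∣ 315 * (((1664 : ℤ) * ((2^M*k).choose 1 : ℤ) + (-58112 : ℤ) * ((2^M*k).choose 2 : ℤ) + (3027968 : ℤ) * ((2^M*k).choose 3 : ℤ) + (-219392000 : ℤ) * ((2^M*k).choose 4 : ℤ)) - 2*H*209664 - 4*H^2*672) := by
    have h2 : 2^4 * ((2:ℤ)^(M+11)) ∣ 2^4 * (315 * (((1664 : ℤ) * ((2^M*k).choose 1 : ℤ) + (-58112 : ℤ) * ((2^M*k).choose 2 : ℤ) + (3027968 : ℤ) * ((2^M*k).choose 3 : ℤ) + (-219392000 : ℤ) * ((2^M*k).choose 4 : ℤ)) - 2*H*209664 - 4*H^2*672)) := by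
      have hc : (2:ℤ)^4 * 2^(M+11) = 2^(M+15) := by
        rw [← pow_add]
        congr 1
        omega
      rw [hc]
      calc (2:ℤ)^(M+15) ∣ 5040 * (((1664 : ℤ) * ((2^M*k).choose 1 : ℤ) + (-58112 : ℤ) * ((2^M*k).choose 2 : ℤ) + (3027968 : ℤ) * ((2^M*k).choose 3 : ℤ) + (-219392000 : ℤ) * ((2^M*k).choose 4 : ℤ)) - 2*H*209664 - 4*H^2*672) := hbig
        _ = 2^4 * (315 * (((1664 : ℤ) * ((2^M*k).choose 1 : ℤ) + (-58112 : ℤ) * ((2^M*k).choose 2 : ℤ) + (3027968 : ℤ) * ((2^M*k).choose 3 : ℤ) + (-219392000 : ℤ) * ((2^M*k).choose 4 : ℤ)) - 2*H*209664 - 4*H^2*672)) := by ring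
    exact (mul_dvd_mul_iff_left (by norm_num : (2:ℤ)^4 ≠ 0)).mp h2
  have hcop : IsCoprime ((2:ℤ)^(M+11)) 315 := by
    apply IsCoprime.pow_left
    rw [Int.isCoprime_iff_gcd_eq_one]
    norm_num
  exact hcop.dvd_of_dvd_mul_left h315

lemma Ylem4 (M k : ℕ) (hM : 4 ≤ M) :
    (2:ℤ)^(M+11) ∣ ((-58112 : ℤ) * ((2^M*k).choose 1 : ℤ) + (3027968 : ℤ) * ((2^M*k).choose 2 : ℤ) + (-219392000 : ℤ) * ((2^M*k).choose 3 : ℤ))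
      - 2*((2^M*k : ℕ) : ℤ)*648576 - 4*((2^M*k : ℕ) : ℤ)^2*384 := by
  set H : ℤ := ((2^M*k : ℕ) : ℤ) with hH
  have hc1 : ((2^M*k).choose 1 : ℤ) = H := by rw [Nat.choose_one_right]
  have r1 : ((2^M*k).choose 2 : ℤ) * 2 = ((2^M*k).choose 1 : ℤ) * (H - 1) := hcast (2^M*k) 1
  have r2 : ((2^M*k).choose 3 : ℤ) * 3 = ((2^M*k).choose 2 : ℤ) * (H - 2) := hcast (2^M*k) 2
  have f2 : ((2^M*k).choose 2 : ℤ) * 2 = (1 : ℤ)*H^2 + (-1 : ℤ)*H := by linear_combination r1 + (H-1)*hc1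
  have f3 : ((2^M*k).choose 3 : ℤ) * 6 = (1 : ℤ)*H^3 + (-3 : ℤ)*H^2 + (2 : ℤ)*H := by linear_combination (H-2)*f2 + 2*r2
  have hexp : 5040 * (((-58112 : ℤ) * ((2^M*k).choose 1 : ℤ) + (3027968 : ℤ) * ((2^M*k).choose 2 : ℤ) + (-219392000 : ℤ) * ((2^M*k).choose 3 : ℤ)) - 2*H*648576 - 4*H^2*384) = (-383039569920 : ℤ)*H + (560490577920 : ℤ)*H^2 + (-184289280000 : ℤ)*H^3 := by
    linear_combination (7630479360 : ℤ)*f2 + (-184289280000 : ℤ)*f3 + (-292884480 : ℤ)*hc1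
  have hH2 : H = 2^M * (k : ℤ) := by rw [hH]; push_cast; ring
  have hbig : (2:ℤ)^(M+15) ∣ 5040 * (((-58112 : ℤ) * ((2^M*k).choose 1 : ℤ) + (3027968 : ℤ) * ((2^M*k).choose 2 : ℤ) + (-219392000 : ℤ) * ((2^M*k).choose 3 : ℤ)) - 2*H*648576 - 4*H^2*384) := by
    rw [hexp]
    have t1 : (2:ℤ)^(M+15) ∣ (-383039569920 : ℤ)*H := by
      have hpow : (2:ℤ)^20 * ((2:ℤ)^M)^1 = 2^(20+M*1) := by rw [← pow_mul, ← pow_add]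
      have hdvd0 : (2:ℤ)^(M+15) ∣ (2:ℤ)^20 * ((2:ℤ)^M)^1 := by
        rw [hpow]; exact pow_dvd_pow 2 (by omega)
      have h1 : (-383039569920 : ℤ)*H = ((2:ℤ)^20 * ((2:ℤ)^M)^1) * ((-365295 : ℤ) * (k:ℤ)) := by
        rw [hH2]; ring
      rw [h1]
      exact Dvd.dvd.mul_right hdvd0 _
    have t2 : (2:ℤ)^(M+15) ∣ (560490577920 : ℤ)*H^2 := by
      have hpow : (2:ℤ)^15 * ((2:ℤ)^M)^2 = 2^(15+M*2) := by rw [← pow_mul, ← pow_add]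
      have hdvd0 : (2:ℤ)^(M+15) ∣ (2:ℤ)^15 * ((2:ℤ)^M)^2 := by
        rw [hpow]; exact pow_dvd_pow 2 (by omega)
      have h1 : (560490577920 : ℤ)*H^2 = ((2:ℤ)^15 * ((2:ℤ)^M)^2) * ((17104815 : ℤ) * (k:ℤ)^2) := by
        rw [hH2]; ring
      rw [h1]
      exact Dvd.dvd.mul_right hdvd0 _
    have t3 : (2:ℤ)^(M+15) ∣ (-184289280000 : ℤ)*H^3 := by
      have hpow : (2:ℤ)^14 * ((2:ℤ)^M)^3 = 2^(14+M*3) := by rw [← pow_mul, ← pow_add]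
      have hdvd0 : (2:ℤ)^(M+15) ∣ (2:ℤ)^14 * ((2:ℤ)^M)^3 := by
        rw [hpow]; exact pow_dvd_pow 2 (by omega)
      have h1 : (-184289280000 : ℤ)*H^3 = ((2:ℤ)^14 * ((2:ℤ)^M)^3) * ((-11248125 : ℤ) * (k:ℤ)^3) := by
        rw [hH2]; ring
      rw [h1]
      exact Dvd.dvd.mul_right hdvd0 _
    exact (dvd_add (dvd_add t1 t2) t3)
  have h315 : (2:ℤ)^(M+11) ∣ 315 * (((-58112 : ℤ) * ((2^M*k).choose 1 : ℤ) + (3027968 : ℤ) * ((2^M*k).choose 2 : ℤ) + (-219392000 : ℤ) * ((2^M*k).choose 3 : ℤ)) - 2*H*648576 - 4*H^2*384) := by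
    have h2 : 2^4 * ((2:ℤ)^(M+11)) ∣ 2^4 * (315 * (((-58112 : ℤ) * ((2^M*k).choose 1 : ℤ) + (3027968 : ℤ) * ((2^M*k).choose 2 : ℤ) + (-219392000 : ℤ) * ((2^M*k).choose 3 : ℤ)) - 2*H*648576 - 4*H^2*384)) := by
      have hc : (2:ℤ)^4 * 2^(M+11) = 2^(M+15) := by
        rw [← pow_add]
        congr 1
        omega
      rw [hc]
      calc (2:ℤ)^(M+15) ∣ 5040 * (((-58112 : ℤ) * ((2^M*k).choose 1 : ℤ) + (3027968 : ℤ) * ((2^M*k).choose 2 : ℤ) + (-219392000 : ℤ) * ((2^M*k).choose 3 : ℤ)) - 2*H*648576 - 4*H^2*384) := hbig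
        _ = 2^4 * (315 * (((-58112 : ℤ) * ((2^M*k).choose 1 : ℤ) + (3027968 : ℤ) * ((2^M*k).choose 2 : ℤ) + (-219392000 : ℤ) * ((2^M*k).choose 3 : ℤ)) - 2*H*648576 - 4*H^2*384)) := by ring
    exact (mul_dvd_mul_iff_left (by norm_num : (2:ℤ)^4 ≠ 0)).mp h2
  have hcop : IsCoprime ((2:ℤ)^(M+11)) 315 := by
    apply IsCoprime.pow_left
    rw [Int.isCoprime_iff_gcd_eq_one]
    norm_num
  exact hcop.dvd_of_dvd_mul_left h315

lemma Ylem5 (M k : ℕ) (hM : 4 ≤ M) :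
    (2:ℤ)^(M+11) ∣ ((3027968 : ℤ) * ((2^M*k).choose 1 : ℤ) + (-219392000 : ℤ) * ((2^M*k).choose 2 : ℤ))
      - 2*((2^M*k : ℕ) : ℤ)*783360 - 4*((2^M*k : ℕ) : ℤ)^2*0 := by
  set H : ℤ := ((2^M*k : ℕ) : ℤ) with hH
  have hc1 : ((2^M*k).choose 1 : ℤ) = H := by rw [Nat.choose_one_right]
  have r1 : ((2^M*k).choose 2 : ℤ) * 2 = ((2^M*k).choose 1 : ℤ) * (H - 1) := hcast (2^M*k) 1
  have f2 : ((2^M*k).choose 2 : ℤ) * 2 = (1 : ℤ)*H^2 + (-1 : ℤ)*H := by linear_combination r1 + (H-1)*hc1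
  have hexp : 5040 * (((3027968 : ℤ) * ((2^M*k).choose 1 : ℤ) + (-219392000 : ℤ) * ((2^M*k).choose 2 : ℤ)) - 2*H*783360 - 4*H^2*0) = (560232529920 : ℤ)*H + (-552867840000 : ℤ)*H^2 := by
    linear_combination (-552867840000 : ℤ)*f2 + (15260958720 : ℤ)*hc1
  have hH2 : H = 2^M * (k : ℤ) := by rw [hH]; push_cast; ring
  have hbig : (2:ℤ)^(M+15) ∣ 5040 * (((3027968 : ℤ) * ((2^M*k).choose 1 : ℤ) + (-219392000 : ℤ) * ((2^M*k).choose 2 : ℤ)) - 2*H*783360 - 4*H^2*0) := by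
    rw [hexp]
    have t1 : (2:ℤ)^(M+15) ∣ (560232529920 : ℤ)*H := by
      have hpow : (2:ℤ)^17 * ((2:ℤ)^M)^1 = 2^(17+M*1) := by rw [← pow_mul, ← pow_add]
      have hdvd0 : (2:ℤ)^(M+15) ∣ (2:ℤ)^17 * ((2:ℤ)^M)^1 := by
        rw [hpow]; exact pow_dvd_pow 2 (by omega)
      have h1 : (560232529920 : ℤ)*H = ((2:ℤ)^17 * ((2:ℤ)^M)^1) * ((4274235 : ℤ) * (k:ℤ)) := by
        rw [hH2]; ring
      rw [h1]
      exact Dvd.dvd.mul_right hdvd0 _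
    have t2 : (2:ℤ)^(M+15) ∣ (-552867840000 : ℤ)*H^2 := by
      have hpow : (2:ℤ)^14 * ((2:ℤ)^M)^2 = 2^(14+M*2) := by rw [← pow_mul, ← pow_add]
      have hdvd0 : (2:ℤ)^(M+15) ∣ (2:ℤ)^14 * ((2:ℤ)^M)^2 := by
        rw [hpow]; exact pow_dvd_pow 2 (by omega)
      have h1 : (-552867840000 : ℤ)*H^2 = ((2:ℤ)^14 * ((2:ℤ)^M)^2) * ((-33744375 : ℤ) * (k:ℤ)^2) := by
        rw [hH2]; ring
      rw [h1]
      exact Dvd.dvd.mul_right hdvd0 _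
    exact (dvd_add t1 t2)
  have h315 : (2:ℤ)^(M+11) ∣ 315 * (((3027968 : ℤ) * ((2^M*k).choose 1 : ℤ) + (-219392000 : ℤ) * ((2^M*k).choose 2 : ℤ)) - 2*H*783360 - 4*H^2*0) := by
    have h2 : 2^4 * ((2:ℤ)^(M+11)) ∣ 2^4 * (315 * (((3027968 : ℤ) * ((2^M*k).choose 1 : ℤ) + (-219392000 : ℤ) * ((2^M*k).choose 2 : ℤ)) - 2*H*783360 - 4*H^2*0)) := by
      have hc : (2:ℤ)^4 * 2^(M+11) = 2^(M+15) := by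
        rw [← pow_add]
        congr 1
        omega
      rw [hc]
      calc (2:ℤ)^(M+15) ∣ 5040 * (((3027968 : ℤ) * ((2^M*k).choose 1 : ℤ) + (-219392000 : ℤ) * ((2^M*k).choose 2 : ℤ)) - 2*H*783360 - 4*H^2*0) := hbig
        _ = 2^4 * (315 * (((3027968 : ℤ) * ((2^M*k).choose 1 : ℤ) + (-219392000 : ℤ) * ((2^M*k).choose 2 : ℤ)) - 2*H*783360 - 4*H^2*0)) := by ring
    exact (mul_dvd_mul_iff_left (by norm_num : (2:ℤ)^4 ≠ 0)).mp h2
  have hcop : IsCoprime ((2:ℤ)^(M+11)) 315 := by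
    apply IsCoprime.pow_left
    rw [Int.isCoprime_iff_gcd_eq_one]
    norm_num
  exact hcop.dvd_of_dvd_mul_left h315

lemma Ylem6 (M k : ℕ) (hM : 4 ≤ M) :
    (2:ℤ)^(M+11) ∣ ((-219392000 : ℤ) * ((2^M*k).choose 1 : ℤ))
      - 2*((2^M*k : ℕ) : ℤ)*322560 - 4*((2^M*k : ℕ) : ℤ)^2*0 := by
  set H : ℤ := ((2^M*k : ℕ) : ℤ) with hH
  have hc1 : ((2^M*k).choose 1 : ℤ) = H := by rw [Nat.choose_one_right]
  have hexp : 5040 * (((-219392000 : ℤ) * ((2^M*k).choose 1 : ℤ)) - 2*H*322560 - 4*H^2*0) = (-1108987084800 : ℤ)*H := by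
    linear_combination (-1105735680000 : ℤ)*hc1
  have hH2 : H = 2^M * (k : ℤ) := by rw [hH]; push_cast; ring
  have hbig : (2:ℤ)^(M+15) ∣ 5040 * (((-219392000 : ℤ) * ((2^M*k).choose 1 : ℤ)) - 2*H*322560 - 4*H^2*0) := by
    rw [hexp]
    have t1 : (2:ℤ)^(M+15) ∣ (-1108987084800 : ℤ)*H := by
      have hpow : (2:ℤ)^19 * ((2:ℤ)^M)^1 = 2^(19+M*1) := by rw [← pow_mul, ← pow_add]
      have hdvd0 : (2:ℤ)^(M+15) ∣ (2:ℤ)^19 * ((2:ℤ)^M)^1 := by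
        rw [hpow]; exact pow_dvd_pow 2 (by omega)
      have h1 : (-1108987084800 : ℤ)*H = ((2:ℤ)^19 * ((2:ℤ)^M)^1) * ((-2115225 : ℤ) * (k:ℤ)) := by
        rw [hH2]; ring
      rw [h1]
      exact Dvd.dvd.mul_right hdvd0 _
    exact t1
  have h315 : (2:ℤ)^(M+11) ∣ 315 * (((-219392000 : ℤ) * ((2^M*k).choose 1 : ℤ)) - 2*H*322560 - 4*H^2*0) := by
    have h2 : 2^4 * ((2:ℤ)^(M+11)) ∣ 2^4 * (315 * (((-219392000 : ℤ) * ((2^M*k).choose 1 : ℤ)) - 2*H*322560 - 4*H^2*0)) := by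
      have hc : (2:ℤ)^4 * 2^(M+11) = 2^(M+15) := by
        rw [← pow_add]
        congr 1
        omega
      rw [hc]
      calc (2:ℤ)^(M+15) ∣ 5040 * (((-219392000 : ℤ) * ((2^M*k).choose 1 : ℤ)) - 2*H*322560 - 4*H^2*0) := hbig
        _ = 2^4 * (315 * (((-219392000 : ℤ) * ((2^M*k).choose 1 : ℤ)) - 2*H*322560 - 4*H^2*0)) := by ring
    exact (mul_dvd_mul_iff_left (by norm_num : (2:ℤ)^4 ≠ 0)).mp h2
  have hcop : IsCoprime ((2:ℤ)^(M+11)) 315 := by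
    apply IsCoprime.pow_left
    rw [Int.isCoprime_iff_gcd_eq_one]
    norm_num
  exact hcop.dvd_of_dvd_mul_left h315

lemma cancel2 (Mo v w : ℕ) (hw : Odd w) (X : ℤ)
    (hdvd : (2:ℤ)^(Mo+v) ∣ X * ((2^v * w : ℕ) : ℤ)) : (2:ℤ)^Mo ∣ X := by
  have h1 : (2:ℤ)^v * 2^Mo ∣ 2^v * (X * w) := by
    have e1 : (2:ℤ)^v * 2^Mo = 2^(Mo+v) := by rw [← pow_add]; congr 1; omega
    have e2 : (2:ℤ)^v * (X * w) = X * ((2^v * w : ℕ) : ℤ) := by push_cast; ring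
    rw [e1, e2]; exact hdvd
  have h2 : (2:ℤ)^Mo ∣ X * w :=
    (mul_dvd_mul_iff_left (pow_ne_zero v (two_ne_zero))).mp h1
  have hcop : IsCoprime ((2:ℤ)^Mo) (w:ℤ) := by
    apply IsCoprime.pow_left
    rw [Int.prime_two.coprime_iff_not_dvd]
    intro hdvd2
    have : Even (w:ℤ) := ⟨(w:ℤ)/2, by omega⟩
    rw [Int.even_coe_nat] at this
    exact (Nat.not_even_iff_odd.mpr hw) this
  exact hcop.dvd_of_dvd_mul_right h2

lemma term_dvd (M k : ℕ) (hk : 1 ≤ k) (X : ℤ) (s u : ℕ) (hu : 1 ≤ u)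
    (hs : (2:ℤ)^s ∣ X)
    (hcond : ∀ v w : ℕ, Odd w → u = 2^v * w → v + 11 ≤ s) :
    (2:ℤ)^(M+11) ∣ X * ((2^M*k).choose u : ℤ) := by
  obtain ⟨v, w, hwnd, hvw⟩ :=
    Nat.exists_eq_pow_mul_and_not_dvd (show u ≠ 0 by omega) 2 (by norm_num)
  have hwodd : Odd w := by
    rcases Nat.even_or_odd w with he | ho
    · exact absurd he.two_dvd hwnd
    · exact ho
  have hvs : v + 11 ≤ s := hcond v w hwodd hvw
  have hpos : 1 ≤ 2^M*k := Nat.mul_pos (Nat.pow_pos (by norm_num : 0 < 2)) hk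
  have hchid : (2^M*k).choose u * u = (2^M*k) * ((2^M*k-1).choose (u-1)) := by
    have h1 := Nat.add_one_mul_choose_eq (2^M*k-1) (u-1)
    have e1 : (2^M*k-1+1) = 2^M*k := by omega
    have e2 : (u-1+1) = u := by omega
    rw [e1, e2] at h1
    omega
  have hdvd1 : (2:ℤ)^(s+M) ∣ (X * ((2^M*k).choose u : ℤ)) * u := by
    have e3 : (X * ((2^M*k).choose u : ℤ)) * u
        = X * (((2^M*k).choose u * u : ℕ) : ℤ) := by push_cast; ring
    rw [e3, hchid]
    have e4 : X * (((2^M*k) * ((2^M*k-1).choose (u-1)) : ℕ) : ℤ)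
        = (X * (2:ℤ)^M) * ((k : ℤ) * ((2^M*k-1).choose (u-1) : ℤ)) := by push_cast; ring
    rw [e4]
    have e5 : (2:ℤ)^(s+M) = 2^s * 2^M := pow_add 2 s M
    rw [e5]
    exact Dvd.dvd.mul_right (mul_dvd_mul hs dvd_rfl) _
  apply cancel2 (M+11) v w hwodd
  have e6 : (X * ((2^M*k).choose u : ℤ)) * ((2^v * w : ℕ) : ℤ)
      = (X * ((2^M*k).choose u : ℤ)) * u := by rw [← hvw]
  rw [e6]
  exact dvd_trans (pow_dvd_pow 2 (by omega)) hdvd1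

lemma pow_gt : ∀ i, 14 ≤ i → i < 2^(i-10) := by
  intro i hi
  induction i, hi using Nat.le_induction with
  | base => norm_num
  | succ n hn ih =>
    have e1 : n+1-10 = (n-10)+1 := by omega
    rw [e1, pow_succ]
    have h2 : 1 ≤ 2^(n-10) := Nat.one_le_two_pow
    omega

/-- congruence for Euler numbers `E_{2^m k + b}` with `b` even,
`m ≥ 5`, modulo `2^(m+10)`. -/
theorem stmt_2 (E : ℕ → ℤ) (hE0 : E 0 = 1)
    (hEodd : ∀ n : ℕ, 1 ≤ n → E (2 * n - 1) = 0)
    (hEsum : ∀ n : ℕ, 1 ≤ n →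
      ∑ r ∈ Finset.range (n + 1), ((2 * n).choose (2 * r) : ℤ) * E (2 * r) = 0)
    (k m : ℕ) (hk : 0 < k) (hm : 5 ≤ m) (b : ℕ) (hb : 2 ∣ b) :
    E (2 ^ m * k + b) - E b ≡
      2 ^ m * k * (7 * (b : ℤ) ^ 6 - 6 * (b : ℤ) ^ 5 - 11 * (b : ℤ) ^ 4
        + 60 * (b : ℤ) ^ 3 - 13 * (b : ℤ) ^ 2 - 226 * (b : ℤ) + 501
        + 2 ^ m * k * ((b : ℤ) ^ 4 + 2 * (b : ℤ) ^ 3 + 2 * (b : ℤ) ^ 2 + 3 * (b : ℤ) + 15))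
      [ZMOD 2 ^ (m + 10)] := by
  obtain ⟨β, rfl⟩ := hb
  obtain ⟨M, rfl⟩ : ∃ M, m = M+1 := ⟨m-1, by omega⟩
  have hM : 4 ≤ M := by omega
  obtain ⟨hd1, hd2, hd3, hd4, hd5, hd6, hd7, hd8, hd9, hd10, hd11, hd12, hd13⟩ :=
    Dvals E hE0 hEsum
  have hidx : 2^(M+1)*k + 2*β = 2*(2^M*k+β) := by ring
  rw [hidx]
  have h16 : (16:ℕ) ≤ 2^M*k := by
    calc (16:ℕ) = 2^4*1 := by norm_num
    _ ≤ 2^M*k := Nat.mul_le_mul (Nat.pow_le_pow_right (by norm_num) hM) hk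
  have hvand : ∀ i : ℕ, ((2^M*k+β).choose i : ℤ) - (β.choose i : ℤ)
      = ∑ u ∈ range i, ((2^M*k).choose (u+1) : ℤ) * (β.choose (i-(u+1)) : ℤ) := by
    intro i
    have h1 := Nat.add_choose_eq (2^M*k) β i
    rw [Finset.Nat.sum_antidiagonal_eq_sum_range_succ
      (fun a b => (2^M*k).choose a * β.choose b) i] at h1
    rw [Finset.sum_range_succ'] at h1
    simp only [Nat.choose_zero_right, Nat.one_mul, Nat.sub_zero] at h1
    rw [h1]
    push_cast
    ring
  have hEdiff : E (2*(2^M*k+β)) - E (2*β)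
      = ∑ i ∈ range (2^M*k+β+1), Dd E i *
          (∑ u ∈ range i, ((2^M*k).choose (u+1) : ℤ) * (β.choose (i-(u+1)) : ℤ)) := by
    rw [newtonE E (2^M*k+β), newtonE E β]
    have hext : ∑ i ∈ range (β+1), Dd E i * (β.choose i : ℤ)
        = ∑ i ∈ range (2^M*k+β+1), Dd E i * (β.choose i : ℤ) := by
      apply Finset.sum_subset (Finset.range_subset_range.2 (by omega))
      intro x hx hnx
      simp only [Finset.mem_range, not_lt] at hx hnx
      rw [Nat.choose_eq_zero_of_lt (by omega)]
      push_cast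
      ring
    rw [hext, ← Finset.sum_sub_distrib]
    apply Finset.sum_congr rfl
    intro i _
    rw [← mul_sub, hvand i]
  have hsp : range (2^M*k+β+1) = range 8 ∪ Finset.Ico 8 (2^M*k+β+1) := by
    rw [Finset.range_eq_Ico, Finset.range_eq_Ico, Finset.Ico_union_Ico_eq_Ico] <;> omega
  have hdisj : Disjoint (range 8) (Finset.Ico 8 (2^M*k+β+1)) := by
    rw [Finset.range_eq_Ico]
    exact Finset.Ico_disjoint_Ico_consecutive 0 8 _
  have htail : (2:ℤ)^(M+11) ∣ ∑ i ∈ Finset.Ico 8 (2^M*k+β+1), Dd E i *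
      (∑ u ∈ range i, ((2^M*k).choose (u+1) : ℤ) * (β.choose (i-(u+1)) : ℤ)) := by
    apply Finset.dvd_sum
    intro i hi
    simp only [Finset.mem_Ico] at hi
    obtain ⟨hi1, _⟩ := hi
    rw [Finset.mul_sum]
    apply Finset.dvd_sum
    intro u hu
    simp only [Finset.mem_range] at hu
    have hre : Dd E i * (((2^M*k).choose (u+1) : ℤ) * (β.choose (i-(u+1)) : ℤ))
        = (Dd E i * (β.choose (i-(u+1)) : ℤ)) * ((2^M*k).choose (u+1) : ℤ) := by ring
    rw [hre]
    rcases le_or_gt i 13 with h13 | h13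
    · have hDdvd : (2:ℤ)^14 ∣ Dd E i := by
        interval_cases i
        · rw [hd8]; norm_num
        · rw [hd9]; norm_num
        · rw [hd10]; norm_num
        · rw [hd11]; norm_num
        · rw [hd12]; norm_num
        · rw [hd13]; norm_num
      apply term_dvd M k hk _ 14 (u+1) (by omega) (dvd_mul_of_dvd_left hDdvd _)
      intro v w hw hvw
      have hwpos : 1 ≤ w := hw.pos
      have h2v : 2^v ≤ u+1 := by
        calc 2^v ≤ 2^v * w := Nat.le_mul_of_pos_right _ hwpos
        _ = u+1 := hvw.symm
      have hv4 : v < 4 := by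
        by_contra hv
        have h16' : (16:ℕ) ≤ 2^v := by
          calc (16:ℕ) = 2^4 := by norm_num
          _ ≤ 2^v := Nat.pow_le_pow_right (by norm_num) (by omega)
        omega
      omega
    · have hDdvd : (2:ℤ)^i ∣ Dd E i := vD E hEsum i (by omega)
      apply term_dvd M k hk _ i (u+1) (by omega) (dvd_mul_of_dvd_left hDdvd _)
      intro v w hw hvw
      have hwpos : 1 ≤ w := hw.pos
      have h2v : 2^v ≤ u+1 := by
        calc 2^v ≤ 2^v * w := Nat.le_mul_of_pos_right _ hwpos
        _ = u+1 := hvw.symm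
      have hig := pow_gt i (by omega)
      have hvlt : v ≤ i-11 := by
        by_contra hv
        have : 2^(i-10) ≤ 2^v := Nat.pow_le_pow_right (by norm_num) (by omega)
        omega
      omega
  have hY0 := Ylem0 M k hM
  have hY1 := Ylem1 M k hM
  have hY2 := Ylem2 M k hM
  have hY3 := Ylem3 M k hM
  have hY4 := Ylem4 M k hM
  have hY5 := Ylem5 M k hM
  have hY6 := Ylem6 M k hM
  have r1 : ((β.choose 2 : ℕ) : ℤ) * 2 = ((β.choose 1 : ℕ) : ℤ) * ((β:ℤ) - 1) := hcast β 1
  have r3' : ((β.choose 3 : ℕ) : ℤ) * 3 = ((β.choose 2 : ℕ) : ℤ) * ((β:ℤ) - 2) := hcast β 2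
  have r4' : ((β.choose 4 : ℕ) : ℤ) * 4 = ((β.choose 3 : ℕ) : ℤ) * ((β:ℤ) - 3) := hcast β 3
  have r5' : ((β.choose 5 : ℕ) : ℤ) * 5 = ((β.choose 4 : ℕ) : ℤ) * ((β:ℤ) - 4) := hcast β 4
  have r6' : ((β.choose 6 : ℕ) : ℤ) * 6 = ((β.choose 5 : ℕ) : ℤ) * ((β:ℤ) - 5) := hcast β 5
  have bb1 : ((β.choose 1 : ℕ) : ℤ) = (β:ℤ) := by rw [Nat.choose_one_right]
  have g2 : ((β.choose 2 : ℕ) : ℤ) * 2 = (1 : ℤ)*(β:ℤ)^2 + (-1 : ℤ)*(β:ℤ) := by linear_combination r1 + ((β:ℤ)-1)*bb1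
  have g3 : ((β.choose 3 : ℕ) : ℤ) * 6 = (1 : ℤ)*(β:ℤ)^3 + (-3 : ℤ)*(β:ℤ)^2 + (2 : ℤ)*(β:ℤ) := by linear_combination ((β:ℤ)-2)*g2 + 2*r3'
  have g4 : ((β.choose 4 : ℕ) : ℤ) * 24 = (1 : ℤ)*(β:ℤ)^4 + (-6 : ℤ)*(β:ℤ)^3 + (11 : ℤ)*(β:ℤ)^2 + (-6 : ℤ)*(β:ℤ) := by linear_combination ((β:ℤ)-3)*g3 + 6*r4'
  have g5 : ((β.choose 5 : ℕ) : ℤ) * 120 = (1 : ℤ)*(β:ℤ)^5 + (-10 : ℤ)*(β:ℤ)^4 + (35 : ℤ)*(β:ℤ)^3 + (-50 : ℤ)*(β:ℤ)^2 + (24 : ℤ)*(β:ℤ) := by linear_combination ((β:ℤ)-4)*g4 + 24*r5'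
  have g6 : ((β.choose 6 : ℕ) : ℤ) * 720 = (1 : ℤ)*(β:ℤ)^6 + (-15 : ℤ)*(β:ℤ)^5 + (85 : ℤ)*(β:ℤ)^4 + (-225 : ℤ)*(β:ℤ)^3 + (274 : ℤ)*(β:ℤ)^2 + (-120 : ℤ)*(β:ℤ) := by linear_combination ((β:ℤ)-5)*g5 + 120*r6'
  have hexplicit : (2:ℤ)^(M+11) ∣ (∑ i ∈ range 8, Dd E i *
      (∑ u ∈ range i, ((2^M*k).choose (u+1) : ℤ) * (β.choose (i-(u+1)) : ℤ)))
      - 2 ^ (M+1) * k * (7 * ((2*β : ℕ) : ℤ) ^ 6 - 6 * ((2*β : ℕ) : ℤ) ^ 5 - 11 * ((2*β : ℕ) : ℤ) ^ 4 + 60 * ((2*β : ℕ) : ℤ) ^ 3 - 13 * ((2*β : ℕ) : ℤ) ^ 2 - 226 * ((2*β : ℕ) : ℤ) + 501 + 2 ^ (M+1) * k * (((2*β : ℕ) : ℤ) ^ 4 + 2 * ((2*β : ℕ) : ℤ) ^ 3 + 2 * ((2*β : ℕ) : ℤ) ^ 2 + 3 * ((2*β : ℕ) : ℤ) + 15)) :=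 by
    have hass : (∑ i ∈ range 8, Dd E i *
        (∑ u ∈ range i, ((2^M*k).choose (u+1) : ℤ) * (β.choose (i-(u+1)) : ℤ)))
        - 2 ^ (M+1) * k * (7 * ((2*β : ℕ) : ℤ) ^ 6 - 6 * ((2*β : ℕ) : ℤ) ^ 5 - 11 * ((2*β : ℕ) : ℤ) ^ 4 + 60 * ((2*β : ℕ) : ℤ) ^ 3 - 13 * ((2*β : ℕ) : ℤ) ^ 2 - 226 * ((2*β : ℕ) : ℤ) + 501 + 2 ^ (M+1) * k * (((2*β : ℕ) : ℤ) ^ 4 + 2 * ((2*β : ℕ) : ℤ) ^ 3 + 2 * ((2*β : ℕ) : ℤ) ^ 2 + 3 * ((2*β : ℕ) : ℤ) + 15))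
        = (1:ℤ) * (((-2 : ℤ) * ((2^M*k).choose 1 : ℤ) + (8 : ℤ) * ((2^M*k).choose 2 : ℤ) + (-80 : ℤ) * ((2^M*k).choose 3 : ℤ) + (1664 : ℤ) * ((2^M*k).choose 4 : ℤ) + (-58112 : ℤ) * ((2^M*k).choose 5 : ℤ) + (3027968 : ℤ) * ((2^M*k).choose 6 : ℤ) + (-219392000 : ℤ) * ((2^M*k).choose 7 : ℤ))
      - 2*((2^M*k : ℕ) : ℤ)*501 - 4*((2^M*k : ℕ) : ℤ)^2*15) + ((β:ℤ)) * (((8 : ℤ) * ((2^M*k).choose 1 : ℤ) + (-80 : ℤ) * ((2^M*k).choose 2 : ℤ) + (1664 : ℤ) * ((2^M*k).choose 3 : ℤ) + (-58112 : ℤ) * ((2^M*k).choose 4 : ℤ) + (3027968 : ℤ) * ((2^M*k).choose 5 : ℤ) + (-219392000 : ℤ) * ((2^M*k).choose 6 : ℤ))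
      - 2*((2^M*k : ℕ) : ℤ)*56 - 4*((2^M*k : ℕ) : ℤ)^2*46) + ((β.choose 2 : ℕ) : ℤ) * (((-80 : ℤ) * ((2^M*k).choose 1 : ℤ) + (1664 : ℤ) * ((2^M*k).choose 2 : ℤ) + (-58112 : ℤ) * ((2^M*k).choose 3 : ℤ) + (3027968 : ℤ) * ((2^M*k).choose 4 : ℤ) + (-219392000 : ℤ) * ((2^M*k).choose 5 : ℤ))
      - 2*((2^M*k : ℕ) : ℤ)*22328 - 4*((2^M*k : ℕ) : ℤ)^2*336) + ((β.choose 3 : ℕ) : ℤ) * (((1664 : ℤ) * ((2^M*k).choose 1 : ℤ) + (-58112 : ℤ) * ((2^M*k).choose 2 : ℤ) + (3027968 : ℤ) * ((2^M*k).choose 3 : ℤ) + (-219392000 : ℤ) * ((2^M*k).choose 4 : ℤ))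
      - 2*((2^M*k : ℕ) : ℤ)*209664 - 4*((2^M*k : ℕ) : ℤ)^2*672) + ((β.choose 4 : ℕ) : ℤ) * (((-58112 : ℤ) * ((2^M*k).choose 1 : ℤ) + (3027968 : ℤ) * ((2^M*k).choose 2 : ℤ) + (-219392000 : ℤ) * ((2^M*k).choose 3 : ℤ))
      - 2*((2^M*k : ℕ) : ℤ)*648576 - 4*((2^M*k : ℕ) : ℤ)^2*384) + ((β.choose 5 : ℕ) : ℤ) * (((3027968 : ℤ) * ((2^M*k).choose 1 : ℤ) + (-219392000 : ℤ) * ((2^M*k).choose 2 : ℤ))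
      - 2*((2^M*k : ℕ) : ℤ)*783360 - 4*((2^M*k : ℕ) : ℤ)^2*0) + ((β.choose 6 : ℕ) : ℤ) * (((-219392000 : ℤ) * ((2^M*k).choose 1 : ℤ))
      - 2*((2^M*k : ℕ) : ℤ)*322560 - 4*((2^M*k : ℕ) : ℤ)^2*0) := by
      simp only [Finset.sum_range_succ, Finset.sum_range_zero, Nat.reduceAdd, Nat.reduceSub,
        Nat.choose_zero_right, Nat.choose_one_right]
      rw [hd1, hd2, hd3, hd4, hd5, hd6, hd7]
      push_cast
      linear_combination (((2:ℤ)^(M+1)*(k:ℤ))*11164 + ((2:ℤ)^(M+1)*(k:ℤ))^2*168)*g2 + (((2:ℤ)^(M+1)*(k:ℤ))*34944 + ((2:ℤ)^(M+1)*(k:ℤ))^2*112)*g3 + (((2:ℤ)^(M+1)*(k:ℤ))*27024 + ((2:ℤ)^(M+1)*(k:ℤ))^2*16)*g4 + (((2:ℤ)^(M+1)*(k:ℤ))*6528)*g5 + (((2:ℤ)^(M+1)*(k:ℤ))*448)*g6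
    rw [hass]
    refine dvd_add (dvd_add (dvd_add (dvd_add (dvd_add (dvd_add ?_ ?_) ?_) ?_) ?_) ?_) ?_
    · exact Dvd.dvd.mul_left hY0 _
    · exact Dvd.dvd.mul_left hY1 _
    · exact Dvd.dvd.mul_left hY2 _
    · exact Dvd.dvd.mul_left hY3 _
    · exact Dvd.dvd.mul_left hY4 _
    · exact Dvd.dvd.mul_left hY5 _
    · exact Dvd.dvd.mul_left hY6 _
  have hfinal : (2:ℤ)^(M+11) ∣ (E (2*(2^M*k+β)) - E (2*β)) - 2 ^ (M+1) * k * (7 * ((2*β : ℕ) : ℤ) ^ 6 - 6 * ((2*β : ℕ) : ℤ) ^ 5 - 11 * ((2*β : ℕ) : ℤ) ^ 4 + 60 * ((2*β : ℕ) : ℤ) ^ 3 - 13 * ((2*β : ℕ) : ℤ) ^ 2 - 226 * ((2*β : ℕ) : ℤ) + 501 + 2 ^ (M+1) * k * (((2*β : ℕ) : ℤ) ^ 4 + 2 * ((2*β : ℕ) : ℤ) ^ 3 + 2 * ((2*β : ℕ) : ℤ) ^ 2 + 3 * ((2*β : ℕ) : ℤ) + 15)) := by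
    rw [hEdiff, hsp, Finset.sum_union hdisj]
    have h1 : (∑ i ∈ range 8, Dd E i *
        (∑ u ∈ range i, ((2^M*k).choose (u+1) : ℤ) * (β.choose (i-(u+1)) : ℤ)))
        + (∑ i ∈ Finset.Ico 8 (2^M*k+β+1), Dd E i *
        (∑ u ∈ range i, ((2^M*k).choose (u+1) : ℤ) * (β.choose (i-(u+1)) : ℤ)))
        - 2 ^ (M+1) * k * (7 * ((2*β : ℕ) : ℤ) ^ 6 - 6 * ((2*β : ℕ) : ℤ) ^ 5 - 11 * ((2*β : ℕ) : ℤ) ^ 4 + 60 * ((2*β : ℕ) : ℤ) ^ 3 - 13 * ((2*β : ℕ) : ℤ) ^ 2 - 226 * ((2*β : ℕ) : ℤ) + 501 + 2 ^ (M+1) * k * (((2*β : ℕ) : ℤ) ^ 4 + 2 * ((2*β : ℕ) : ℤ) ^ 3 + 2 * ((2*β : ℕ) : ℤ) ^ 2 + 3 * ((2*β : ℕ) : ℤ) + 15))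
        = ((∑ i ∈ range 8, Dd E i *
        (∑ u ∈ range i, ((2^M*k).choose (u+1) : ℤ) * (β.choose (i-(u+1)) : ℤ)))
        - 2 ^ (M+1) * k * (7 * ((2*β : ℕ) : ℤ) ^ 6 - 6 * ((2*β : ℕ) : ℤ) ^ 5 - 11 * ((2*β : ℕ) : ℤ) ^ 4 + 60 * ((2*β : ℕ) : ℤ) ^ 3 - 13 * ((2*β : ℕ) : ℤ) ^ 2 - 226 * ((2*β : ℕ) : ℤ) + 501 + 2 ^ (M+1) * k * (((2*β : ℕ) : ℤ) ^ 4 + 2 * ((2*β : ℕ) : ℤ) ^ 3 + 2 * ((2*β : ℕ) : ℤ) ^ 2 + 3 * ((2*β : ℕ) : ℤ) + 15)))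
        + (∑ i ∈ Finset.Ico 8 (2^M*k+β+1), Dd E i *
        (∑ u ∈ range i, ((2^M*k).choose (u+1) : ℤ) * (β.choose (i-(u+1)) : ℤ))) := by ring
    rw [h1]
    exact dvd_add hexplicit htail
  refine Int.modEq_iff_dvd.mpr ?_
  have hmod : (2:ℤ)^(M+1+10) = 2^(M+11) := by norm_num
  rw [hmod]
  have h2 : 2 ^ (M+1) * k * (7 * ((2*β : ℕ) : ℤ) ^ 6 - 6 * ((2*β : ℕ) : ℤ) ^ 5 - 11 * ((2*β : ℕ) : ℤ) ^ 4 + 60 * ((2*β : ℕ) : ℤ) ^ 3 - 13 * ((2*β : ℕ) : ℤ) ^ 2 - 226 * ((2*β : ℕ) : ℤ) + 501 + 2 ^ (M+1) * k * (((2*β : ℕ) : ℤ) ^ 4 + 2 * ((2*β : ℕ) : ℤ) ^ 3 + 2 * ((2*β : ℕ) : ℤ) ^ 2 + 3 * ((2*β : ℕ) : ℤ) + 15)) - (E (2*(2^M*k+β)) - E (2*β))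
      = -((E (2*(2^M*k+β)) - E (2*β)) - 2 ^ (M+1) * k * (7 * ((2*β : ℕ) : ℤ) ^ 6 - 6 * ((2*β : ℕ) : ℤ) ^ 5 - 11 * ((2*β : ℕ) : ℤ) ^ 4 + 60 * ((2*β : ℕ) : ℤ) ^ 3 - 13 * ((2*β : ℕ) : ℤ) ^ 2 - 226 * ((2*β : ℕ) : ℤ) + 501 + 2 ^ (M+1) * k * (((2*β : ℕ) : ℤ) ^ 4 + 2 * ((2*β : ℕ) : ℤ) ^ 3 + 2 * ((2*β : ℕ) : ℤ) ^ 2 + 3 * ((2*β : ℕ) : ℤ) + 15))) := by ring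
  rw [h2]
  exact dvd_neg.mpr hfinal
end

section
/- Let a be a nonzero integer, let k, m be positive integers, and let b be a nonnegative integer. Then E_{2^m k + b}^{(a)} - E_b^{(a)} ≡ 2^{m-1} k ∑_{r=1}^{8} C(2^{m-1}k - 1, r-1) ((-2)^r / r) A_r(a,b) (mod 2^{m + 13 + 9·ord_2(a)}), where the congruence is between rational numbers, meaning that the 2-adic valuation of the difference of the two sides is at least m + 13 + 9·ord_2(a). -/
open PowerSeries Finset

/-- A rational number is `p`-integral if `p` does not divide its denominator. -/
def PIntegral (p : ℕ) (q : ℚ) : Prop := ¬ p ∣ q.den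

noncomputable section
namespace Stmt8

def eps (c : ℚ) : ℚ⟦X⟧ := rescale c (exp ℚ)
def F (E : ℕ → ℤ) : ℚ⟦X⟧ := PowerSeries.mk fun n => (E n : ℚ) / n.factorial
def Z (E : ℕ → ℤ) : ℚ⟦X⟧ := F E * eps (-1)
def G (E : ℕ → ℤ) (s : ℕ) : ℚ⟦X⟧ := eps 1 * (Z E) ^ s
def P (h : ℚ⟦X⟧) : ℚ⟦X⟧ := h - d⁄dX ℚ (d⁄dX ℚ h)

lemma coeff_eps (c : ℚ) (n : ℕ) : coeff n (eps c) = c^n / n.factorial := by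
  rw [eps, coeff_rescale, coeff_exp]; simp [Algebra.algebraMap_self_apply]; ring
lemma eps_mul (x y : ℚ) : eps x * eps y = eps (x+y) := exp_mul_exp_eq_exp_add x y
lemma eps_zero : eps 0 = 1 := by
  ext n; rw [coeff_eps]
  cases n with
  | zero => simp
  | succ n => simp [coeff_one]
lemma deriv_eps (c : ℚ) : d⁄dX ℚ (eps c) = C c * eps c := by
  ext n
  rw [coeff_derivative, coeff_C_mul, coeff_eps, coeff_eps, Nat.factorial_succ]
  have h1 : ((n:ℚ)+1) ≠ 0 := by positivity
  have h2 : ((n.factorial :ℚ)) ≠ 0 := by exact_mod_cast n.factorial_ne_zero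
  push_cast
  field_simp
  ring
lemma deriv_C_mul (q : ℚ) (f : ℚ⟦X⟧) : d⁄dX ℚ (C q * f) = C q * d⁄dX ℚ f := by
  rw [Derivation.leibniz]; simp [smul_eq_mul]
lemma deriv_mul (f g : ℚ⟦X⟧) : d⁄dX ℚ (f * g) = f * d⁄dX ℚ g + g * d⁄dX ℚ f := by
  rw [Derivation.leibniz]; simp [smul_eq_mul]

variable (a : ℤ) (E : ℕ → ℤ)

lemma FcoshEq (hE : ∀ n : ℕ, ∑ i ∈ Finset.range (n / 2 + 1),
      (n.choose (2 * i) : ℤ) * a ^ (2 * i) * E (n - 2 * i) = (1 - a) ^ n) :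
    F E * (eps (a:ℚ) + eps (-(a:ℚ))) = C (2:ℚ) * eps (1 - (a:ℚ)) := by
  ext n
  rw [coeff_mul, Finset.Nat.sum_antidiagonal_eq_sum_range_succ_mk, coeff_C_mul, coeff_eps]
  have hq : ∑ i ∈ range (n/2+1), (n.choose (2*i) : ℚ) * (a:ℚ)^(2*i) * (E (n-2*i) : ℚ)
      = (1-(a:ℚ))^n := by have := hE n; push_cast [← this]; norm_cast
  simp only [F, coeff_mk, map_add, coeff_eps]
  set c : ℚ := (a : ℚ) with hc
  set g : ℕ → ℚ := fun i => (E i : ℚ) / i.factorial * (c^(n-i)/(n-i).factorial + (-c)^(n-i)/(n-i).factorial) with hg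
  show (range (n+1)).sum g = 2 * ((1-c)^n / n.factorial)
  have h1 : ∑ i ∈ (range (n+1)).filter (fun i => Even (n-i)), g i = ∑ i ∈ range (n+1), g i := by
    apply Finset.sum_filter_of_ne
    intro x _ hx
    by_contra hodd
    apply hx
    have : (-c)^(n-x) = -c^(n-x) := (Nat.not_even_iff_odd.mp hodd).neg_pow c
    rw [hg]; simp only []; rw [this]; ring
  rw [← h1]
  have h2 : ∑ i ∈ (range (n+1)).filter (fun i => Even (n-i)), g i
      = ∑ j ∈ range (n/2+1), g (n - 2*j) := by
    apply Finset.sum_nbij' (fun i => (n-i)/2) (fun j => n - 2*j)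
    · intro i hi
      simp only [mem_filter, mem_range] at hi ⊢
      omega
    · intro j hj
      simp only [mem_filter, mem_range] at hj ⊢
      constructor
      · omega
      · exact ⟨j, by omega⟩
    · intro i hi
      simp only [mem_filter, mem_range] at hi
      obtain ⟨_, e, he⟩ := hi
      omega
    · intro j hj
      simp only [mem_range] at hj
      omega
    · intro i hi
      simp only [mem_filter, mem_range] at hi
      obtain ⟨_, e, he⟩ := hi
      congr 1
      omega
  rw [h2]
  rw [← hq, Finset.sum_div, Finset.mul_sum]
  apply Finset.sum_congr rfl
  intro j hj
  simp only [mem_range] at hj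
  have h2j : 2*j ≤ n := by omega
  have hnn : n - (n - 2*j) = 2*j := by omega
  have heven : Even (n - (n - 2*j)) := ⟨j, by omega⟩
  rw [hg]
  simp only []
  rw [hnn]
  have hneg : (-c)^(2*j) = c^(2*j) := (Even.neg_pow ⟨j, by ring⟩ c)
  rw [hneg]
  have hfact : (n.choose (2*j) : ℚ) = (n.factorial : ℚ) / ((2*j).factorial * (n - 2*j).factorial) := by
    rw [eq_div_iff (by positivity)]
    rw [← mul_assoc]
    exact_mod_cast congrArg (Nat.cast (R := ℚ)) (Nat.choose_mul_factorial_mul_factorial h2j)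
  rw [hfact]
  have f1 : ((2*j).factorial : ℚ) ≠ 0 := by exact_mod_cast Nat.factorial_ne_zero _
  have f2 : ((n - 2*j).factorial : ℚ) ≠ 0 := by exact_mod_cast Nat.factorial_ne_zero _
  have f3 : ((n).factorial : ℚ) ≠ 0 := by exact_mod_cast Nat.factorial_ne_zero _
  field_simp
  ring


lemma unitU : IsUnit (eps (2*(a:ℚ)) + 1) := by
  apply isUnit_iff_constantCoeff.mpr
  have : constantCoeff (eps (2*(a:ℚ)) + 1) = 2 := by
    rw [map_add, map_one, ← coeff_zero_eq_constantCoeff_apply, coeff_eps]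
    norm_num
  rw [this]; exact isUnit_iff_ne_zero.mpr two_ne_zero

lemma FU (hF : F E * (eps (a:ℚ) + eps (-(a:ℚ))) = C (2:ℚ) * eps (1 - (a:ℚ))) :
    F E * (eps (2*(a:ℚ)) + 1) = C (2:ℚ) * eps 1 := by
  have h1 : (eps (a:ℚ) + eps (-(a:ℚ))) * eps (a:ℚ) = eps (2*(a:ℚ)) + 1 := by
    rw [add_mul, eps_mul, eps_mul, two_mul]
    norm_num [eps_zero]
  have h2 : eps (1 - (a:ℚ)) * eps (a:ℚ) = eps 1 := by rw [eps_mul]; norm_num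
  calc F E * (eps (2*(a:ℚ)) + 1) = (F E * (eps (a:ℚ) + eps (-(a:ℚ)))) * eps (a:ℚ) := by
        rw [mul_assoc, h1]
    _ = C (2:ℚ) * eps 1 := by rw [hF, mul_assoc, h2]

lemma ZU (hF : F E * (eps (2*(a:ℚ)) + 1) = C (2:ℚ) * eps 1) :
    Z E * (eps (2*(a:ℚ)) + 1) = C (2:ℚ) := by
  have : Z E * (eps (2*(a:ℚ)) + 1) = (F E * (eps (2*(a:ℚ)) + 1)) * eps (-1) := by
    rw [Z]; ring
  rw [this, hF, mul_assoc, eps_mul]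
  norm_num [eps_zero]

lemma DZ (hZ : Z E * (eps (2*(a:ℚ)) + 1) = C (2:ℚ)) :
    d⁄dX ℚ (Z E) = C (a:ℚ) * (Z E)^2 - 2 * C (a:ℚ) * Z E := by
  set U : ℚ⟦X⟧ := eps (2*(a:ℚ)) + 1 with hU
  have e2 : C (2*(a:ℚ)) = 2 * C (a:ℚ) := by rw [map_mul, map_ofNat]
  have h3 : Z E * eps (2*(a:ℚ)) = 2 - Z E := by
    have hZ' := hZ
    rw [map_ofNat] at hZ'
    linear_combination hZ'
  have hdU : d⁄dX ℚ U = (2 * C (a:ℚ)) * eps (2*(a:ℚ)) := by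
    rw [hU, map_add, deriv_eps, e2]
    simp
  have hder : Z E * ((2 * C (a:ℚ)) * eps (2*(a:ℚ))) + U * d⁄dX ℚ (Z E) = 0 := by
    have h0 : d⁄dX ℚ (Z E * U) = 0 := by rw [hZ]; simp
    rw [deriv_mul, hdU] at h0
    exact h0
  have hC2 : C (2:ℚ) = 2 := map_ofNat _ 2
  have key : (d⁄dX ℚ (Z E)) * U = (C (a:ℚ) * (Z E)^2 - 2 * C (a:ℚ) * Z E) * U := by
    rw [hC2] at hZ
    linear_combination hder - (2 * C (a:ℚ)) * h3 - (C (a:ℚ) * Z E - 2 * C (a:ℚ)) * hZ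
  exact (unitU a).mul_right_cancel key

lemma DG (hZ : Z E * (eps (2*(a:ℚ)) + 1) = C (2:ℚ)) (s : ℕ) :
    d⁄dX ℚ (G E s) = (1 - 2 * C (a:ℚ) * C (s:ℚ)) * G E s
      + C (a:ℚ) * C (s:ℚ) * G E (s+1) := by
  induction s with
  | zero =>
    simp only [G, pow_zero, mul_one, Nat.cast_zero, map_zero]
    rw [deriv_eps]
    have : C (1:ℚ) = 1 := map_one _
    rw [this]
    ring
  | succ s ih =>
    have hGs : G E (s+1) = G E s * Z E := by rw [G, G, pow_succ]; ring
    have hGs2 : G E (s+2) = G E s * Z E * Z E := by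
      rw [G, G, pow_succ, pow_succ]; ring
    have hcast : C ((s+1:ℕ):ℚ) = C (s:ℚ) + 1 := by
      push_cast
      rw [map_add, map_one]
    rw [hGs, deriv_mul, ih, DZ a E hZ, hcast]
    have hGs2' : G E (s+1+1) = G E s * Z E * Z E := by
      rw [show s+1+1 = s+2 from rfl, hGs2]
    rw [hGs2', hGs]
    ring

lemma PG (hZ : Z E * (eps (2*(a:ℚ)) + 1) = C (2:ℚ)) (s : ℕ) :
    P (G E s) = C (4*(a:ℚ)*s*(1-(a:ℚ)*s)) * G E s
      + C (2*(a:ℚ)*s*((a:ℚ)+2*(a:ℚ)*s-1)) * G E (s+1)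
      - C ((a:ℚ)^2*s*(s+1)) * G E (s+2) := by
  have hcast : C ((s+1:ℕ):ℚ) = C (s:ℚ) + 1 := by
    push_cast; rw [map_add, map_one]
  have e1 : C (4*(a:ℚ)*s*(1-(a:ℚ)*s)) =
      4 * C (a:ℚ) * C (s:ℚ) * (1 - C (a:ℚ) * C (s:ℚ)) := by
    rw [show (4*(a:ℚ)*s*(1-(a:ℚ)*s)) = 4*((a:ℚ)*(s:ℚ)) - 4*(((a:ℚ))^2*((s:ℚ))^2) by ring]
    simp only [map_sub, map_mul, map_pow, map_ofNat]
    ring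
  have e2 : C (2*(a:ℚ)*s*((a:ℚ)+2*(a:ℚ)*s-1)) =
      2 * C (a:ℚ) * C (s:ℚ) * (C (a:ℚ) + 2 * C (a:ℚ) * C (s:ℚ) - 1) := by
    rw [show (2*(a:ℚ)*s*((a:ℚ)+2*(a:ℚ)*s-1)) =
      2*((a:ℚ)^2*(s:ℚ)) + 4*((a:ℚ)^2*(s:ℚ)^2) - 2*((a:ℚ)*(s:ℚ)) by ring]
    simp only [map_sub, map_add, map_mul, map_pow, map_ofNat]
    ring
  have e3 : C ((a:ℚ)^2*s*(s+1)) =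
      C (a:ℚ)^2 * C (s:ℚ) * (C (s:ℚ) + 1) := by
    rw [show ((a:ℚ)^2*s*((s:ℚ)+1)) = (a:ℚ)^2*(s:ℚ)^2 + (a:ℚ)^2*(s:ℚ) by ring]
    simp only [map_add, map_mul, map_pow]
    ring
  rw [P, DG a E hZ s, map_add, deriv_mul, deriv_mul, DG a E hZ s, DG a E hZ (s+1), hcast,
    e1, e2, e3]
  have dc1 : d⁄dX ℚ ((1:ℚ⟦X⟧) - 2 * C (a:ℚ) * C (s:ℚ)) = 0 := by
    rw [show (1:ℚ⟦X⟧) - 2 * C (a:ℚ) * C (s:ℚ) = C (1 - 2*(a:ℚ)*(s:ℚ)) by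
      simp only [map_sub, map_mul, map_ofNat, map_one]]
    simp
  have dc2 : d⁄dX ℚ (C (a:ℚ) * C (s:ℚ)) = 0 := by
    rw [← map_mul]; simp
  rw [dc1, dc2]
  ring
def gam (a : ℤ) : ℕ → ℕ → ℤ
  | 0, s => if s = 1 then 1 else 0
  | r+1, s => 4*a*(s:ℤ)*(1-a*(s:ℤ)) * gam a r s
      + 4*a*((s-1 : ℕ) : ℤ)*(a*(2*((s-1:ℕ):ℤ)+1)-1) * gam a r (s-1)
      - 4*a^2*((s-2:ℕ):ℤ)*(((s-2:ℕ):ℤ)+1) * gam a r (s-2)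

def cc (a : ℤ) (r s : ℕ) : ℚ := 2 * (gam a r s : ℚ) / 2^s

def stayc (a : ℤ) (s : ℕ) : ℚ := 4*(a:ℚ)*s*(1-(a:ℚ)*s)
def up1c (a : ℤ) (s : ℕ) : ℚ := 2*(a:ℚ)*s*((a:ℚ)+2*(a:ℚ)*s-1)
def up2c (a : ℤ) (s : ℕ) : ℚ := (a:ℚ)^2*s*(s+1)


lemma gam_s_zero (r : ℕ) : gam a r 0 = 0 := by
  induction r with
  | zero => simp [gam]
  | succ r ih => simp [gam, ih]

lemma gam_vanish : ∀ r s, 2*r+1 < s → gam a r s = 0 := by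
  intro r
  induction r with
  | zero => intro s hs; simp [gam]; omega
  | succ r ih =>
    intro s hs
    have h1 : gam a r s = 0 := ih s (by omega)
    have h2 : gam a r (s-1) = 0 := ih (s-1) (by omega)
    have h3 : gam a r (s-2) = 0 := ih (s-2) (by omega)
    simp [gam, h1, h2, h3]

lemma cc_s_zero (r : ℕ) : cc a r 0 = 0 := by simp [cc, gam_s_zero]

lemma cc_vanish (r s : ℕ) (h : 2*r+1 < s) : cc a r s = 0 := by
  simp [cc, gam_vanish a r s h]

lemma ccrec (r s : ℕ) :
    cc a (r+1) s = cc a r s * stayc a s + cc a r (s-1) * up1c a (s-1)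
      - cc a r (s-2) * up2c a (s-2) := by
  match s with
  | 0 =>
    simp [cc, gam, gam_s_zero, stayc, up1c, up2c]
  | 1 =>
    have hg : gam a (r+1) 1 = 4*a*(1-a) * gam a r 1 := by
      simp [gam, gam_s_zero]
    show cc a (r+1) 1 = cc a r 1 * stayc a 1 + cc a r 0 * up1c a 0 - cc a r 0 * up2c a 0
    rw [cc, hg, cc]
    simp [gam_s_zero, stayc, up1c, up2c]
    push_cast
    ring
  | (t+2) =>
    have hg : (gam a (r+1) (t+2) : ℚ) =
        4*(a:ℚ)*(t+2)*(1-(a:ℚ)*(t+2)) * (gam a r (t+2) : ℚ)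
        + 4*(a:ℚ)*(t+1)*((a:ℚ)*(2*(t+1)+1)-1) * (gam a r (t+1) : ℚ)
        - 4*(a:ℚ)^2*(t:ℚ)*((t:ℚ)+1) * (gam a r t : ℚ) := by
      rw [gam]
      have e1 : ((t+2-1 : ℕ) : ℤ) = (t:ℤ)+1 := by omega
      have e2 : ((t+2-2 : ℕ) : ℤ) = (t:ℤ) := by omega
      have e3 : (t+2-1 : ℕ) = t+1 := by omega
      have e4 : (t+2-2 : ℕ) = t := by omega
      rw [e3, e4] at *
      push_cast
      ring
    have e3 : (t+2-1 : ℕ) = t+1 := by omega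
    have e4 : (t+2-2 : ℕ) = t := by omega
    rw [cc, hg, e3, e4]
    rw [cc, cc, cc, stayc, up1c, up2c]
    have h2 : (2:ℚ)^t ≠ 0 := by positivity
    push_cast
    field_simp
    ring

lemma P_add (x y : ℚ⟦X⟧) : P (x + y) = P x + P y := by
  simp [P, map_add]; ring

lemma P_Cmul (q : ℚ) (x : ℚ⟦X⟧) : P (C q * x) = C q * P x := by
  simp [P, deriv_C_mul]; ring

lemma P_sum {ι : Type*} (t : Finset ι) (f : ι → ℚ⟦X⟧) : P (∑ i ∈ t, f i) = ∑ i ∈ t, P (f i) := by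
  classical
  induction t using Finset.induction_on with
  | empty => simp [P]
  | insert _ _ h ih => rw [Finset.sum_insert h, Finset.sum_insert h, P_add, ih]

lemma shift1 (K : ℕ) (f : ℕ → ℚ) (hf0 : f 0 = 0) (GG : ℕ → ℚ⟦X⟧) :
    ∑ s ∈ range (K+1), C (f (s-1)) * GG s = ∑ s ∈ range K, C (f s) * GG (s+1) := by
  rw [Finset.sum_range_succ']
  simp only [Nat.succ_sub_one, Nat.zero_sub, hf0, map_zero, zero_mul, add_zero]

lemma G_one_eq_F : G E 1 = F E := by
  rw [G, pow_one, Z, ← mul_assoc, mul_comm (eps 1), mul_assoc, eps_mul]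
  norm_num [eps_zero]

theorem PiterF (hZ : Z E * (eps (2*(a:ℚ)) + 1) = C (2:ℚ)) (r : ℕ) :
    P^[r] (F E) = ∑ s ∈ range (2*r+2), C (cc a r s) * G E s := by
  induction r with
  | zero =>
    simp only [Function.iterate_zero, id_eq]
    rw [show 2*0+2 = 2 from rfl]
    rw [Finset.sum_range_succ, Finset.sum_range_one]
    have h0 : cc a 0 0 = 0 := cc_s_zero a 0
    have h1 : cc a 0 1 = 1 := by simp [cc, gam]
    rw [h0, h1, map_zero, map_one, zero_mul, one_mul, zero_add, G_one_eq_F]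
  | succ r ih =>
    rw [Function.iterate_succ_apply', ih, P_sum]
    have hPG : ∀ s ∈ range (2*r+2), P (C (cc a r s) * G E s)
        = C (cc a r s * stayc a s) * G E s
          + C (cc a r s * up1c a s) * G E (s+1)
          - C (cc a r s * up2c a s) * G E (s+2) := by
      intro s _
      rw [P_Cmul, PG a E hZ s]
      simp only [map_mul, stayc, up1c, up2c]
      ring
    rw [Finset.sum_congr rfl hPG]
    rw [Finset.sum_sub_distrib, Finset.sum_add_distrib]
    have hA : ∑ s ∈ range (2*(r+1)+2), C (cc a r s * stayc a s) * G E s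
        = ∑ s ∈ range (2*r+2), C (cc a r s * stayc a s) * G E s := by
      rw [show 2*(r+1)+2 = (2*r+2)+1+1 by ring, Finset.sum_range_succ, Finset.sum_range_succ,
        cc_vanish a r (2*r+2+1) (by omega), cc_vanish a r (2*r+2) (by omega)]
      simp
    have hB : ∑ s ∈ range (2*(r+1)+2), C (cc a r (s-1) * up1c a (s-1)) * G E s
        = ∑ s ∈ range (2*r+2), C (cc a r s * up1c a s) * G E (s+1) := by
      rw [show 2*(r+1)+2 = (2*r+2+1)+1 by ring, Finset.sum_range_succ,
        show (2*r+2+1)-1 = 2*r+2 by omega, cc_vanish a r (2*r+2) (by omega)]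
      rw [shift1 (2*r+2) (fun t => cc a r t * up1c a t) (by simp [cc_s_zero]) (G E)]
      simp
    have hC : ∑ s ∈ range (2*(r+1)+2), C (cc a r (s-1-1) * up2c a (s-1-1)) * G E s
        = ∑ s ∈ range (2*r+2), C (cc a r s * up2c a s) * G E (s+2) := by
      rw [show 2*(r+1)+2 = (2*r+2+1)+1 by ring]
      rw [shift1 (2*r+2+1) (fun t => cc a r (t-1) * up2c a (t-1))
        (by simp [cc_s_zero]) (G E)]
      rw [shift1 (2*r+2) (fun t => cc a r t * up2c a t) (by simp [cc_s_zero])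
        (fun s => G E (s+1))]
    rw [← hA, ← hB, ← hC, ← Finset.sum_add_distrib, ← Finset.sum_sub_distrib]
    apply Finset.sum_congr rfl
    intro s _
    have e : s - 1 - 1 = s - 2 := by omega
    rw [e, ccrec a r s, map_sub, map_add]
    ring

def dseq (E : ℕ → ℤ) (r b : ℕ) : ℤ :=
  ∑ i ∈ range (r+1), (r.choose i : ℤ) * (-1)^i * E (2*i + b)

lemma dseq_zero (b : ℕ) : dseq E 0 b = E b := by simp [dseq]

lemma dseq_succ (r b : ℕ) : dseq E (r+1) b = dseq E r b - dseq E r (b+2) := by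
  have h1 : dseq E (r+1) b
      = ∑ i ∈ range (r+1), ((r+1).choose (i+1) : ℤ) * (-1)^(i+1) * E (2*(i+1)+b) + E b := by
    rw [dseq, Finset.sum_range_succ' (fun i => (((r+1).choose i : ℤ)) * (-1)^i * E (2*i + b)) (r+1)]
    norm_num
  have h2 : ∀ i, (((r+1).choose (i+1) : ℤ)) * (-1)^(i+1) * E (2*(i+1)+b)
      = -((r.choose i : ℤ) * (-1)^i * E (2*i+(b+2))) - (r.choose (i+1) : ℤ) * (-1)^i * E (2*(i+1)+b) := by
    intro i
    rw [Nat.choose_succ_succ']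
    have : 2*(i+1)+b = 2*i+(b+2) := by ring
    rw [this]
    push_cast
    ring
  have h3 : ∑ i ∈ range (r+1), ((r.choose (i+1) : ℤ)) * (-1)^(i+1) * E (2*(i+1)+b)
      = dseq E r b - E b := by
    rw [dseq, Finset.sum_range_succ' (fun i => ((r.choose i : ℤ)) * (-1)^i * E (2*i + b)) r]
    rw [Finset.sum_range_succ]
    simp [Nat.choose_succ_self]
  have h4 : ∑ i ∈ range (r+1), ((r.choose (i+1) : ℤ)) * (-1)^i * E (2*(i+1)+b)
      = -(dseq E r b - E b) := by
    rw [← h3, ← Finset.sum_neg_distrib]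
    apply Finset.sum_congr rfl
    intro i _
    ring
  rw [h1, Finset.sum_congr rfl (fun i _ => h2 i), Finset.sum_sub_distrib,
    Finset.sum_neg_distrib, h4]
  simp only [dseq]
  ring

lemma dseq_coeff (r : ℕ) : ∀ b : ℕ,
    (dseq E r b : ℚ) = (b.factorial : ℚ) * coeff b (P^[r] (F E)) := by
  induction r with
  | zero =>
    intro b
    simp only [Function.iterate_zero, id_eq, dseq_zero, F, coeff_mk]
    have : ((b.factorial : ℚ)) ≠ 0 := by exact_mod_cast b.factorial_ne_zero
    field_simp
  | succ r ih =>
    intro b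
    rw [Function.iterate_succ_apply', dseq_succ, P, map_sub, coeff_derivative, coeff_derivative]
    push_cast
    rw [ih b, ih (b+2)]
    have e : ((b+2).factorial : ℚ) = (b.factorial : ℚ) * ((b:ℚ)+1) * ((b:ℚ)+2) := by
      rw [show b+2 = (b+1)+1 from rfl, Nat.factorial_succ, Nat.factorial_succ]
      push_cast
      ring
    rw [e]
    ring

def IntH (f : ℚ⟦X⟧) : Prop := ∀ n : ℕ, ∃ w : ℤ, (n.factorial : ℚ) * coeff n f = (w : ℚ)

lemma IntH_F : IntH (F E) := by
  intro n
  refine ⟨E n, ?_⟩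
  simp only [F, coeff_mk]
  have : ((n.factorial : ℚ)) ≠ 0 := by exact_mod_cast n.factorial_ne_zero
  field_simp

lemma IntH_eps (z : ℤ) : IntH (eps (z:ℚ)) := by
  intro n
  refine ⟨z^n, ?_⟩
  rw [coeff_eps]
  have : ((n.factorial : ℚ)) ≠ 0 := by exact_mod_cast n.factorial_ne_zero
  field_simp
  norm_cast

lemma IntH_mul {f g : ℚ⟦X⟧} (hf : IntH f) (hg : IntH g) : IntH (f * g) := by
  choose wf hwf using hf
  choose wg hwg using hg
  intro n
  refine ⟨∑ i ∈ range (n+1), (n.choose i : ℤ) * wf i * wg (n-i), ?_⟩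
  rw [coeff_mul, Finset.Nat.sum_antidiagonal_eq_sum_range_succ_mk, Finset.mul_sum]
  push_cast
  apply Finset.sum_congr rfl
  intro i hi
  simp only [mem_range] at hi
  have hin : i ≤ n := by omega
  have hfac : (n.factorial : ℚ) = (n.choose i : ℚ) * (i.factorial : ℚ) * ((n-i).factorial : ℚ) := by
    exact_mod_cast congrArg (Nat.cast (R := ℚ)) (Nat.choose_mul_factorial_mul_factorial hin).symm
  rw [hfac]
  have h1 := hwf i
  have h2 := hwg (n-i)
  calc (n.choose i : ℚ) * (i.factorial : ℚ) * ((n-i).factorial : ℚ) * (coeff i f * coeff (n-i) g)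
      = (n.choose i : ℚ) * (((i.factorial : ℚ) * coeff i f) * (((n-i).factorial : ℚ) * coeff (n-i) g)) := by ring
    _ = (n.choose i : ℚ) * ((wf i : ℚ) * (wg (n-i) : ℚ)) := by rw [h1, h2]
    _ = (n.choose i : ℚ) * (wf i : ℚ) * (wg (n-i) : ℚ) := by ring

lemma IntH_G (s : ℕ) : IntH (G E s) := by
  rw [G]
  have hz : IntH (Z E) := by
    rw [Z]
    exact IntH_mul (IntH_F E) (by simpa using IntH_eps (-1))
  have hpow : ∀ t, IntH ((Z E)^t) := by
    intro t
    induction t with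
    | zero =>
      intro n
      refine ⟨if n = 0 then 1 else 0, ?_⟩
      rcases eq_or_ne n 0 with h | h <;> simp [h, coeff_one]
    | succ t ih => rw [pow_succ]; exact IntH_mul ih hz
  exact IntH_mul (by simpa using IntH_eps 1) (hpow s)

/-- divisor bound for `gam` -/
lemma gam_dvd : ∀ r s : ℕ,
    (2:ℤ)^(2*r) * a^r * 2^(padicValNat 2 (Nat.factorial (s-1))) ∣ gam a r s := by
  intro r
  induction r with
  | zero =>
    intro s
    by_cases h : s = 1
    · subst h
      simp [gam, padicValNat.one]
    · simp [gam, h]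
  | succ r ih =>
    intro s
    have e1 : (2:ℤ)^(2*(r+1)) = 2^(2*r)*4 := by
      rw [show 2*(r+1) = 2*r+2 by ring, pow_add]; norm_num
    have h1 : (2:ℤ)^(2*(r+1)) * a^(r+1) * 2^(padicValNat 2 (Nat.factorial (s-1)))
        ∣ 4*a*(s:ℤ)*(1-a*(s:ℤ)) * gam a r s := by
      obtain ⟨g, hg⟩ := ih s
      exact ⟨(s:ℤ)*(1-a*(s:ℤ))*g, by rw [hg, e1]; ring⟩
    have h2 : (2:ℤ)^(2*(r+1)) * a^(r+1) * 2^(padicValNat 2 (Nat.factorial (s-1)))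
        ∣ 4*a*((s-1 : ℕ) : ℤ)*(a*(2*((s-1:ℕ):ℤ)+1)-1) * gam a r (s-1) := by
      match s with
      | 0 => simp
      | 1 => simp
      | (t+2) =>
        have es : (t+2) - 1 = t+1 := by omega
        rw [es]
        have hsplit : padicValNat 2 (Nat.factorial (t+1))
            = padicValNat 2 (t+1) + padicValNat 2 (Nat.factorial t) := by
          rw [Nat.factorial_succ, padicValNat.mul (Nat.succ_ne_zero t) (Nat.factorial_ne_zero t)]
        obtain ⟨g, hg⟩ := ih (t+1)
        rw [show (t+1) - 1 = t by omega] at hg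
        obtain ⟨u₁, hu⟩ := pow_padicValNat_dvd (p := 2) (n := t+1)
        have hu' : ((t+1 : ℕ):ℤ) = 2^(padicValNat 2 (t+1)) * (u₁:ℤ) := by exact_mod_cast hu
        refine ⟨(u₁:ℤ)*(a*(2*((t+1:ℕ):ℤ)+1)-1)*g, ?_⟩
        rw [hg, e1, hsplit, pow_add]
        rw [show ((t+1:ℕ):ℤ) = 2^(padicValNat 2 (t+1)) * (u₁:ℤ) from hu']
        push_cast
        ring
    have h3 : (2:ℤ)^(2*(r+1)) * a^(r+1) * 2^(padicValNat 2 (Nat.factorial (s-1)))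
        ∣ 4*a^2*((s-2:ℕ):ℤ)*(((s-2:ℕ):ℤ)+1) * gam a r (s-2) := by
      match s with
      | 0 => simp
      | 1 => simp
      | 2 => simp
      | (t+3) =>
        have es2 : (t+3) - 2 = t+1 := by omega
        have es1 : (t+3) - 1 = t+2 := by omega
        rw [es2, es1]
        have hsplit : padicValNat 2 (Nat.factorial (t+2))
            = padicValNat 2 (t+2) + (padicValNat 2 (t+1) + padicValNat 2 (Nat.factorial t)) := by
          rw [show Nat.factorial (t+2) = (t+2) * Nat.factorial (t+1) from rfl,
            padicValNat.mul (by omega) (Nat.factorial_ne_zero (t+1)),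
            Nat.factorial_succ, padicValNat.mul (Nat.succ_ne_zero t) (Nat.factorial_ne_zero t)]
        obtain ⟨g, hg⟩ := ih (t+1)
        rw [show (t+1) - 1 = t by omega] at hg
        obtain ⟨u₁, hu⟩ := pow_padicValNat_dvd (p := 2) (n := t+1)
        have hu' : ((t+1 : ℕ):ℤ) = 2^(padicValNat 2 (t+1)) * (u₁:ℤ) := by exact_mod_cast hu
        obtain ⟨v₁, hv⟩ := pow_padicValNat_dvd (p := 2) (n := t+2)
        have hv' : ((t+2 : ℕ):ℤ) = 2^(padicValNat 2 (t+2)) * (v₁:ℤ) := by exact_mod_cast hv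
        refine ⟨a*(u₁:ℤ)*(v₁:ℤ)*g, ?_⟩
        have hcast : (((t+1:ℕ)):ℤ)+1 = ((t+2:ℕ):ℤ) := by push_cast; ring
        rw [hcast, hg, e1, hsplit, pow_add, pow_add, hu', hv']
        push_cast
        ring
    rw [show gam a (r+1) s = 4*a*(s:ℤ)*(1-a*(s:ℤ)) * gam a r s
      + 4*a*((s-1 : ℕ) : ℤ)*(a*(2*((s-1:ℕ):ℤ)+1)-1) * gam a r (s-1)
      - 4*a^2*((s-2:ℕ):ℤ)*(((s-2:ℕ):ℤ)+1) * gam a r (s-2) from rfl]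
    exact dvd_sub (dvd_add h1 h2) h3

lemma two_pow_digitsum_le : ∀ t : ℕ, 2^((Nat.digits 2 t).sum) ≤ t + 1 := by
  intro t
  induction t using Nat.strong_induction_on with
  | _ t ih =>
    rcases Nat.eq_zero_or_pos t with h | h
    · subst h; simp
    · rw [Nat.digits_def' (by norm_num : (1:ℕ) < 2) h, List.sum_cons, pow_add]
      have ih2 := ih (t/2) (by omega)
      rcases Nat.mod_two_eq_zero_or_one t with h2 | h2 <;> rw [h2]
      · rw [pow_zero]
        omega
      · rw [pow_one]
        omega

lemma pv_fact_eq (t : ℕ) :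
    padicValNat 2 (Nat.factorial t) = t - (Nat.digits 2 t).sum := by
  have := sub_one_mul_padicValNat_factorial (p := 2) t
  simpa using this

lemma digitsum_le_self (t : ℕ) : (Nat.digits 2 t).sum ≤ t := Nat.digit_sum_le 2 t

lemma aux_pow : ∀ j : ℕ, 10 ≤ j → 2*j + 13 < 2^j := by
  intro j hj
  induction j, hj using Nat.le_induction with
  | base => norm_num
  | succ j hj ih =>
    have : 2^(j+1) = 2*2^j := by rw [pow_succ]; ring
    omega

lemma ka (r : ℕ) (hr : 9 ≤ r) (t : ℕ) (ht : t ≤ 2*r) :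
    (Nat.digits 2 t).sum + padicValNat 2 r + 14 ≤ 2*r := by
  set d := (Nat.digits 2 t).sum with hd
  set ρ := padicValNat 2 r with hρ
  have h2d : 2^d ≤ 2*r + 1 := le_trans (two_pow_digitsum_le t) (by omega)
  have h2ρ : 2^ρ ≤ r := Nat.le_of_dvd (by omega) pow_padicValNat_dvd
  rcases le_or_gt r 15 with hr15 | hr16
  · -- small cases
    have hd4 : d ≤ 4 := by
      by_contra hcon
      have : (2:ℕ)^5 ≤ 2^d := Nat.pow_le_pow_right (by norm_num) (by omega)
      omega
    rcases eq_or_ne r 9 with h9 | h9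
    · have : ρ = 0 := by
        rw [hρ, h9]
        exact padicValNat.eq_zero_of_not_dvd (by decide)
      omega
    rcases eq_or_ne r 10 with h10 | h10
    · have : ρ ≤ 1 := by
        by_contra hcon
        have hdvd : (2:ℕ)^ρ ∣ r := pow_padicValNat_dvd
        have : (2:ℕ)^2 ∣ r := dvd_trans (pow_dvd_pow 2 (by omega)) hdvd
        rw [h10] at this
        norm_num at this
      omega
    · have hρ3 : ρ ≤ 3 := by
        by_contra hcon
        have : (2:ℕ)^4 ≤ 2^ρ := Nat.pow_le_pow_right (by norm_num) (by omega)
        omega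
      omega
  · -- large case
    have hb : ∀ x : ℕ, 2^x ≤ 2*r+1 → x + 7 ≤ r := by
      intro x hx
      by_contra hcon
      have hx10 : 10 ≤ x := by omega
      have := aux_pow x hx10
      have h2 : 2*r + 13 < 2^x + 12 := by
        calc 2*r+13 ≤ 2*x + 13 + 12 := by omega
          _ < 2^x + 12 := by omega
      omega
    have hd7 : d + 7 ≤ r := hb d h2d
    have hρ7 : ρ + 7 ≤ r := hb ρ (by omega)
    omega

lemma choose_dvd (Nn r mm : ℕ) (hN : 2^mm ∣ Nn) (hN1 : 1 ≤ Nn) (hr : 1 ≤ r) :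
    (2:ℕ)^(mm - padicValNat 2 r) ∣ Nn.choose r := by
  set ρ := padicValNat 2 r with hρ
  rcases le_or_gt mm ρ with h | h
  · rw [Nat.sub_eq_zero_of_le h, pow_zero]
    exact one_dvd _
  · have key : Nn * (Nn-1).choose (r-1) = Nn.choose r * r := by
      have := Nat.add_one_mul_choose_eq (Nn-1) (r-1)
      rw [Nat.sub_add_cancel hN1] at this
      have e1 : r-1+1 = r := by omega
      rw [e1] at this
      exact this
    have hdvd : 2^mm ∣ Nn.choose r * r := key ▸ Dvd.dvd.mul_right hN _
    set u := r / 2^ρ with hu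
    have hru : r = 2^ρ * u := by
      rw [hu, Nat.mul_div_cancel' pow_padicValNat_dvd]
    have hodd : ¬ 2 ∣ u := by
      intro hcon
      obtain ⟨v, hv⟩ := hcon
      have : 2^(ρ+1) ∣ r := by
        rw [hru, hv, pow_succ]
        exact ⟨v, by ring⟩
      have hnot : ¬ 2^(ρ+1) ∣ r := pow_succ_padicValNat_not_dvd (by omega)
      exact hnot this
    have hmm : mm = (mm - ρ) + ρ := by omega
    rw [hmm, pow_add] at hdvd
    have hmul : Nn.choose r * r = (Nn.choose r * u) * 2^ρ := by
      calc Nn.choose r * r = Nn.choose r * (2^ρ * u) := by rw [← hru]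
        _ = (Nn.choose r * u) * 2^ρ := by ring
    rw [hmul] at hdvd
    have hdvd3 : 2^(mm-ρ) ∣ Nn.choose r * u :=
      (Nat.mul_dvd_mul_iff_right (Nat.pow_pos (n := ρ) (by norm_num))).mp hdvd
    have hcop : Nat.Coprime (2^(mm-ρ)) u :=
      Nat.Coprime.pow_left _ ((Nat.Prime.coprime_iff_not_dvd Nat.prime_two).mpr hodd)
    exact hcop.dvd_of_dvd_mul_right hdvd3

lemma Nmulchoose (Nn r : ℕ) (hN1 : 1 ≤ Nn) (hr : 1 ≤ r) :
    Nn * (Nn-1).choose (r-1) = Nn.choose r * r := by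
  have h := Nat.add_one_mul_choose_eq (Nn-1) (r-1)
  rw [Nat.sub_add_cancel hN1] at h
  have e1 : r-1+1 = r := by omega
  rw [e1] at h
  exact h

lemma euler_expand : ∀ (N : ℕ) (b : ℕ),
    (E (2*N + b) : ℤ) = ∑ r ∈ range (N+1), (-1)^r * (N.choose r : ℤ) * dseq E r b := by
  intro N
  induction N with
  | zero =>
    intro b
    rw [show 2*0+b = b by ring]
    simp [dseq_zero]
  | succ N ih =>
    intro b
    have key : ∑ r ∈ range (N+2), (-1)^r * ((N+1).choose r : ℤ) * dseq E r b
        = ∑ r ∈ range (N+1), (-1)^r * (N.choose r : ℤ) * dseq E r (b+2) := by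
      rw [Finset.sum_range_succ'
        (fun r => (-1)^r * (((N+1).choose r : ℤ)) * dseq E r b) (N+1)]
      have h2 : ∀ r, (-1)^(r+1) * (((N+1).choose (r+1) : ℤ)) * dseq E (r+1) b
          = (-1)^(r+1) * ((N.choose r : ℤ)) * dseq E (r+1) b
            + (-1)^(r+1) * ((N.choose (r+1) : ℤ)) * dseq E (r+1) b := by
        intro r
        rw [Nat.choose_succ_succ]
        push_cast
        ring
      rw [Finset.sum_congr rfl (fun r _ => h2 r), Finset.sum_add_distrib]
      have h3 : ∑ r ∈ range (N+1), (-1)^(r+1) * ((N.choose (r+1) : ℤ)) * dseq E (r+1) b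
          = ∑ r ∈ range (N+1), (-1)^r * ((N.choose r : ℤ)) * dseq E r b
            - ((N.choose 0 : ℤ)) * dseq E 0 b := by
        have hA := Finset.sum_range_succ' (fun r => (-1)^r * ((N.choose r : ℤ)) * dseq E r b) (N+1)
        have hB := Finset.sum_range_succ (fun r => (-1)^r * ((N.choose r : ℤ)) * dseq E r b) (N+1)
        rw [hB, Nat.choose_succ_self] at hA
        simp only [Nat.cast_zero, mul_zero, zero_mul, add_zero, pow_zero, Nat.choose_zero_right,
          Nat.cast_one, one_mul] at hA
        simp only [pow_zero, Nat.choose_zero_right, Nat.cast_one, one_mul] at hA ⊢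
        linarith [hA]
      rw [h3]
      have h4 : ∀ r ∈ range (N+1), (-1)^(r+1) * ((N.choose r : ℤ)) * dseq E (r+1) b
          = (-1)^r * ((N.choose r : ℤ)) * dseq E r (b+2)
            - (-1)^r * ((N.choose r : ℤ)) * dseq E r b := by
        intro r _
        rw [dseq_succ]
        ring
      rw [Finset.sum_congr rfl h4, Finset.sum_sub_distrib]
      simp only [pow_zero, Nat.choose_zero_right, Nat.cast_one, one_mul, dseq_zero]
      ring
    rw [key, ← ih (b+2)]
    congr 1
    ring

lemma main_dvd (hZ : Z E * (eps (2*(a:ℚ)) + 1) = C (2:ℚ)) (v : ℕ) (hv : (2:ℤ)^v ∣ a)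
    (mm kk b : ℕ) (hm : 1 ≤ mm) (hk : 1 ≤ kk) (r : ℕ) (hr : 9 ≤ r) :
    ∃ w : ℤ, (((2^(mm-1)*kk : ℕ).choose r : ℚ)) * (-1)^r * (dseq E r b : ℚ)
      = 2^(mm+13+9*v) * (w:ℚ) := by
  set Nn : ℕ := 2^(mm-1)*kk with hNn
  have hN1 : 1 ≤ Nn := by
    have : 0 < 2^(mm-1) := Nat.pow_pos (by norm_num)
    exact Nat.one_le_iff_ne_zero.mpr (by positivity)
  obtain ⟨c₁, hc⟩ := choose_dvd Nn r (mm-1) ⟨kk, rfl⟩ hN1 (by omega)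
  set ρ := padicValNat 2 r with hρ
  have hIH : ∀ s n, ∃ w:ℤ, ((n.factorial : ℕ):ℚ) * coeff n (G E s) = (w:ℚ) :=
    fun s n => IntH_G E s n
  choose gW hgW using hIH
  have hdseq : (dseq E r b : ℚ) = ∑ s ∈ range (2*r+2), cc a r s * (gW s b : ℚ) := by
    rw [dseq_coeff E r b, PiterF a E hZ r, map_sum, Finset.mul_sum]
    apply Finset.sum_congr rfl
    intro s _
    rw [coeff_C_mul, ← hgW s b]
    ring
  have hterm : ∀ s, ∃ w:ℤ, s < 2*r+2 →
      ((Nn.choose r : ℚ)) * (-1)^r * (cc a r s * (gW s b:ℚ)) = 2^(mm+13+9*v) * (w:ℚ) := by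
    intro s
    by_cases hs : s < 2*r+2
    · obtain ⟨g, hg⟩ := gam_dvd a r s
      obtain ⟨a₁, ha1⟩ := hv
      set pvf := padicValNat 2 (Nat.factorial (s-1)) with hpvf
      set e := ((mm-1) - ρ) + 1 + 2*r + v*r + pvf with he
      have hse : s + (mm+13+9*v) ≤ e := by
        have hka := ka r hr (s-1) (by omega)
        have hds := digitsum_le_self (s-1)
        have hpv := pv_fact_eq (s-1)
        have h9v : 9*v ≤ v*r := by rw [Nat.mul_comm v r]; exact Nat.mul_le_mul_right v hr
        omega
      refine ⟨(c₁:ℤ) * (-1)^r * a₁^r * g * gW s b * 2^(e - s - (mm+13+9*v)), fun _ => ?_⟩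
      have hcQ : ((Nn.choose r : ℚ)) = 2^((mm-1)-ρ) * (c₁:ℚ) := by exact_mod_cast hc
      have hgQ : ((gam a r s : ℚ)) = 2^(2*r) * (a:ℚ)^r * 2^pvf * (g:ℚ) := by exact_mod_cast hg
      have haQ : (a:ℚ) = 2^v * (a₁:ℚ) := by exact_mod_cast ha1
      rw [cc, hcQ, hgQ, haQ]
      have h2s : (2:ℚ)^s ≠ 0 := by positivity
      have hcombine : (2:ℚ)^((mm-1)-ρ) * 2^1 * 2^(2*r) * ((2:ℚ)^v)^r * 2^pvf
          = 2^(mm+13+9*v) * 2^(e - s - (mm+13+9*v)) * 2^s := by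
        simp only [← pow_mul, ← pow_add]
        congr 1
        omega
      push_cast
      field_simp
      linear_combination ((c₁:ℚ) * (a₁:ℚ)^r * (g:ℚ) * (gW s b : ℚ)) * hcombine
    · exact ⟨0, fun h => absurd h hs⟩
  choose ws hws using hterm
  refine ⟨∑ s ∈ range (2*r+2), ws s, ?_⟩
  have hexp : ((Nn.choose r:ℚ)) * (-1)^r * (dseq E r b:ℚ)
      = ∑ s ∈ range (2*r+2), ((Nn.choose r:ℚ) * (-1)^r * (cc a r s * (gW s b:ℚ))) := by
    rw [hdseq, Finset.mul_sum]
  rw [hexp, Finset.sum_congr rfl (fun s hs => hws s (mem_range.mp hs)), ← Finset.mul_sum]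
  congr 1
  push_cast
  rfl

end Stmt8

open Stmt8
theorem stmt_8' (a : ℤ) (ha : a ≠ 0)
    (E : ℕ → ℤ)
    (hE : ∀ n : ℕ, ∑ i ∈ Finset.range (n / 2 + 1),
      (n.choose (2 * i) : ℤ) * a ^ (2 * i) * E (n - 2 * i) = (1 - a) ^ n)
    (k m : ℕ) (hk : 0 < k) (hm : 0 < m) (b : ℕ)
    (A : ℕ → ℚ)
    (hA : ∀ r : ℕ, A r = (∑ i ∈ Finset.range (r + 1),
      (r.choose i : ℚ) * (-1) ^ i * (E (2 * i + b) : ℚ)) / 2 ^ r) :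
    ¬ (2:ℕ) ∣ ((((E (2 ^ m * k + b) : ℚ) - (E b : ℚ)) -
        2 ^ (m - 1) * k * ∑ r ∈ Finset.Icc 1 8,
          ((2 ^ (m - 1) * k - 1).choose (r - 1) : ℚ) * ((-2) ^ r / r) * A r) /
        2 ^ (m + 13 + 9 * padicValInt 2 a)).den := by
  classical
  have hF1 := FcoshEq a E hE
  have hF2 := FU a E hF1
  have hZ := ZU a E hF2
  set v : ℕ := padicValInt 2 a with hvdef
  have hv : (2:ℤ)^v ∣ a := by
    have h1 : (2:ℕ)^(padicValNat 2 a.natAbs) ∣ a.natAbs := pow_padicValNat_dvd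
    have h2 : ((2:ℤ))^(padicValNat 2 a.natAbs) ∣ (a.natAbs : ℤ) := by exact_mod_cast h1
    have h3 : ((a.natAbs : ℤ)) ∣ a := Int.natAbs_dvd.mpr dvd_rfl
    exact dvd_trans h2 h3
  set M : ℕ := m + 13 + 9 * v with hM
  set Nn : ℕ := 2^(m-1)*k with hNdef
  have hN1 : 1 ≤ Nn := by
    have h1 : 0 < 2^(m-1) := Nat.pow_pos (by norm_num)
    have := Nat.mul_pos h1 hk
    omega
  have hidx : 2^m*k + b = 2*Nn + b := by
    have h1 : (2:ℕ)^m = 2*2^(m-1) := by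
      conv_lhs => rw [show m = (m-1)+1 by omega]
      rw [pow_succ]
      ring
    rw [hNdef, h1]
    ring
  set TT : ℕ → ℚ := fun r => (-1)^r * (Nn.choose r : ℚ) * (dseq E r b : ℚ) with hTT
  have hmainQ : (E (2*Nn + b) : ℚ) = ∑ r ∈ range (Nn+1), TT r := by
    have hmain := euler_expand E Nn b
    rw [hTT]
    push_cast [hmain]
    rfl
  have hNQ : ((2:ℚ))^(m-1) * (k:ℚ) = (Nn:ℚ) := by
    rw [hNdef]
    push_cast
    ring
  have hterm8 : ∀ r ∈ Finset.Icc 1 8,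
      ((2:ℚ))^(m-1) * (k:ℚ) * (((Nn-1).choose (r-1) : ℚ) * ((-2)^r/(r:ℚ)) * A r) = TT r := by
    intro r hrr
    simp only [Finset.mem_Icc] at hrr
    have hr1 : 1 ≤ r := hrr.1
    have hAr : A r = (dseq E r b : ℚ)/2^r := by
      rw [hA r]
      congr 1
      rw [dseq]
      push_cast
      rfl
    have key : (Nn:ℚ) * ((Nn-1).choose (r-1) : ℚ) = (Nn.choose r : ℚ) * (r:ℚ) := by
      exact_mod_cast Nmulchoose Nn r hN1 hr1
    rw [hNQ, hAr, hTT]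
    have hrne : (r:ℚ) ≠ 0 := by positivity
    have h2r : (2:ℚ)^r ≠ 0 := by positivity
    have hneg2 : ((-2):ℚ)^r = (-1)^r * 2^r := by
      rw [show (-2:ℚ) = -1 * 2 by norm_num, mul_pow]
    rw [hneg2]
    field_simp
    linear_combination (dseq E r b : ℚ) * key
  have hsplit0 : ∑ r ∈ range (Nn+1), TT r = TT 0 + ∑ r ∈ Finset.Ico 1 (Nn+1), TT r := by
    rw [Finset.range_eq_Ico, ← Finset.sum_Ico_consecutive _ (by omega : 0 ≤ 1) (by omega : 1 ≤ Nn+1)]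
    congr 1
    rw [Finset.sum_Ico_eq_sum_range]
    simp
  have hTT0 : TT 0 = (E b : ℚ) := by
    rw [hTT]
    simp [dseq_zero]
  have hIcc : Finset.Icc 1 8 = Finset.Ico 1 9 := rfl
  have hX : (E (2^m*k + b) : ℚ) - (E b : ℚ)
      - 2^(m-1)*(k:ℚ) * ∑ r ∈ Finset.Icc 1 8,
          (((Nn-1).choose (r-1) : ℚ)) * ((-2)^r/(r:ℚ)) * A r
      = ∑ r ∈ Finset.Ico 9 (Nn+1), TT r := by
    rw [hidx, hmainQ, Finset.mul_sum, Finset.sum_congr rfl hterm8, hsplit0, hTT0, hIcc]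
    rcases le_or_gt 9 Nn with h9 | h9
    · rw [← Finset.sum_Ico_consecutive TT (by omega : 1 ≤ 9) (by omega : 9 ≤ Nn+1)]
      ring
    · have he1 : Finset.Ico 9 (Nn+1) = ∅ := Finset.Ico_eq_empty (by omega)
      have he2 : ∑ r ∈ Finset.Ico 1 9, TT r
          = ∑ r ∈ Finset.Ico 1 (Nn+1), TT r + ∑ r ∈ Finset.Ico (Nn+1) 9, TT r :=
        (Finset.sum_Ico_consecutive TT (by omega : 1 ≤ Nn+1) (by omega : Nn+1 ≤ 9)).symm
      have he3 : ∑ r ∈ Finset.Ico (Nn+1) 9, TT r = 0 := by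
        apply Finset.sum_eq_zero
        intro r hrr
        simp only [Finset.mem_Ico] at hrr
        rw [hTT]
        simp [Nat.choose_eq_zero_of_lt (by omega : Nn < r)]
      rw [he1, he2, he3]
      simp
  have hwspec : ∀ r, ∃ w : ℤ, 9 ≤ r → TT r = 2^M * (w:ℚ) := by
    intro r
    by_cases hr9 : 9 ≤ r
    · obtain ⟨w, hw⟩ := main_dvd a E hZ v hv m k b (by omega) (by omega) r hr9
      refine ⟨w, fun _ => ?_⟩
      rw [hTT, hM]
      rw [← hw]
      rw [hNdef]
      ring
    · exact ⟨0, fun h => absurd h hr9⟩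
  choose w hw using hwspec
  have hfinal : (∑ r ∈ Finset.Ico 9 (Nn+1), TT r) / 2^M
      = ((∑ r ∈ Finset.Ico 9 (Nn+1), w r : ℤ) : ℚ) := by
    rw [Finset.sum_congr rfl (fun r hrr => hw r (Finset.mem_Ico.mp hrr).1), ← Finset.mul_sum]
    rw [mul_comm, mul_div_assoc, div_self (by positivity : ((2:ℚ))^M ≠ 0), mul_one]
    push_cast
    rfl
  rw [hX, hfinal, Rat.den_intCast]
  norm_num

/-- Lemma 2.4: rational congruence for
`E_{2^m k + b}^{(a)} - E_b^{(a)}` modulo `2^(m+13+9·ord_2 a)`, where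
`A_r(a,b) = 2^{-r} ∑_{i=0}^r C(r,i) (-1)^i E_{2i+b}^{(a)}`. -/
theorem stmt_8 (a : ℤ) (ha : a ≠ 0)
    (E : ℕ → ℤ)
    (hE : ∀ n : ℕ, ∑ i ∈ Finset.range (n / 2 + 1),
      (n.choose (2 * i) : ℤ) * a ^ (2 * i) * E (n - 2 * i) = (1 - a) ^ n)
    (k m : ℕ) (hk : 0 < k) (hm : 0 < m) (b : ℕ)
    (A : ℕ → ℚ)
    (hA : ∀ r : ℕ, A r = (∑ i ∈ Finset.range (r + 1),
      (r.choose i : ℚ) * (-1) ^ i * (E (2 * i + b) : ℚ)) / 2 ^ r) :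
    PIntegral 2
      ((((E (2 ^ m * k + b) : ℚ) - (E b : ℚ)) -
        2 ^ (m - 1) * k * ∑ r ∈ Finset.Icc 1 8,
          ((2 ^ (m - 1) * k - 1).choose (r - 1) : ℚ) * ((-2) ^ r / r) * A r) /
        2 ^ (m + 13 + 9 * padicValInt 2 a)) :=
  stmt_8' a ha E hE k m hk hm b A hA
end
end

section
/- Let m ≥ 5 be an integer, let p ∈ {3, 5}, and let f : ℕ → ℚ be a p-regular function. Then for every positive integer k, f(p^{m-1} k) ≡ f(0) + p^{m-1} k ∑_{s=1}^{6} ((-1)^{s-1}/s) ∑_{r=0}^{s} C(s,r) (-1)^{s-r} f(r) (mod p^{m+5}), i.e., the p-adic valuation of the difference of the two sides is at least m + 5. -/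
/-- A function `f : ℕ → ℚ` taking `p`-integral values is `p`-regular if
`∑_{k=0}^n C(n,k) (-1)^k f(k) ≡ 0 (mod p^n)` for every `n ≥ 1`. -/
def PRegular (p : ℕ) (f : ℕ → ℚ) : Prop :=
  (∀ k : ℕ, PIntegral p (f k)) ∧
  ∀ n : ℕ, 1 ≤ n →
    PIntegral p ((∑ i ∈ Finset.range (n + 1), (n.choose i : ℚ) * (-1) ^ i * f i) / p ^ n)

open Finset

variable {p : ℕ} [hp : Fact p.Prime]

lemma norm_int_unit (w : ℤ) (hw : ¬ (p:ℤ) ∣ w) : ‖(w : ℚ_[p])‖ = 1 := by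
  refine le_antisymm (Padic.norm_int_le_one w) ?_
  by_contra h
  exact hw ((Padic.norm_intCast_lt_one_iff (k := w)).1 (not_le.1 h))

lemma pintegral_iff (q : ℚ) : PIntegral p q ↔ ‖(q : ℚ_[p])‖ ≤ 1 := by
  constructor
  · exact fun h => Padic.norm_rat_le_one h
  · intro h hd
    have hnum : ‖((q.num : ℤ) : ℚ_[p])‖ = 1 := by
      apply norm_int_unit
      intro hdvd
      have h1 : p ∣ q.num.natAbs := Int.natCast_dvd_natCast.1 (Int.dvd_natAbs.2 hdvd)
      have h2 : p ∣ 1 := q.reduced ▸ Nat.dvd_gcd h1 hd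
      exact hp.1.one_lt.ne' (Nat.eq_one_of_dvd_one h2)
    have hden : ‖((q.den : ℤ) : ℚ_[p])‖ < 1 := by
      rw [Padic.norm_intCast_lt_one_iff]
      exact_mod_cast hd
    have hq : (q.num : ℚ) = q * q.den := by
      rw [Rat.mul_den_eq_num]
    have hrel : ((q.num : ℤ) : ℚ_[p]) = (q : ℚ_[p]) * ((q.den : ℤ) : ℚ_[p]) := by
      exact_mod_cast congrArg (fun z : ℚ => (z : ℚ_[p])) hq
    have h3 : ‖((q.num : ℤ) : ℚ_[p])‖ = ‖(q:ℚ_[p])‖ * ‖((q.den : ℤ) : ℚ_[p])‖ := by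
      rw [hrel, norm_mul]
    have h4 := mul_le_mul_of_nonneg_right h (norm_nonneg (((q.den : ℤ) : ℚ_[p])))
    rw [one_mul] at h4
    linarith

section PadicAux

variable {p : ℕ} [hp : Fact p.Prime]

lemma norm_sum_le_padic {ι : Type*} (s : Finset ι) (g : ι → ℚ_[p]) {C : ℝ} (hC : 0 ≤ C)
    (h : ∀ i ∈ s, ‖g i‖ ≤ C) : ‖∑ i ∈ s, g i‖ ≤ C := by
  classical
  induction s using Finset.induction_on with
  | empty => simpa
  | @insert i s his ih =>
    rw [Finset.sum_insert his]
    refine le_trans (Padic.nonarchimedean _ _) (max_le (h i (mem_insert_self _ _)) ?_)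
    exact ih fun j hj => h j (mem_insert_of_mem hj)

end PadicAux

lemma binom_inv (f : ℕ → ℚ) (x : ℕ) :
    ∑ n ∈ range (x+1), (x.choose n : ℚ) *
      ∑ r ∈ range (n+1), (n.choose r : ℚ) * (-1)^(n-r) * f r = f x := by
  have h1 : ∀ n ∈ range (x+1), (x.choose n : ℚ) *
      (∑ r ∈ range (n+1), (n.choose r : ℚ) * (-1)^(n-r) * f r)
      = ∑ r ∈ range (x+1), (x.choose n : ℚ) * ((n.choose r : ℚ) * (-1)^(n-r) * f r) := by
    intro n hn
    rw [mem_range] at hn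
    rw [Finset.mul_sum]
    apply Finset.sum_subset
    · intro r hr
      rw [mem_range] at *
      omega
    · intro r _ hrn
      rw [mem_range, not_lt] at hrn
      rw [Nat.choose_eq_zero_of_lt (show n < r by omega)]
      simp
  rw [Finset.sum_congr rfl h1, Finset.sum_comm]
  have h2 : ∀ r ∈ range (x+1),
      (∑ n ∈ range (x+1), (x.choose n : ℚ) * ((n.choose r : ℚ) * (-1)^(n-r) * f r))
      = if r = x then f x else 0 := by
    intro r hr
    rw [mem_range] at hr
    have hrx : r ≤ x := by omega
    have hsub : (∑ n ∈ range (x+1), (x.choose n : ℚ) * ((n.choose r : ℚ) * (-1)^(n-r) * f r))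
        = ∑ n ∈ Ico r (x+1), (x.choose n : ℚ) * ((n.choose r : ℚ) * (-1)^(n-r) * f r) := by
      refine (Finset.sum_subset ?_ ?_).symm
      · intro n hn
        rw [mem_Ico] at hn
        exact mem_range.2 hn.2
      · intro n hn hn'
        rw [mem_range] at hn
        rw [mem_Ico, not_and_or, not_le] at hn'
        have : n < r := by omega
        rw [Nat.choose_eq_zero_of_lt (show n < r from this)]
        simp
    rw [hsub, Finset.sum_Ico_eq_sum_range]
    have hxr : x + 1 - r = (x - r) + 1 := by omega
    rw [hxr]
    have hterm : ∀ j ∈ range ((x-r)+1),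
        (x.choose (r+j) : ℚ) * (((r+j).choose r : ℚ) * (-1)^((r+j)-r) * f r)
        = ((x.choose r : ℚ) * f r) * ((-1)^j * ((x-r).choose j : ℚ)) := by
      intro j hj
      rw [mem_range] at hj
      have hjx : r + j ≤ x := by omega
      have hcc := Nat.choose_mul (n := x) (Nat.le_add_right r j)
      rw [Nat.add_sub_cancel_left] at hcc ⊢
      have hccQ : (x.choose (r+j) : ℚ) * ((r+j).choose r : ℚ) = (x.choose r : ℚ) * ((x-r).choose j : ℚ) := by
        exact_mod_cast congrArg (fun z : ℕ => (z : ℚ)) hcc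
      calc (x.choose (r+j) : ℚ) * (((r+j).choose r : ℚ) * (-1)^j * f r)
          = ((x.choose (r+j) : ℚ) * ((r+j).choose r : ℚ)) * ((-1)^j * f r) := by ring
        _ = ((x.choose r : ℚ) * ((x-r).choose j : ℚ)) * ((-1)^j * f r) := by rw [hccQ]
        _ = ((x.choose r : ℚ) * f r) * ((-1)^j * ((x-r).choose j : ℚ)) := by ring
    rw [Finset.sum_congr rfl hterm, ← Finset.mul_sum]
    have halt : (∑ j ∈ range ((x-r)+1), ((-1:ℚ)^j * ((x-r).choose j : ℚ)))
        = if (x-r) = 0 then 1 else 0 := by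
      have := Int.alternating_sum_range_choose (n := x - r)
      have h := congrArg (fun z : ℤ => (z : ℚ)) this
      push_cast at h
      rcases eq_or_ne (x - r) 0 with h0 | h0
      · rw [if_pos h0] at h ⊢; exact_mod_cast h
      · rw [if_neg h0] at h ⊢; exact_mod_cast h
    rw [halt]
    rcases eq_or_ne r x with rfl | hne
    · simp
    · rw [if_neg (by omega), if_neg hne, mul_zero]
  rw [Finset.sum_congr rfl h2, Finset.sum_ite_eq' (range (x+1)) x (fun _ => f x)]
  rw [if_pos (self_mem_range_succ x)]

section IntAux
open Nat

lemma aux1 (x : ℕ) : ∀ j : ℕ, j + 1 ≤ x →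
    ((j+1)! : ℤ) * (x.choose (j+1)) = (x:ℤ) * ∏ i ∈ range j, ((x:ℤ) - 1 - i) := by
  intro j
  induction j with
  | zero => simp [Nat.choose_one_right]
  | succ j ih =>
    intro h
    have hj : j + 1 ≤ x := by omega
    have key := Nat.choose_succ_right_eq x (j+1)
    have keyZ : (x.choose (j+2) : ℤ) * (j+2) = (x.choose (j+1) : ℤ) * ((x:ℤ) - (j+1)) := by
      have := congrArg (fun z : ℕ => (z : ℤ)) key
      push_cast [Nat.cast_sub (show j + 1 ≤ x by omega)] at this
      exact_mod_cast this
    have ihh := ih hj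
    rw [prod_range_succ]
    calc ((j+2)! : ℤ) * (x.choose (j+2))
        = ((j+1)! : ℤ) * ((x.choose (j+2) : ℤ) * (j+2)) := by
          push_cast [Nat.factorial_succ (j+1)]; ring
      _ = ((j+1)! : ℤ) * ((x.choose (j+1) : ℤ) * ((x:ℤ) - (j+1))) := by rw [keyZ]
      _ = (((j+1)! : ℤ) * (x.choose (j+1))) * ((x:ℤ) - (j+1)) := by ring
      _ = ((x:ℤ) * ∏ i ∈ range j, ((x:ℤ) - 1 - i)) * ((x:ℤ) - (j+1)) := by rw [ihh]
      _ = (x:ℤ) * ((∏ i ∈ range j, ((x:ℤ) - 1 - i)) * ((x:ℤ) - 1 - j)) := by push_cast; ring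

lemma aux2 (x : ℕ) : ∀ j : ℕ, (x:ℤ) ∣ (∏ i ∈ range j, ((x:ℤ) - 1 - i)) - (-1)^j * j ! := by
  intro j
  induction j with
  | zero => simp
  | succ j ih =>
    obtain ⟨t, ht⟩ := ih
    refine ⟨t * ((x:ℤ) - 1 - j) + (-1)^j * j !, ?_⟩
    have hPj : (∏ i ∈ range j, ((x:ℤ) - 1 - i)) = (-1)^j * j ! + (x:ℤ) * t := by linarith
    rw [prod_range_succ, hPj]
    push_cast [Nat.factorial_succ]
    ring

lemma key_dvd (x n : ℕ) (hn : 1 ≤ n) (hnx : n ≤ x) :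
    ((x:ℤ))^2 ∣ (n ! : ℤ) * (x.choose n) - (-1)^(n-1) * ((n-1)! : ℤ) * x := by
  obtain ⟨j, rfl⟩ : ∃ j, n = j + 1 := ⟨n-1, by omega⟩
  obtain ⟨t, ht⟩ := aux2 x j
  rw [aux1 x j hnx]
  simp only [Nat.add_sub_cancel]
  exact ⟨t, by linear_combination (x:ℤ) * ht⟩

lemma three_pow : ∀ v : ℕ, 2 ≤ v → v + 6 ≤ 3 ^ v := by
  intro v hv
  induction v with
  | zero => omega
  | succ v ih =>
    rcases Nat.lt_or_ge v 2 with h | h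
    · interval_cases v <;> simp_all <;> omega
    · have h1 := ih h
      have h2 : 3 ^ (v+1) = 3 * 3 ^ v := by rw [pow_succ]; ring
      omega

end IntAux

lemma decomp (f : ℕ → ℚ) (x : ℕ) (hx : 6 ≤ x) :
    f x - (f 0 + (x:ℚ) * ∑ s ∈ Finset.Icc (1:ℕ) 6, ((-1)^(s-1)/(s:ℚ)) *
        ∑ r ∈ Finset.range (s+1), (s.choose r : ℚ) * (-1)^(s-r) * f r)
    = ∑ n ∈ Finset.Ico 1 (x+1),
        ((x.choose n : ℚ) - (if n ≤ 6 then (x:ℚ) * (-1)^(n-1) / (n:ℚ) else 0)) *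
        ∑ r ∈ Finset.range (n+1), (n.choose r : ℚ) * (-1)^(n-r) * f r := by
  have hfx := binom_inv f x
  have hpeel : ∀ g : ℕ → ℚ, ∑ n ∈ Finset.Ico 1 (x+1), g n = ∑ i ∈ Finset.range x, g (i+1) := by
    intro g
    rw [Finset.sum_Ico_eq_sum_range]
    simp only [Nat.add_sub_cancel]
    exact Finset.sum_congr rfl (fun i _ => by rw [Nat.add_comm])
  have hXT : (x:ℚ) * ∑ s ∈ Finset.Icc (1:ℕ) 6, ((-1)^(s-1)/(s:ℚ)) *
        ∑ r ∈ Finset.range (s+1), (s.choose r : ℚ) * (-1)^(s-r) * f r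
      = ∑ n ∈ Finset.Ico 1 (x+1), (if n ≤ 6 then (x:ℚ) * (-1)^(n-1) / (n:ℚ) else 0) *
        ∑ r ∈ Finset.range (n+1), (n.choose r : ℚ) * (-1)^(n-r) * f r := by
    rw [Finset.mul_sum]
    have hss : Finset.Icc (1:ℕ) 6 ⊆ Finset.Ico 1 (x+1) := by
      intro i hi
      rw [mem_Icc] at hi
      rw [mem_Ico]
      omega
    rw [← Finset.sum_subset hss ?_]
    · apply Finset.sum_congr rfl
      intro s hs
      rw [mem_Icc] at hs
      rw [if_pos hs.2]
      ring
    · intro i hi hni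
      rw [mem_Icc] at hni
      rw [mem_Ico] at hi
      rw [if_neg (by omega), zero_mul]
  rw [← hfx, Finset.sum_range_succ']
  have hA0 : (x.choose 0 : ℚ) * ∑ r ∈ Finset.range (0+1), ((0:ℕ).choose r : ℚ) * (-1)^(0-r) * f r = f 0 := by
    simp
  rw [hA0, hXT, hpeel, hpeel]
  have hsp : (∑ i ∈ Finset.range x,
      ((x.choose (i+1) : ℚ) - (if i+1 ≤ 6 then (x:ℚ) * (-1)^((i+1)-1) / ((i+1:ℕ):ℚ) else 0)) *
        ∑ r ∈ Finset.range ((i+1)+1), ((i+1).choose r : ℚ) * (-1)^((i+1)-r) * f r)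
      = (∑ i ∈ Finset.range x, (x.choose (i+1) : ℚ) *
          ∑ r ∈ Finset.range ((i+1)+1), ((i+1).choose r : ℚ) * (-1)^((i+1)-r) * f r)
        - ∑ i ∈ Finset.range x, (if i+1 ≤ 6 then (x:ℚ) * (-1)^((i+1)-1) / ((i+1:ℕ):ℚ) else 0) *
          ∑ r ∈ Finset.range ((i+1)+1), ((i+1).choose r : ℚ) * (-1)^((i+1)-r) * f r := by
    rw [← Finset.sum_sub_distrib]
    exact Finset.sum_congr rfl (fun i _ => by ring)
  rw [hsp]
  ring


/-- Lemma 3.2: for a `p`-regular function `f` with `p ∈ {3,5}` and `m ≥ 5`,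
`f(p^{m-1}k) ≡ f(0) + p^{m-1}k ∑_{s=1}^6 ((-1)^{s-1}/s) ∑_{r=0}^s C(s,r)(-1)^{s-r} f(r)
(mod p^{m+5})`. -/
theorem stmt_9 (m : ℕ) (hm : 5 ≤ m) (p : ℕ) (hp : p = 3 ∨ p = 5)
    (f : ℕ → ℚ) (hf : PRegular p f) (k : ℕ) (hk : 0 < k) :
    PIntegral p
      ((f (p ^ (m - 1) * k) -
        (f 0 + p ^ (m - 1) * k * ∑ s ∈ Finset.Icc (1 : ℕ) 6, ((-1) ^ (s - 1) / (s : ℚ)) *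
          ∑ r ∈ Finset.range (s + 1), (s.choose r : ℚ) * (-1) ^ (s - r) * f r)) /
        p ^ (m + 5)) := by

  have pp : p.Prime := by rcases hp with rfl | rfl <;> norm_num
  haveI F : Fact p.Prime := ⟨pp⟩
  have hp3 : 3 ≤ p := by rcases hp with rfl | rfl <;> norm_num
  have hpR3 : (3:ℝ) ≤ (p:ℝ) := by exact_mod_cast hp3
  have hpR1 : (1:ℝ) ≤ (p:ℝ) := by linarith
  have hpR0 : (0:ℝ) < (p:ℝ) := by linarith
  have hnat1 : ∀ j : ℕ, ‖(j : ℚ_[p])‖ ≤ 1 := by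
    intro j
    exact_mod_cast Padic.norm_int_le_one (j : ℤ)
  set x := p ^ (m - 1) * k with hxdef
  have hx7 : 7 ≤ x := by
    have h1 : 3^4 ≤ p^(m-1) := by
      calc 3^4 ≤ 3^(m-1) := Nat.pow_le_pow_right (by norm_num) (by omega)
      _ ≤ p^(m-1) := Nat.pow_le_pow_left hp3 _
    calc 7 ≤ 3^4 := by norm_num
    _ ≤ p^(m-1) := h1
    _ ≤ p^(m-1)*k := Nat.le_mul_of_pos_right _ hk
  have hxQ : ((p:ℚ))^(m-1) * (k:ℚ) = ((x:ℕ):ℚ) := by rw [hxdef]; push_cast; ring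
  -- norm of x
  have hX : ‖((x:ℕ) : ℚ_[p])‖ ≤ (p:ℝ)^(-((m:ℤ)-1)) := by
    have hxc : ((x:ℕ) : ℚ_[p]) = (p:ℚ_[p])^(m-1) * ((k:ℕ) : ℚ_[p]) := by
      rw [hxdef]; push_cast; ring
    rw [hxc, norm_mul, Padic.norm_p_pow]
    have hexp : (-((m-1:ℕ):ℤ)) = -((m:ℤ)-1) := by omega
    calc (p:ℝ)^(-((m-1:ℕ):ℤ)) * ‖((k:ℕ):ℚ_[p])‖ ≤ (p:ℝ)^(-((m-1:ℕ):ℤ)) * 1 :=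
          mul_le_mul_of_nonneg_left (hnat1 k) (by positivity)
      _ = (p:ℝ)^(-((m:ℤ)-1)) := by rw [mul_one, hexp]
  -- norm of the difference-transform values
  have hA : ∀ n : ℕ, 1 ≤ n →
      ‖((∑ r ∈ Finset.range (n+1), (n.choose r : ℚ) * (-1)^(n-r) * f r : ℚ) : ℚ_[p])‖
        ≤ (p:ℝ)^(-(n:ℤ)) := by
    intro n hn
    have h2 := (pintegral_iff _).1 (hf.2 n hn)
    rw [Rat.cast_div, norm_div] at h2
    have hpow : ‖(((p:ℚ)^n : ℚ) : ℚ_[p])‖ = (p:ℝ)^(-(n:ℤ)) := by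
      push_cast
      exact Padic.norm_p_pow n
    rw [div_le_one (by rw [hpow]; positivity), hpow] at h2
    have hsign : (∑ r ∈ Finset.range (n+1), (n.choose r : ℚ) * (-1)^(n-r) * f r)
        = (-1)^n * ∑ i ∈ Finset.range (n+1), (n.choose i : ℚ) * (-1)^i * f i := by
      rw [Finset.mul_sum]
      apply Finset.sum_congr rfl
      intro r hr
      rw [Finset.mem_range] at hr
      have hkey : ((-1:ℚ))^(n-r) * (-1)^r = (-1)^n := by
        rw [← pow_add]
        congr 1
        omega
      have hsq : ((-1:ℚ))^r * (-1)^r = 1 := by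
        rw [← pow_add, ← two_mul, pow_mul]
        norm_num
      calc (n.choose r : ℚ) * (-1)^(n-r) * f r
          = (n.choose r : ℚ) * ((-1)^(n-r) * ((-1)^r * (-1)^r)) * f r := by rw [hsq]; ring
        _ = (n.choose r : ℚ) * (((-1)^(n-r) * (-1)^r) * (-1)^r) * f r := by ring
        _ = (n.choose r : ℚ) * ((-1)^n * (-1)^r) * f r := by rw [hkey]
        _ = (-1)^n * ((n.choose r : ℚ) * (-1)^r * f r) := by ring
    rw [hsign, Rat.cast_mul, norm_mul]
    have hone : ‖((((-1:ℚ))^n : ℚ) : ℚ_[p])‖ = 1 := by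
      push_cast
      simp
    rw [hone, one_mul]
    exact h2
  rw [pintegral_iff, hxQ, decomp f x (by omega), Rat.cast_div, norm_div]
  have hexp5 : (-((m+5:ℕ):ℤ)) = -((m:ℤ)+5) := by omega
  have hden : ‖(((p:ℚ)^(m+5) : ℚ) : ℚ_[p])‖ = (p:ℝ)^(-((m:ℤ)+5)) := by
    push_cast
    rw [Padic.norm_p_pow, hexp5]
  rw [div_le_one (by rw [hden]; positivity), hden, Rat.cast_sum]
  apply norm_sum_le_padic _ _ (by positivity)
  intro n hn
  rw [Finset.mem_Ico] at hn
  rcases Nat.lt_or_ge n 7 with hn7 | hn7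
  · rcases Nat.eq_or_lt_of_le hn.1 with h1 | h1
    · -- n = 1 : the term is zero
      rw [← h1]
      have hz : ((x.choose 1 : ℚ) - (if 1 ≤ 6 then (x:ℚ) * (-1)^(1-1) / ((1:ℕ):ℚ) else 0)) = 0 := by
        rw [if_pos (by norm_num)]
        simp [Nat.choose_one_right]
      rw [Rat.cast_mul, hz]
      simp
      positivity
    · -- 2 ≤ n ≤ 6 : main estimate
      have hn2 : 2 ≤ n := h1
      have hn6 : n ≤ 6 := by omega
      have hnx : n ≤ x := by omega
      obtain ⟨t, ht⟩ := key_dvd x n (by omega) hnx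
      obtain ⟨v, w, hfac, hw, hvn⟩ : ∃ (v : ℕ) (w : ℤ), (n.factorial : ℤ) = (p:ℤ)^v * w ∧
          ¬ (p:ℤ) ∣ w ∧ v + 2 ≤ n := by
        interval_cases n <;> rcases hp with rfl | rfl
        · exact ⟨0, 2, by norm_num [Nat.factorial], by decide, by norm_num⟩
        · exact ⟨0, 2, by norm_num [Nat.factorial], by decide, by norm_num⟩
        · exact ⟨1, 2, by norm_num [Nat.factorial], by decide, by norm_num⟩
        · exact ⟨0, 6, by norm_num [Nat.factorial], by decide, by norm_num⟩
        · exact ⟨1, 8, by norm_num [Nat.factorial], by decide, by norm_num⟩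
        · exact ⟨0, 24, by norm_num [Nat.factorial], by decide, by norm_num⟩
        · exact ⟨1, 40, by norm_num [Nat.factorial], by decide, by norm_num⟩
        · exact ⟨1, 24, by norm_num [Nat.factorial], by decide, by norm_num⟩
        · exact ⟨2, 80, by norm_num [Nat.factorial], by decide, by norm_num⟩
        · exact ⟨1, 144, by norm_num [Nat.factorial], by decide, by norm_num⟩
      have htQ : ((n.factorial : ℕ) : ℚ_[p]) * (x.choose n : ℚ_[p])
          - (-1)^(n-1) * (((n-1).factorial : ℕ) : ℚ_[p]) * ((x:ℕ):ℚ_[p])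
          = (((x:ℕ):ℚ_[p]))^2 * (t:ℚ_[p]) := by
        exact_mod_cast congrArg (fun z : ℤ => (z : ℚ_[p])) ht
      have hnne : ((n:ℚ_[p])) ≠ 0 := Nat.cast_ne_zero.2 (by omega)
      have hfacne : ((n.factorial : ℕ) : ℚ_[p]) ≠ 0 := Nat.cast_ne_zero.2 n.factorial_ne_zero
      have hmulfac : ((n:ℚ_[p])) * (((n-1).factorial : ℕ) : ℚ_[p]) = ((n.factorial : ℕ) : ℚ_[p]) := by
        exact_mod_cast congrArg (fun z : ℕ => (z : ℚ_[p])) (Nat.mul_factorial_pred (show n ≠ 0 by omega))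
      have hc : (x.choose n : ℚ_[p]) - ((x:ℕ):ℚ_[p]) * (-1)^(n-1) / (n:ℚ_[p])
          = ((x:ℕ):ℚ_[p])^2 * (t:ℚ_[p]) / ((n.factorial : ℕ) : ℚ_[p]) := by
        rw [eq_div_iff hfacne, ← htQ, ← hmulfac]
        field_simp
      have hnfacnorm : ‖((n.factorial : ℕ) : ℚ_[p])‖ = (p:ℝ)^(-(v:ℤ)) := by
        have hcast : ((n.factorial : ℕ) : ℚ_[p]) = (p:ℚ_[p])^v * ((w : ℤ) : ℚ_[p]) := by
          exact_mod_cast congrArg (fun z : ℤ => (z : ℚ_[p])) hfac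
        rw [hcast, norm_mul, Padic.norm_p_pow, norm_int_unit w hw, mul_one]
      rw [if_pos hn6, Rat.cast_mul, norm_mul]
      have hcast2 : (((x.choose n : ℚ) - (x:ℚ) * (-1)^(n-1) / (n:ℚ) : ℚ) : ℚ_[p])
          = (x.choose n : ℚ_[p]) - ((x:ℕ):ℚ_[p]) * (-1)^(n-1) / (n:ℚ_[p]) := by
        push_cast
        ring
      rw [hcast2, hc, norm_div, hnfacnorm, norm_mul, norm_pow]
      have hcb : ‖((x:ℕ):ℚ_[p])‖^2 * ‖(t:ℚ_[p])‖ ≤ ((p:ℝ)^(-((m:ℤ)-1)))^2 := by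
        calc ‖((x:ℕ):ℚ_[p])‖^2 * ‖(t:ℚ_[p])‖ ≤ ‖((x:ℕ):ℚ_[p])‖^2 * 1 :=
              mul_le_mul_of_nonneg_left (Padic.norm_int_le_one t) (by positivity)
          _ = ‖((x:ℕ):ℚ_[p])‖^2 := by rw [mul_one]
          _ ≤ ((p:ℝ)^(-((m:ℤ)-1)))^2 := by
              apply pow_le_pow_left₀ (norm_nonneg _) hX
      have hne0 : (p:ℝ) ≠ 0 := ne_of_gt hpR0
      calc ‖((x:ℕ):ℚ_[p])‖^2 * ‖(t:ℚ_[p])‖ / (p:ℝ)^(-(v:ℤ))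
            * ‖((∑ r ∈ Finset.range (n+1), (n.choose r : ℚ) * (-1)^(n-r) * f r : ℚ) : ℚ_[p])‖
          ≤ (((p:ℝ)^(-((m:ℤ)-1)))^2 / (p:ℝ)^(-(v:ℤ))) * (p:ℝ)^(-(n:ℤ)) := by
            apply mul_le_mul _ (hA n (by omega)) (norm_nonneg _) (by positivity)
            exact (div_le_div_iff_of_pos_right (by positivity)).2 hcb
        _ = (p:ℝ)^(-((m:ℤ)-1) + -((m:ℤ)-1) + (v:ℤ) + -(n:ℤ)) := by
            rw [sq, div_eq_mul_inv, ← zpow_neg, neg_neg, ← zpow_add₀ hne0, ← zpow_add₀ hne0,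
              ← zpow_add₀ hne0]
        _ ≤ (p:ℝ)^(-((m:ℤ)+5)) := by
            apply zpow_le_zpow_right₀ hpR1
            omega
  · -- tail : 7 ≤ n
    rw [if_neg (by omega), sub_zero, Rat.cast_mul, norm_mul, Rat.cast_natCast]
    have hid := Nat.add_one_mul_choose_eq (x-1) (n-1)
    have hx1 : x - 1 + 1 = x := by omega
    have hn1 : n - 1 + 1 = n := by omega
    rw [hx1, hn1] at hid
    have hidQ : ((x:ℕ):ℚ_[p]) * (((x-1).choose (n-1) : ℕ) : ℚ_[p])
        = (x.choose n : ℚ_[p]) * (n : ℚ_[p]) := by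
      exact_mod_cast congrArg (fun z : ℕ => (z : ℚ_[p])) hid
    have hnne : ((n:ℚ_[p])) ≠ 0 := Nat.cast_ne_zero.2 (by omega)
    have hchoose_eq : (x.choose n : ℚ_[p])
        = ((x:ℕ):ℚ_[p]) * (((x-1).choose (n-1) : ℕ) : ℚ_[p]) / (n:ℚ_[p]) := by
      rw [eq_div_iff hnne]
      linear_combination -hidQ
    set v := n.factorization p with hv
    have hw : ¬ p ∣ (n / p^v) := Nat.not_dvd_ordCompl pp (by omega)
    have hord : p ^ v * (n / p ^ v) = n := Nat.ordProj_mul_ordCompl_eq_self n p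
    have hnnorm : ‖(n:ℚ_[p])‖ = (p:ℝ)^(-(v:ℤ)) := by
      conv_lhs => rw [← hord]
      push_cast
      rw [norm_mul, Padic.norm_p_pow]
      have hu : ‖((n / p^v : ℕ) : ℚ_[p])‖ = 1 := by
        have := norm_int_unit (p := p) ((n / p^v : ℕ) : ℤ)
          (fun hd => hw (Int.natCast_dvd_natCast.1 hd))
        exact_mod_cast this
      rw [hu, mul_one]
    have hvb : v + 6 ≤ n := by
      have hpv : p ^ v ≤ n := Nat.ordProj_le p (by omega)
      rcases Nat.lt_or_ge v 2 with h | h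
      · omega
      · have h1 := three_pow v h
        have h2 : 3^v ≤ p^v := Nat.pow_le_pow_left hp3 v
        omega
    have hne0 : (p:ℝ) ≠ 0 := ne_of_gt hpR0
    rw [hchoose_eq, norm_div, norm_mul, hnnorm]
    calc ‖((x:ℕ):ℚ_[p])‖ * ‖(((x-1).choose (n-1) : ℕ) : ℚ_[p])‖ / (p:ℝ)^(-(v:ℤ))
          * ‖((∑ r ∈ Finset.range (n+1), (n.choose r : ℚ) * (-1)^(n-r) * f r : ℚ) : ℚ_[p])‖
        ≤ (((p:ℝ)^(-((m:ℤ)-1)) * 1) / (p:ℝ)^(-(v:ℤ))) * (p:ℝ)^(-(n:ℤ)) := by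
          apply mul_le_mul _ (hA n (by omega)) (norm_nonneg _) (by positivity)
          exact (div_le_div_iff_of_pos_right (by positivity)).2
            (mul_le_mul hX (hnat1 _) (norm_nonneg _) (by positivity))
      _ = (p:ℝ)^(-((m:ℤ)-1) + (v:ℤ) + -(n:ℤ)) := by
          rw [mul_one, div_eq_mul_inv, ← zpow_neg, neg_neg, ← zpow_add₀ hne0, ← zpow_add₀ hne0]
      _ ≤ (p:ℝ)^(-((m:ℤ)+5)) := by
          apply zpow_le_zpow_right₀ hpR1
          omega
end
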